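/- arXiv:2311.18143 — 5 statements merged into one kernel-verified Lean document; each statement's English description precedes it below -/
import Mathlib

section
/- Let M be a real symmetric matrix indexed by a finite set X and let K ⊆ X be a nonempty subset. Then M exhibits pretty good fractional revival with respect to K if and only if the partition P_K = (Π_0, Π_1, …, Π_s) is non-degenerate, i.e., there exists (ρ_1,…,ρ_s) ∈ ℝ^s, not constant modulo 1, such that for every ε > 0 there is t > 0 with ‖t·θ_j − ρ_r‖ < ε for all 1 ≤ r ≤ s and all j ∈ Π_r (here ‖x‖ denotes the distance from x to the nearest integer). -/
open Matrix Set

/-- Distance from a real number to the nearest integer. -/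
noncomputable def znorm (x : ℝ) : ℝ := |x - round x|

/-- The `K × K` submatrix of `exp(i t M)` for a real matrix `M`. -/
noncomputable def subExpUnitary {X : Type*} [Fintype X] [DecidableEq X]
    (M : Matrix X X ℝ) (K : Set X) (t : ℝ) : Matrix K K ℂ :=
  (NormedSpace.exp ((Complex.I * (t : ℂ)) • M.map (Complex.ofReal))).submatrix
    (fun k : K => (k : X)) (fun k : K => (k : X))

/-- `M` exhibits pretty good fractional revival with respect to `K`: the closure of the
family of `K × K` submatrices of `exp(itM)`, `t ≥ 0`, contains a unitary matrix with at
least two distinct eigenvalues. -/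
noncomputable def PGFR {X : Type*} [Fintype X] [DecidableEq X]
    (M : Matrix X X ℝ) (K : Set X) [DecidablePred (· ∈ K)] : Prop :=
  ∃ H ∈ closure {A : Matrix K K ℂ | ∃ t : ℝ, 0 ≤ t ∧ A = subExpUnitary M K t},
    H ∈ Matrix.unitaryGroup K ℂ ∧
    ∃ μ₁ ∈ spectrum ℂ H, ∃ μ₂ ∈ spectrum ℂ H, μ₁ ≠ μ₂

namespace PGFRAux

open ComplexOrder in
lemma conjT_mul_self_zero {m n : Type*} [Fintype m] (A : Matrix m n ℂ) :
    Aᴴ * A = 0 ↔ A = 0 := Matrix.conjTranspose_mul_self_eq_zero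

lemma znorm_nonneg (x : ℝ) : 0 ≤ znorm x := abs_nonneg _

lemma znorm_le_abs (x : ℝ) : znorm x ≤ |x| := by
  simpa [znorm] using round_le x 0

lemma znorm_add_int (x : ℝ) (m : ℤ) : znorm (x + m) = znorm x := by
  simp only [znorm, round_add_intCast]
  push_cast
  ring_nf

lemma znorm_add_le (x y : ℝ) : znorm (x + y) ≤ znorm x + |y| := by
  calc |x + y - round (x + y)| ≤ |x + y - round x| := round_le _ _
    _ ≤ |x - round x| + |y| := by
        have : x + y - round x = (x - round x) + y := by ring
        rw [this]; exact abs_add_le _ _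

section Sub

variable {X : Type*} [Fintype X] [DecidableEq X] (K : Set X) [DecidablePred (· ∈ K)]

/-- diagonal indicator matrix of `K` over `ℂ` -/
noncomputable def Dc : Matrix X X ℂ := Matrix.diagonal (fun x => if x ∈ K then 1 else 0)

/-- the `K×K` submatrix -/
def sub (A : Matrix X X ℂ) : Matrix K K ℂ :=
  A.submatrix (fun k : K => (k : X)) (fun k : K => (k : X))

lemma sum_subtype_K (f : X → ℂ) : ∑ k : K, f (k : X) = ∑ x : X, (if x ∈ K then f x else 0) := by
  rw [← Finset.sum_filter]
  exact (Finset.sum_subtype _ (by simp) f).symm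

lemma sub_smul (c : ℂ) (A : Matrix X X ℂ) : sub K (c • A) = c • sub K A := rfl

lemma sub_sum {ι : Type*} (s : Finset ι) (f : ι → Matrix X X ℂ) :
    sub K (∑ i ∈ s, f i) = ∑ i ∈ s, sub K (f i) := by
  unfold sub; ext i j; simp [Matrix.submatrix_apply, Matrix.sum_apply]

lemma sub_one : sub K 1 = 1 := by
  ext i j
  simp [sub, Matrix.one_apply, Subtype.ext_iff]

lemma sub_Dc : sub K (Dc K) = 1 := by
  ext i j
  rcases i with ⟨i, hi⟩; rcases j with ⟨j, hj⟩
  simp [sub, Dc, Matrix.diagonal_apply, Matrix.one_apply, Subtype.ext_iff, hi, hj]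

lemma Dc_conjTranspose : (Dc K)ᴴ = Dc K := by
  ext i j
  simp [Dc, Matrix.diagonal_apply, Matrix.conjTranspose_apply]
  split_ifs with h h' h' <;> simp_all [eq_comm]

lemma Dc_idem : Dc K * Dc K = Dc K := by
  rw [Dc, Matrix.diagonal_mul_diagonal]
  refine congrArg Matrix.diagonal (funext fun x => ?_)
  by_cases h : x ∈ K <;> simp [h]

lemma sub_conjTranspose (A : Matrix X X ℂ) : sub K Aᴴ = (sub K A)ᴴ := rfl

lemma sub_mul (A B : Matrix X X ℂ) : sub K A * sub K B = sub K (A * Dc K * B) := by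
  ext i j
  have h1 : ∀ x, (A * Dc K) (i : X) x = A (i : X) x * (if x ∈ K then 1 else 0) := fun x => by
    simp [Dc, Matrix.mul_diagonal]
  calc (sub K A * sub K B) i j = ∑ k : K, A (i : X) (k : X) * B (k : X) (j : X) := by
        simp [sub, Matrix.mul_apply]
    _ = ∑ x : X, (if x ∈ K then A (i : X) x * B x (j : X) else 0) :=
        sum_subtype_K K (fun x => A (i : X) x * B x (j : X))
    _ = ∑ x : X, (A * Dc K) (i : X) x * B x (j : X) := by
        apply Finset.sum_congr rfl
        intro x _
        rw [h1 x]
        split_ifs <;> ring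
    _ = sub K (A * Dc K * B) i j := by
        simp [sub, Matrix.mul_apply]

lemma sub_eq_zero_iff (A : Matrix X X ℂ) : sub K A = 0 ↔ Dc K * A * Dc K = 0 := by
  constructor
  · intro h
    ext x y
    by_cases hx : x ∈ K <;> by_cases hy : y ∈ K
    · have := congrFun (congrFun h ⟨x, hx⟩) ⟨y, hy⟩
      simp only [sub, Matrix.submatrix_apply, Matrix.zero_apply] at this
      simp [Dc, Matrix.mul_diagonal, Matrix.diagonal_mul, hx, hy, this]
    all_goals simp [Dc, Matrix.mul_diagonal, Matrix.diagonal_mul, hx, hy]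
  · intro h
    ext ⟨x, hx⟩ ⟨y, hy⟩
    have := congrFun (congrFun h x) y
    simpa [Dc, Matrix.mul_diagonal, Matrix.diagonal_mul, hx, hy, sub] using this


lemma sub_sub' (A B : Matrix X X ℂ) : sub K (A - B) = sub K A - sub K B := rfl

lemma unitary_sub_commutes (U : Matrix X X ℂ) (h1 : U * Uᴴ = 1) (h2 : Uᴴ * U = 1)
    (hs1 : sub K U * (sub K U)ᴴ = 1) (hs2 : (sub K U)ᴴ * sub K U = 1) :
    Dc K * U = U * Dc K := by
  have hD := Dc_idem K
  have hDh := Dc_conjTranspose K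
  have key : ∀ (C : Matrix X X ℂ), C * Cᴴ = 0 → C = 0 := by
    intro C hC
    have h0 : (Cᴴ)ᴴ * Cᴴ = 0 := by rwa [Matrix.conjTranspose_conjTranspose]
    open ComplexOrder in
    have := Matrix.conjTranspose_mul_self_eq_zero.mp h0
    calc C = (Cᴴ)ᴴ := (Matrix.conjTranspose_conjTranspose C).symm
      _ = 0 := by rw [this, Matrix.conjTranspose_zero]
  -- Dc * U * (1 - Dc) = 0
  have z1 : Dc K * (U * (1 - Dc K) * Uᴴ) * Dc K = 0 := by
    rw [← sub_eq_zero_iff]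
    have e1 : sub K (U * Dc K * Uᴴ) = 1 := by
      rw [← sub_mul, sub_conjTranspose]; exact hs1
    have : U * (1 - Dc K) * Uᴴ = U * Uᴴ - U * Dc K * Uᴴ := by noncomm_ring
    rw [this, sub_sub', h1, sub_one, e1, sub_self]
  have c1 : Dc K * U * (1 - Dc K) = 0 := by
    apply key
    have h1D : (1 - Dc K)ᴴ = 1 - Dc K := by
      rw [Matrix.conjTranspose_sub, Matrix.conjTranspose_one, hDh]
    have h1DI : (1 - Dc K) * (1 - Dc K) = 1 - Dc K := by
      have : (1 - Dc K) * (1 - Dc K) = 1 - Dc K - Dc K + Dc K * Dc K := by noncomm_ring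
      rw [this, hD]; abel
    calc Dc K * U * (1 - Dc K) * (Dc K * U * (1 - Dc K))ᴴ
        = Dc K * U * ((1 - Dc K) * (1 - Dc K)) * Uᴴ * Dc K := by
          rw [Matrix.conjTranspose_mul, Matrix.conjTranspose_mul, h1D, hDh]; noncomm_ring
      _ = Dc K * (U * (1 - Dc K) * Uᴴ) * Dc K := by rw [h1DI]; noncomm_ring
      _ = 0 := z1
  have z2 : Dc K * (Uᴴ * (1 - Dc K) * U) * Dc K = 0 := by
    rw [← sub_eq_zero_iff]
    have e2 : sub K (Uᴴ * Dc K * U) = 1 := by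
      rw [← sub_mul, sub_conjTranspose]; exact hs2
    have : Uᴴ * (1 - Dc K) * U = Uᴴ * U - Uᴴ * Dc K * U := by noncomm_ring
    rw [this, sub_sub', h2, sub_one, e2, sub_self]
  have c2 : (1 - Dc K) * U * Dc K = 0 := by
    apply key
    have h1D : (1 - Dc K)ᴴ = 1 - Dc K := by
      rw [Matrix.conjTranspose_sub, Matrix.conjTranspose_one, hDh]
    have h1DI : (1 - Dc K) * (1 - Dc K) = 1 - Dc K := by
      have : (1 - Dc K) * (1 - Dc K) = 1 - Dc K - Dc K + Dc K * Dc K := by noncomm_ring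
      rw [this, hD]; abel
    have hflip : ((1 - Dc K) * U * Dc K) * ((1 - Dc K) * U * Dc K)ᴴ
        = (1 - Dc K) * (U * Dc K * Uᴴ) * (1 - Dc K) := by
      have hexp : ((1 - Dc K) * U * Dc K) * ((1 - Dc K) * U * Dc K)ᴴ
          = (1 - Dc K) * (U * (Dc K * Dc K) * Uᴴ) * (1 - Dc K) := by
        rw [Matrix.conjTranspose_mul, Matrix.conjTranspose_mul, h1D, hDh]; noncomm_ring
      rw [hexp, hD]
    rw [hflip]
    -- (1-Dc) U Dc Uᴴ (1-Dc) = 0 : from z2 by taking conjTranspose? compute directly instead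
    -- use: Dc * Uᴴ * (1-Dc) = 0 from z2
    have c2' : Dc K * Uᴴ * (1 - Dc K) = 0 := by
      apply key
      calc Dc K * Uᴴ * (1 - Dc K) * (Dc K * Uᴴ * (1 - Dc K))ᴴ
          = Dc K * (Uᴴ * ((1 - Dc K) * (1 - Dc K)) * U) * Dc K := by
            rw [Matrix.conjTranspose_mul, Matrix.conjTranspose_mul, h1D, hDh,
              Matrix.conjTranspose_conjTranspose]; noncomm_ring
        _ = Dc K * (Uᴴ * (1 - Dc K) * U) * Dc K := by rw [h1DI]
        _ = 0 := z2
    have hsplit : ((1 - Dc K) * U * Dc K) * (Dc K * Uᴴ * (1 - Dc K))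
        = (1 - Dc K) * (U * (Dc K * Dc K) * Uᴴ) * (1 - Dc K) := by noncomm_ring
    rw [hD] at hsplit
    calc (1 - Dc K) * (U * Dc K * Uᴴ) * (1 - Dc K)
        = ((1 - Dc K) * U * Dc K) * (Dc K * Uᴴ * (1 - Dc K)) := hsplit.symm
      _ = ((1 - Dc K) * U * Dc K) * 0 := by rw [c2']
      _ = 0 := by rw [Matrix.mul_zero]
  have e1 : Dc K * U = Dc K * U * Dc K := by
    have h := c1
    rw [Matrix.mul_sub, Matrix.mul_one, sub_eq_zero] at h
    exact h
  have e2 : U * Dc K = Dc K * U * Dc K := by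
    have h := c2
    rw [Matrix.sub_mul, Matrix.sub_mul, Matrix.one_mul, sub_eq_zero] at h
    exact h
  rw [e1, e2]

section Exp

lemma pow_sum_idem {d : ℕ} (lam : Fin d → ℂ) (F : Fin d → Matrix X X ℂ)
    (hidem : ∀ i, F i * F i = F i) (horth : ∀ i j, i ≠ j → F i * F j = 0)
    (hsum : ∑ i, F i = 1) (n : ℕ) :
    (∑ j, lam j • F j) ^ n = ∑ j, (lam j ^ n) • F j := by
  induction n with
  | zero => simp only [pow_zero, one_smul]; exact hsum.symm
  | succ n ih =>
    rw [pow_succ, ih, Finset.sum_mul_sum]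
    refine Finset.sum_congr rfl fun i _ => ?_
    rw [Finset.sum_eq_single i]
    · rw [smul_mul_smul_comm, hidem, pow_succ]
    · intro j _ hji
      rw [smul_mul_smul_comm, horth i j (Ne.symm hji), smul_zero]
    · intro h; exact absurd (Finset.mem_univ i) h

lemma exp_sum_idem {d : ℕ} (lam : Fin d → ℂ) (F : Fin d → Matrix X X ℂ)
    (hidem : ∀ i, F i * F i = F i) (horth : ∀ i j, i ≠ j → F i * F j = 0)
    (hsum : ∑ i, F i = 1) :
    NormedSpace.exp (∑ j, lam j • F j) = ∑ j, Complex.exp (lam j) • F j := by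
  rw [NormedSpace.exp_eq_tsum ℂ]
  have hsummable : ∀ j : Fin d, Summable (fun n : ℕ => ((n.factorial : ℂ)⁻¹ * lam j ^ n)) := by
    intro j
    simpa [smul_eq_mul] using NormedSpace.expSeries_summable' (𝕂 := ℂ) (lam j)
  calc (∑' n : ℕ, (n.factorial : ℂ)⁻¹ • (∑ j, lam j • F j) ^ n)
      = ∑' n : ℕ, ∑ j, ((n.factorial : ℂ)⁻¹ * lam j ^ n) • F j := by
        refine tsum_congr fun n => ?_
        rw [pow_sum_idem lam F hidem horth hsum n, Finset.smul_sum]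
        exact Finset.sum_congr rfl fun j _ => by rw [smul_smul]
    _ = ∑ j, ∑' n : ℕ, ((n.factorial : ℂ)⁻¹ * lam j ^ n) • F j := by
        rw [Summable.tsum_finsetSum]
        intro j _
        exact (hsummable j).smul_const _
    _ = ∑ j, Complex.exp (lam j) • F j := by
        refine Finset.sum_congr rfl fun j _ => ?_
        rw [(hsummable j).tsum_smul_const]
        congr 1
        rw [Complex.exp_eq_exp_ℂ, NormedSpace.exp_eq_tsum ℂ]
        exact (tsum_congr fun n => by rw [smul_eq_mul]).symm

end Exp

end Sub

section Spectrum

lemma mem_spectrum_of_mulVec {n : Type*} [Fintype n] [DecidableEq n] {H : Matrix n n ℂ} {μ : ℂ}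
    {v : n → ℂ} (hv : v ≠ 0) (h : H.mulVec v = μ • v) : μ ∈ spectrum ℂ H := by
  rw [spectrum.mem_iff]
  intro hu
  rw [Matrix.isUnit_iff_isUnit_det, isUnit_iff_ne_zero] at hu
  apply hu
  rw [← Matrix.exists_mulVec_eq_zero_iff]
  refine ⟨v, hv, ?_⟩
  rw [Matrix.sub_mulVec, Algebra.algebraMap_eq_smul_one, Matrix.smul_mulVec,
    Matrix.one_mulVec, h, sub_self]

lemma eq_of_mem_spectrum_smul_one {n : Type*} [Fintype n] [DecidableEq n] [Nonempty n]
    {γ μ : ℂ} (h : μ ∈ spectrum ℂ ((γ • 1 : Matrix n n ℂ))) : μ = γ := by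
  rw [spectrum.mem_iff] at h
  by_contra hne
  apply h
  have heq : (algebraMap ℂ (Matrix n n ℂ)) μ - γ • 1 = (μ - γ) • 1 := by
    rw [Algebra.algebraMap_eq_smul_one, _root_.sub_smul]
  rw [heq]
  have hne' : μ - γ ≠ 0 := sub_ne_zero.mpr hne
  refine ⟨⟨(μ - γ) • 1, (μ - γ)⁻¹ • 1, ?_, ?_⟩, rfl⟩ <;>
    rw [smul_mul_smul_comm, Matrix.one_mul] <;>
    first
      | rw [mul_inv_cancel₀ hne', one_smul]
      | rw [inv_mul_cancel₀ hne', one_smul]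

end Spectrum

section CE

/-- `ce x = exp (2 π i x)` -/
noncomputable def ce (x : ℝ) : ℂ := Complex.exp (2 * Real.pi * Complex.I * x)

lemma ce_mul (x y : ℝ) : ce x * ce y = ce (x + y) := by
  rw [ce, ce, ce, ← Complex.exp_add]
  congr 1
  push_cast
  ring

lemma ce_zero : ce 0 = 1 := by simp [ce]

lemma star_ce (x : ℝ) : star (ce x) = ce (-x) := by
  rw [ce, ce, Complex.star_def]
  rw [show (starRingEnd ℂ) (Complex.exp (2 * Real.pi * Complex.I * x))
      = Complex.exp ((starRingEnd ℂ) (2 * Real.pi * Complex.I * x)) from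
    (Complex.exp_conj _).symm]
  congr 1
  simp only [_root_.map_mul, Complex.conj_I, Complex.conj_ofReal, map_ofNat]
  push_cast
  ring

lemma star_ce_mul_ce (x : ℝ) : star (ce x) * ce x = 1 := by
  rw [star_ce, ce_mul, neg_add_cancel, ce_zero]

lemma ce_int (m : ℤ) : ce (m : ℝ) = 1 := by
  rw [ce]
  rw [show 2 * (Real.pi : ℂ) * Complex.I * (m : ℝ) = (m : ℤ) * (2 * Real.pi * Complex.I) by
    push_cast; ring]
  exact Complex.exp_int_mul_two_pi_mul_I m

lemma ce_add_int (x : ℝ) (m : ℤ) : ce (x + m) = ce x := by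
  rw [← ce_mul, ce_int, mul_one]

lemma ce_eq_iff {x y : ℝ} : ce x = ce y ↔ ∃ m : ℤ, x = y + m := by
  constructor
  · intro h
    rw [ce, ce, Complex.exp_eq_exp_iff_exists_int] at h
    obtain ⟨n, hn⟩ := h
    refine ⟨n, ?_⟩
    have h2 : (2 * (Real.pi : ℂ) * Complex.I) * (x - y - n) = 0 := by
      rw [show (2 * (Real.pi : ℂ) * Complex.I) * (x - y - n)
          = 2 * Real.pi * Complex.I * x - (2 * Real.pi * Complex.I * y + n * (2 * Real.pi * Complex.I)) by ring,
        hn, sub_self]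
    have hpi : (2 * (Real.pi : ℂ) * Complex.I) ≠ 0 := by
      simp [Complex.I_ne_zero, Real.pi_ne_zero, Complex.ofReal_ne_zero]
    have h3 : ((x : ℂ) - y - n) = 0 := by
      rcases mul_eq_zero.mp h2 with h | h
      · exact absurd h hpi
      · exact h
    have h4 : ((x - y - n : ℝ) : ℂ) = 0 := by push_cast; push_cast at h3; linear_combination h3
    have := Complex.ofReal_eq_zero.mp h4
    linarith
  · rintro ⟨m, rfl⟩
    exact ce_add_int y m

lemma ce_abs (x : ℝ) : ‖ce x‖ = 1 := by
  rw [ce, Complex.norm_exp]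
  norm_num [Complex.mul_re, Complex.mul_im]

lemma norm_ce_sub_ce {x y : ℝ} (h : 2 * Real.pi * znorm (x - y) ≤ 1) :
    ‖ce x - ce y‖ ≤ 4 * Real.pi * znorm (x - y) := by
  set u : ℝ := x - y - (round (x - y) : ℝ) with hu
  have h1 : ce y * ce u = ce x := by
    rw [ce_mul]
    rw [show y + u = x + ((-(round (x - y)) : ℤ) : ℝ) by rw [hu]; push_cast; ring]
    exact ce_add_int x _
  have hfac : ce x - ce y = ce y * (ce u - 1) := by
    rw [mul_sub, h1, mul_one]
  have huabs : |u| = znorm (x - y) := rfl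
  have hz : ‖2 * (Real.pi : ℂ) * Complex.I * (u : ℝ)‖ = 2 * Real.pi * znorm (x - y) := by
    rw [norm_mul, norm_mul, norm_mul, Complex.norm_I, Complex.norm_real, Complex.norm_real,
      Real.norm_eq_abs, Real.norm_eq_abs, RCLike.norm_two, abs_of_nonneg Real.pi_pos.le, mul_one, huabs]
  calc ‖ce x - ce y‖ = ‖ce y‖ * ‖ce u - 1‖ := by rw [hfac, norm_mul]
    _ = ‖ce u - 1‖ := by rw [ce_abs, one_mul]
    _ ≤ 2 * ‖2 * (Real.pi : ℂ) * Complex.I * (u : ℝ)‖ := by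
        exact Complex.norm_exp_sub_one_le (by rw [hz]; exact h)
    _ = 4 * Real.pi * znorm (x - y) := by rw [hz]; ring

end CE



section MapC

variable {X : Type*} [Fintype X] [DecidableEq X]

lemma mapC_mul (A B : Matrix X X ℝ) :
    (A * B).map Complex.ofReal = A.map Complex.ofReal * B.map Complex.ofReal := by
  ext x y
  simp only [Matrix.map_apply, Matrix.mul_apply]
  push_cast
  rfl

lemma mapC_one : (1 : Matrix X X ℝ).map Complex.ofReal = 1 := by
  ext x y
  by_cases h : x = y <;> simp [Matrix.one_apply, h]

lemma mapC_smul (a : ℝ) (A : Matrix X X ℝ) :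
    (a • A).map Complex.ofReal = (a : ℂ) • A.map Complex.ofReal := by
  ext x y; simp

lemma mapC_sum {ι : Type*} (s : Finset ι) (f : ι → Matrix X X ℝ) :
    (∑ i ∈ s, f i).map Complex.ofReal = ∑ i ∈ s, (f i).map Complex.ofReal := by
  ext x y
  simp only [Matrix.map_apply, Matrix.sum_apply]
  push_cast
  rfl

lemma mapC_eq_zero_iff (A : Matrix X X ℝ) : A.map Complex.ofReal = 0 ↔ A = 0 := by
  constructor
  · intro h
    ext x y
    have := congrFun (congrFun h x) y
    simpa using this
  · rintro rfl
    ext x y; simp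

lemma mapC_conjTranspose (A : Matrix X X ℝ) (h : A.IsSymm) :
    (A.map Complex.ofReal)ᴴ = A.map Complex.ofReal := by
  ext x y
  simp only [Matrix.conjTranspose_apply, Matrix.map_apply, Complex.conj_ofReal]
  have := congrFun (congrFun h.eq x) y
  simp only [Matrix.transpose_apply] at this
  rw [this]
  exact Complex.conj_ofReal _

end MapC

section IdemFamily

variable {X : Type*} [Fintype X] [DecidableEq X]

lemma mul_idem_right {d : ℕ} (c : Fin d → ℂ) (F : Fin d → Matrix X X ℂ)
    (hidem : ∀ i, F i * F i = F i) (horth : ∀ i j, i ≠ j → F i * F j = 0) (i : Fin d) :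
    (∑ j, c j • F j) * F i = c i • F i := by
  rw [Finset.sum_mul, Finset.sum_eq_single i]
  · rw [smul_mul_assoc, hidem]
  · intro j _ hji
    rw [smul_mul_assoc, horth j i hji, smul_zero]
  · intro h; exact absurd (Finset.mem_univ i) h

lemma mul_idem_left {d : ℕ} (c : Fin d → ℂ) (F : Fin d → Matrix X X ℂ)
    (hidem : ∀ i, F i * F i = F i) (horth : ∀ i j, i ≠ j → F i * F j = 0) (i : Fin d) :
    F i * (∑ j, c j • F j) = c i • F i := by
  rw [Finset.mul_sum, Finset.sum_eq_single i]
  · rw [mul_smul_comm, hidem]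
  · intro j _ hji
    rw [mul_smul_comm, horth i j (Ne.symm hji), smul_zero]
  · intro h; exact absurd (Finset.mem_univ i) h

lemma sum_smul_conjTranspose {d : ℕ} (c : Fin d → ℂ) (F : Fin d → Matrix X X ℂ)
    (hherm : ∀ i, (F i)ᴴ = F i) :
    (∑ j, c j • F j)ᴴ = ∑ j, star (c j) • F j := by
  rw [Matrix.conjTranspose_sum]
  exact Finset.sum_congr rfl fun j _ => by rw [Matrix.conjTranspose_smul, hherm]

lemma sum_smul_unitary {d : ℕ} (c : Fin d → ℂ) (F : Fin d → Matrix X X ℂ)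
    (hidem : ∀ i, F i * F i = F i) (horth : ∀ i j, i ≠ j → F i * F j = 0)
    (hsum : ∑ i, F i = 1) (hherm : ∀ i, (F i)ᴴ = F i)
    (hc : ∀ i, star (c i) * c i = 1) :
    (∑ j, c j • F j) * (∑ j, c j • F j)ᴴ = 1 ∧ (∑ j, c j • F j)ᴴ * (∑ j, c j • F j) = 1 := by
  rw [sum_smul_conjTranspose c F hherm]
  constructor
  · rw [Finset.sum_mul]
    calc ∑ i, (c i • F i) * (∑ j, star (c j) • F j)
        = ∑ i, F i := by
          refine Finset.sum_congr rfl fun i _ => ?_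
          rw [smul_mul_assoc, mul_idem_left (fun j => star (c j)) F hidem horth i,
            smul_smul, mul_comm, hc i, one_smul]
      _ = 1 := hsum
  · rw [Finset.sum_mul]
    calc ∑ i, (star (c i) • F i) * (∑ j, c j • F j)
        = ∑ i, F i := by
          refine Finset.sum_congr rfl fun i _ => ?_
          rw [smul_mul_assoc, mul_idem_left c F hidem horth i, smul_smul, hc i, one_smul]
      _ = 1 := hsum

end IdemFamily

end PGFRAux

open PGFRAux Filter Topology

theorem stmt_0 {X : Type*} [Fintype X] [DecidableEq X] [Nonempty X]
    (M : Matrix X X ℝ) (hM : M.IsSymm)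
    (K : Set X) [DecidablePred (· ∈ K)] (hK : K.Nonempty)
    -- spectral decomposition `M = ∑ θ i • E i`
    (d : ℕ) (θ : Fin d → ℝ) (hθ : Function.Injective θ)
    (E : Fin d → Matrix X X ℝ)
    (hEsymm : ∀ i, (E i).IsSymm)
    (hEidem : ∀ i, E i * E i = E i)
    (hEorth : ∀ i j, i ≠ j → E i * E j = 0)
    (hEnz : ∀ i, E i ≠ 0)
    (hEsum : ∑ i, E i = 1)
    (hMspec : M = ∑ i, θ i • E i)
    -- the partition `P_K = (Π₀, Π₁, …, Π_s)`
    (s : ℕ) (P : Fin s → Set (Fin d))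
    (hPne : ∀ r, (P r).Nonempty)
    (hPdisj : ∀ r r', r ≠ r' → Disjoint (P r) (P r'))
    -- `Π₀ = {i : (E i)_{K×K} = 0}` is the complement of the union of the classes
    (hPcover : ∀ i : Fin d,
      (E i).submatrix (fun k : K => (k : X)) (fun k : K => (k : X)) ≠ 0 ↔ ∃ r, i ∈ P r)
    -- each `Π_r`, `1 ≤ r ≤ s`, is an equivalence class of the transitive closure of the
    -- eigenvalue-support relation `Φ_K = {(θ_a, θ_b) : E_a D_K E_b ≠ 0}`
    (hPclass : ∀ r, ∀ i ∈ P r, ∀ j : Fin d,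
      (j ∈ P r ↔ Relation.TransGen
        (fun a b : Fin d =>
          E a * Matrix.diagonal (fun x => if x ∈ K then (1 : ℝ) else 0) * E b ≠ 0) i j)) :
    PGFR M K ↔
      ∃ ρ : Fin s → ℝ,
        (∃ r₁ r₂, ∀ n : ℤ, ρ r₁ - ρ r₂ ≠ (n : ℝ)) ∧
        ∀ ε > (0 : ℝ), ∃ t > (0 : ℝ), ∀ r, ∀ j ∈ P r, znorm (t * θ j - ρ r) < ε := by
  classical
  haveI : Nonempty K := hK.to_subtype
  set E' : Fin d → Matrix X X ℂ := fun j => (E j).map Complex.ofReal with hE'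
  have hmapDc : (Matrix.diagonal (fun x => if x ∈ K then (1 : ℝ) else 0)).map Complex.ofReal
      = Dc K := by
    rw [Matrix.diagonal_map (by simp)]
    unfold Dc
    refine congrArg Matrix.diagonal (funext fun x => ?_)
    split_ifs <;> simp
  have hE'idem : ∀ i, E' i * E' i = E' i := fun i => by
    rw [hE', ← mapC_mul, hEidem]
  have hE'orth : ∀ i j, i ≠ j → E' i * E' j = 0 := fun i j hij => by
    rw [hE', ← mapC_mul, hEorth i j hij]
    ext x y; simp
  have hE'sum : ∑ j, E' j = 1 := by
    rw [hE', ← mapC_sum, hEsum, mapC_one]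
  have hE'herm : ∀ j, (E' j)ᴴ = E' j := fun j => mapC_conjTranspose _ (hEsymm j)
  have hsubsupp : ∀ i, sub K (E' i) ≠ 0 ↔ ∃ r, i ∈ P r := by
    intro i
    rw [← hPcover i]
    have : sub K (E' i)
        = ((E i).submatrix (fun k : K => (k : X)) (fun k : K => (k : X))).map Complex.ofReal := by
      rw [hE', PGFRAux.sub, Matrix.submatrix_map]
    rw [this]
    exact not_congr (mapC_eq_zero_iff _)
  have hRel : ∀ a b : Fin d,
      (E a * Matrix.diagonal (fun x => if x ∈ K then (1 : ℝ) else 0) * E b ≠ 0)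
        ↔ E' a * Dc K * E' b ≠ 0 := by
    intro a b
    rw [hE', ← hmapDc, ← mapC_mul, ← mapC_mul]
    exact not_congr (mapC_eq_zero_iff _).symm
  have hEDc : ∀ j, E' j * Dc K = 0 ↔ sub K (E' j) = 0 := by
    intro j
    rw [sub_eq_zero_iff]
    have hkey : Dc K * E' j * Dc K = (E' j * Dc K)ᴴ * (E' j * Dc K) := by
      rw [Matrix.conjTranspose_mul, hE'herm, Dc_conjTranspose]
      calc Dc K * E' j * Dc K = Dc K * (E' j * E' j) * Dc K := by rw [hE'idem]
        _ = Dc K * E' j * (E' j * Dc K) := by noncomm_ring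
    constructor
    · intro h; rw [hkey, h, Matrix.mul_zero]
    · intro h
      rw [hkey] at h
      exact (conjT_mul_self_zero _).mp h
  have hDcE : ∀ j, Dc K * E' j = 0 ↔ E' j * Dc K = 0 := by
    intro j
    constructor <;> intro h
    · have := congrArg Matrix.conjTranspose h
      rwa [Matrix.conjTranspose_mul, hE'herm, Dc_conjTranspose, Matrix.conjTranspose_zero] at this
    · have := congrArg Matrix.conjTranspose h
      rwa [Matrix.conjTranspose_mul, hE'herm, Dc_conjTranspose, Matrix.conjTranspose_zero] at this
  have hπ : (0:ℝ) < Real.pi := Real.pi_pos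
  have hexpI : ∀ (t th : ℝ), Complex.exp (Complex.I * t * th) = ce (t * th / (2 * Real.pi)) := by
    intro t th
    rw [ce]
    congr 1
    have hπ' : (Real.pi : ℂ) ≠ 0 := Complex.ofReal_ne_zero.mpr Real.pi_ne_zero
    push_cast
    field_simp
  have hsubExp : ∀ t : ℝ, subExpUnitary M K t
      = ∑ j, Complex.exp (Complex.I * t * θ j) • sub K (E' j) := by
    intro t
    have hMmap : (Complex.I * (t:ℂ)) • M.map Complex.ofReal
        = ∑ j, (Complex.I * t * θ j) • E' j := by
      rw [hMspec, mapC_sum, Finset.smul_sum]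
      refine Finset.sum_congr rfl fun j _ => ?_
      rw [hE', mapC_smul, smul_smul]
    show sub K _ = _
    rw [hMmap, exp_sum_idem _ _ hE'idem hE'orth hE'sum, sub_sum]
    rfl
  haveI : FrechetUrysohnSpace (Matrix K K ℂ) :=
    inferInstanceAs (FrechetUrysohnSpace (↑K → ↑K → ℂ))
  constructor
  · -- forward
    rintro ⟨H, hHcl, hHU, μ₁, hμ₁, μ₂, hμ₂, hμne⟩
    obtain ⟨A, hAmem, hAtend⟩ := mem_closure_iff_seq_limit.mp hHcl
    choose tt htt0 htteq using hAmem
    set x : ℕ → Fin d → ℝ := fun n j => Int.fract (tt n * θ j / (2 * Real.pi)) with hx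
    have hxmem : ∀ n, x n ∈ Set.univ.pi (fun _ : Fin d => Set.Icc (0:ℝ) 1) := by
      intro n
      rw [Set.mem_univ_pi]
      exact fun j => ⟨Int.fract_nonneg _, (Int.fract_lt_one _).le⟩
    obtain ⟨ρ', hρ'mem, φ, hφmono, hxtend⟩ :=
      (isCompact_univ_pi (fun _ : Fin d => isCompact_Icc)).tendsto_subseq hxmem
    have hcoord : ∀ j, Tendsto (fun n => x (φ n) j) atTop (𝓝 (ρ' j)) :=
      fun j => (tendsto_pi_nhds.mp hxtend) j
    have hcecont : Continuous ce := by
      unfold ce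
      exact Complex.continuous_exp.comp (continuous_const.mul Complex.continuous_ofReal)
    have hce : ∀ j, Tendsto (fun n => ce (x (φ n) j)) atTop (𝓝 (ce (ρ' j))) :=
      fun j => (hcecont.tendsto _).comp (hcoord j)
    have hcoeff : ∀ (m : ℕ) (j : Fin d),
        Complex.exp (Complex.I * tt m * θ j) = ce (x m j) := by
      intro m j
      rw [hexpI]
      conv_lhs => rw [show tt m * θ j / (2 * Real.pi)
        = Int.fract (tt m * θ j / (2 * Real.pi)) + (⌊tt m * θ j / (2 * Real.pi)⌋ : ℝ) from
          (Int.fract_add_floor _).symm]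
      rw [ce_add_int]
    have hHeq : H = ∑ j, ce (ρ' j) • sub K (E' j) := by
      have h1 : Tendsto (fun n => A (φ n)) atTop (𝓝 H) := hAtend.comp hφmono.tendsto_atTop
      have heq : ∀ n, A (φ n) = ∑ j, ce (x (φ n) j) • sub K (E' j) := by
        intro n
        rw [htteq (φ n), hsubExp]
        exact Finset.sum_congr rfl fun j _ => by rw [hcoeff]
      have h2 : Tendsto (fun n => A (φ n)) atTop (𝓝 (∑ j, ce (ρ' j) • sub K (E' j))) := by
        refine (tendsto_finset_sum Finset.univ
          (fun j _ => (hce j).smul_const (sub K (E' j)))).congr fun n => (heq n).symm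
      exact tendsto_nhds_unique h1 h2
    set c : Fin d → ℂ := fun j => ce (ρ' j) with hcdef
    set U : Matrix X X ℂ := ∑ j, c j • E' j with hUdef
    have hsubU : sub K U = H := by
      rw [hUdef, sub_sum, hHeq]
      rfl
    obtain ⟨hUUh, hUhU⟩ := sum_smul_unitary c E' hE'idem hE'orth hE'sum hE'herm
      (fun i => star_ce_mul_ce _)
    obtain ⟨hH2, hH1⟩ := Unitary.mem_iff.mp hHU
    rw [Matrix.star_eq_conjTranspose] at hH1 hH2
    have hcomm : Dc K * U = U * Dc K :=
      unitary_sub_commutes K U hUUh hUhU (by rw [hsubU]; exact hH1) (by rw [hsubU]; exact hH2)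
    have hconst : ∀ a b, E' a * Dc K * E' b ≠ 0 → c a = c b := by
      intro a b hab
      have hL : E' a * (U * Dc K) * E' b = c a • (E' a * Dc K * E' b) := by
        calc E' a * (U * Dc K) * E' b = (E' a * U) * Dc K * E' b := by noncomm_ring
          _ = (c a • E' a) * Dc K * E' b := by rw [mul_idem_left c E' hE'idem hE'orth a]
          _ = c a • (E' a * Dc K * E' b) := by rw [smul_mul_assoc, smul_mul_assoc]
      have hR : E' a * (Dc K * U) * E' b = c b • (E' a * Dc K * E' b) := by
        calc E' a * (Dc K * U) * E' b = E' a * Dc K * (U * E' b) := by noncomm_ring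
          _ = E' a * Dc K * (c b • E' b) := by rw [mul_idem_right c E' hE'idem hE'orth b]
          _ = c b • (E' a * Dc K * E' b) := by rw [mul_smul_comm]
      have h0 : c b • (E' a * Dc K * E' b) = c a • (E' a * Dc K * E' b) := by
        rw [← hL, ← hR, hcomm]
      have h1 : (c b - c a) • (E' a * Dc K * E' b) = 0 := by
        rw [_root_.sub_smul, h0, sub_self]
      rcases smul_eq_zero.mp h1 with h | h
      · exact (sub_eq_zero.mp h).symm
      · exact absurd h hab
    have htrans : ∀ a b : Fin d, Relation.TransGen
        (fun a b : Fin d =>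
          E a * Matrix.diagonal (fun x => if x ∈ K then (1 : ℝ) else 0) * E b ≠ 0) a b →
        c a = c b := by
      intro a b h
      induction h with
      | single h => exact hconst _ _ ((hRel _ _).mp h)
      | tail _ h ih => exact ih.trans (hconst _ _ ((hRel _ _).mp h))
    have hclassconst : ∀ r, ∀ j ∈ P r, c j = c ((hPne r).some) := by
      intro r j hj
      exact (htrans _ _ ((hPclass r (hPne r).some (hPne r).some_mem j).mp hj)).symm
    set ρ : Fin s → ℝ := fun r => ρ' ((hPne r).some) with hρdef
    have hρint : ∀ r, ∀ j ∈ P r, ∃ m : ℤ, ρ' j = ρ r + m := by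
      intro r j hj
      exact ce_eq_iff.mp (hclassconst r j hj)
    refine ⟨ρ, ?_, ?_⟩
    · -- non-constancy
      by_contra hcon
      push_neg at hcon
      obtain ⟨jw, hjw⟩ : ∃ j, sub K (E' j) ≠ 0 := by
        by_contra hno
        push_neg at hno
        have hzero : (1 : Matrix K K ℂ) = 0 := by
          calc (1 : Matrix K K ℂ) = sub K 1 := (sub_one K).symm
            _ = sub K (∑ j, E' j) := by rw [hE'sum]
            _ = ∑ j, sub K (E' j) := sub_sum K Finset.univ E'
            _ = 0 := Finset.sum_eq_zero fun j _ => hno j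
        obtain ⟨k, hk⟩ := hK
        have := congrFun (congrFun hzero ⟨k, hk⟩) ⟨k, hk⟩
        rw [Matrix.one_apply_eq] at this
        exact one_ne_zero this
      obtain ⟨r0, hr0⟩ := (hsubsupp jw).mp hjw
      have hHγ : H = ce (ρ r0) • 1 := by
        rw [hHeq]
        have hterm : ∀ j, ce (ρ' j) • sub K (E' j) = ce (ρ r0) • sub K (E' j) := by
          intro j
          by_cases hj : ∃ r, j ∈ P r
          · obtain ⟨r, hr⟩ := hj
            have h1 : ce (ρ' j) = ce (ρ r) := hclassconst r j hr
            have h2 : ce (ρ r) = ce (ρ r0) := by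
              obtain ⟨n, hn⟩ := hcon r r0
              rw [ce_eq_iff]
              exact ⟨n, by linarith⟩
            rw [h1, h2]
          · have hz : sub K (E' j) = 0 := by
              by_contra hne
              exact hj ((hsubsupp j).mp hne)
            rw [hz, smul_zero, smul_zero]
        calc ∑ j, ce (ρ' j) • sub K (E' j) = ∑ j, ce (ρ r0) • sub K (E' j) :=
              Finset.sum_congr rfl fun j _ => hterm j
          _ = ce (ρ r0) • ∑ j, sub K (E' j) := by rw [Finset.smul_sum]
          _ = ce (ρ r0) • (1 : Matrix K K ℂ) := by
              rw [← sub_sum, hE'sum, sub_one]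
      have h1 : μ₁ = ce (ρ r0) := eq_of_mem_spectrum_smul_one (hHγ ▸ hμ₁)
      have h2 : μ₂ = ce (ρ r0) := eq_of_mem_spectrum_smul_one (hHγ ▸ hμ₂)
      exact hμne (h1.trans h2.symm)
    · -- approximation
      intro ε hε
      obtain ⟨N, hN⟩ := (Metric.tendsto_atTop.mp hxtend) (ε/2) (by linarith)
      have hjb : ∀ j, |x (φ N) j - ρ' j| < ε/2 := by
        intro j
        have h1 := dist_le_pi_dist (x (φ N)) ρ' j
        have h2 := hN N le_rfl
        rw [Real.dist_eq] at h1
        calc |x (φ N) j - ρ' j| ≤ dist (x (φ N)) ρ' := by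
              simpa using (Real.dist_eq _ _ ▸ dist_le_pi_dist (x (φ N)) ρ' j)
          _ < ε/2 := h2
      set t0 : ℝ := tt (φ N) / (2 * Real.pi) with ht0def
      have hmain : ∀ (tv : ℝ), tv = t0 → ∀ r, ∀ j, j ∈ P r → znorm (tv * θ j - ρ r) < ε/2 := by
        rintro tv rfl r j hj
        obtain ⟨m, hm⟩ := hρint r j hj
        have hkey : t0 * θ j - ρ r
            = (x (φ N) j - ρ' j) + ((⌊tt (φ N) * θ j / (2 * Real.pi)⌋ + m : ℤ) : ℝ) := by
          rw [hx]
          push_cast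
          have hfr : Int.fract (tt (φ N) * θ j / (2 * Real.pi))
              + (⌊tt (φ N) * θ j / (2 * Real.pi)⌋ : ℝ) = tt (φ N) * θ j / (2 * Real.pi) :=
            Int.fract_add_floor _
          have ht0' : t0 * θ j = tt (φ N) * θ j / (2 * Real.pi) := by
            rw [ht0def]; ring
          rw [ht0', hm]
          linarith [hfr]
        rw [hkey, znorm_add_int]
        calc znorm (x (φ N) j - ρ' j) ≤ |x (φ N) j - ρ' j| := znorm_le_abs _
          _ < ε/2 := hjb j
      rcases eq_or_lt_of_le (show (0:ℝ) ≤ t0 from div_nonneg (htt0 _) (by positivity)) with h0 | h0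
      · set Cs : ℝ := 1 + ∑ j, |θ j| with hCs
        have hCpos : 0 < Cs := by positivity
        refine ⟨(ε/2) / Cs, by positivity, ?_⟩
        intro r j hj
        have hbase := hmain t0 rfl r j hj
        rw [← h0] at hbase
        have hθb : |θ j| ≤ Cs := by
          rw [hCs]
          have h1 : |θ j| ≤ ∑ i, |θ i| :=
            Finset.single_le_sum (fun i _ => abs_nonneg (θ i)) (Finset.mem_univ j)
          linarith
        have h2 : znorm ((ε/2)/Cs * θ j - ρ r) ≤ znorm (0 * θ j - ρ r) + |(ε/2)/Cs * θ j| := by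
          have heq2 : (ε/2)/Cs * θ j - ρ r = (0 * θ j - ρ r) + (ε/2)/Cs * θ j := by ring
          rw [heq2]
          exact znorm_add_le _ _
        have h3 : |(ε/2)/Cs * θ j| ≤ ε/2 := by
          rw [abs_mul, abs_of_nonneg (by positivity : (0:ℝ) ≤ (ε/2)/Cs)]
          calc (ε/2)/Cs * |θ j| ≤ (ε/2)/Cs * Cs :=
                mul_le_mul_of_nonneg_left hθb (by positivity)
            _ = ε/2 := by field_simp
        calc znorm ((ε/2)/Cs * θ j - ρ r)
            ≤ znorm (0 * θ j - ρ r) + |(ε/2)/Cs * θ j| := h2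
          _ < ε/2 + ε/2 := by linarith
          _ = ε := by ring
      · exact ⟨t0, h0, fun r j hj => lt_trans (hmain t0 rfl r j hj) (by linarith)⟩

  · -- backward
    rintro ⟨ρ, ⟨r₁, r₂, hρdiff⟩, happ⟩
    set c : Fin d → ℂ := fun j => if h : ∃ r, j ∈ P r then ce (ρ h.choose) else 1 with hcdef
    have hcval : ∀ r, ∀ j ∈ P r, c j = ce (ρ r) := by
      intro r j hj
      have hex : ∃ r', j ∈ P r' := ⟨r, hj⟩
      have hch : hex.choose = r := by
        by_contra hne
        exact (Set.disjoint_left.mp (hPdisj _ _ hne) hex.choose_spec) hj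
      simp only [hcdef]
      rw [dif_pos hex, hch]
    have hcstar : ∀ j, star (c j) * c j = 1 := by
      intro j
      simp only [hcdef]
      split_ifs with h
      · exact star_ce_mul_ce _
      · simp
    set U : Matrix X X ℂ := ∑ j, c j • E' j with hUdef
    obtain ⟨hUUh, hUhU⟩ := sum_smul_unitary c E' hE'idem hE'orth hE'sum hE'herm hcstar
    have hUcomm : U * Dc K = Dc K * U := by
      have expand1 : U * Dc K = ∑ j, ∑ i, c j • (E' j * Dc K * E' i) := by
        rw [hUdef, Finset.sum_mul]
        refine Finset.sum_congr rfl fun j _ => ?_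
        rw [smul_mul_assoc]
        conv_lhs => rw [show E' j * Dc K = E' j * Dc K * (∑ i, E' i) by
          rw [hE'sum, Matrix.mul_one]]
        rw [Finset.mul_sum, Finset.smul_sum]
      have expand2 : Dc K * U = ∑ j, ∑ i, c i • (E' j * Dc K * E' i) := by
        rw [hUdef, Finset.mul_sum, Finset.sum_comm]
        refine Finset.sum_congr rfl fun i _ => ?_
        rw [mul_smul_comm]
        conv_lhs => rw [show Dc K * E' i = (∑ j, E' j) * (Dc K * E' i) by
          rw [hE'sum, Matrix.one_mul]]
        rw [Finset.sum_mul, Finset.smul_sum]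
        refine Finset.sum_congr rfl fun j _ => ?_
        rw [Matrix.mul_assoc]
      rw [expand1, expand2]
      refine Finset.sum_congr rfl fun j _ => Finset.sum_congr rfl fun i _ => ?_
      by_cases h0 : E' j * Dc K * E' i = 0
      · rw [h0, smul_zero, smul_zero]
      · have hjsupp : sub K (E' j) ≠ 0 := by
          intro hz
          apply h0
          have hzz : E' j * Dc K = 0 := (hEDc j).mpr hz
          rw [hzz, Matrix.zero_mul]
        obtain ⟨r, hr⟩ := (hsubsupp j).mp hjsupp
        have hi : i ∈ P r :=
          (hPclass r j hr i).mpr (Relation.TransGen.single ((hRel j i).mpr h0))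
        rw [hcval r j hr, hcval r i hi]
    set H : Matrix K K ℂ := sub K U with hHdef
    have hHsum : H = ∑ j, c j • sub K (E' j) := by
      rw [hHdef, hUdef, sub_sum]
      rfl
    -- H is in the closure
    have hseq : ∀ n : ℕ, ∃ t > (0:ℝ), ∀ r, ∀ j ∈ P r, znorm (t * θ j - ρ r) < 1/(n+1) := by
      intro n
      exact happ (1/(n+1)) (by positivity)
    choose tn htn0 htnb using hseq
    have hA : ∀ n, subExpUnitary M K (2 * Real.pi * tn n)
        = ∑ j, ce (tn n * θ j) • sub K (E' j) := by
      intro n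
      rw [hsubExp]
      refine Finset.sum_congr rfl fun j _ => ?_
      rw [hexpI]
      congr 2
      field_simp
    have hclosure : H ∈ closure {A : Matrix K K ℂ | ∃ t : ℝ, 0 ≤ t ∧ A = subExpUnitary M K t} := by
      apply mem_closure_of_tendsto (f := fun n => subExpUnitary M K (2 * Real.pi * tn n))
        (b := atTop)
      · have : Tendsto (fun n => ∑ j, ce (tn n * θ j) • sub K (E' j)) atTop (𝓝 H) := by
          rw [hHsum]
          refine tendsto_finset_sum Finset.univ fun j _ => ?_
          by_cases hj : ∃ r, j ∈ P r
          · obtain ⟨r, hr⟩ := hj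
            have hcj : c j = ce (ρ r) := hcval r j hr
            rw [hcj]
            refine Tendsto.smul_const ?_ _
            rw [← tendsto_sub_nhds_zero_iff]
            apply squeeze_zero_norm' (a := fun n : ℕ => 4 * Real.pi * (1/(n+1)))
            · filter_upwards [eventually_ge_atTop 7] with n hn
              have hz : znorm (tn n * θ j - ρ r) < 1/(n+1) := htnb n r j hr
              have hn8 : (8:ℝ) ≤ (n:ℝ) + 1 := by
                have : (7:ℝ) ≤ (n:ℝ) := by exact_mod_cast hn
                linarith
              have hzn := znorm_nonneg (tn n * θ j - ρ r)
              have hπ4 : Real.pi ≤ 4 := Real.pi_le_four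
              have hinv : 1/((n:ℝ)+1) ≤ 1/8 := by
                apply one_div_le_one_div_of_le <;> linarith
              have hcond : 2 * Real.pi * znorm (tn n * θ j - ρ r) ≤ 1 := by
                nlinarith
              refine le_trans (norm_ce_sub_ce hcond) ?_
              have := mul_le_mul_of_nonneg_left hz.le
                (show (0:ℝ) ≤ 4 * Real.pi by positivity)
              linarith
            · have h0 : Tendsto (fun n : ℕ => 4 * Real.pi * (1/(n+1))) atTop
                  (𝓝 (4 * Real.pi * 0)) :=
                tendsto_one_div_add_atTop_nhds_zero_nat.const_mul _
              simpa using h0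
          · have hz : sub K (E' j) = 0 := by
              by_contra hne
              exact hj ((hsubsupp j).mp hne)
            rw [hz]
            simp only [smul_zero]
            exact tendsto_const_nhds
        refine this.congr fun n => (hA n).symm
      · exact Filter.Eventually.of_forall fun n => ⟨2 * Real.pi * tn n, by have := htn0 n; positivity, rfl⟩
    -- H is unitary
    have hHunit : H ∈ Matrix.unitaryGroup K ℂ := by
      rw [Matrix.mem_unitaryGroup_iff, Matrix.star_eq_conjTranspose]
      rw [hHdef, ← sub_conjTranspose, PGFRAux.sub_mul]
      calc sub K (U * Dc K * Uᴴ) = sub K (Dc K * (U * Uᴴ)) := by rw [hUcomm, Matrix.mul_assoc]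
        _ = sub K (Dc K) := by rw [hUUh, Matrix.mul_one]
        _ = 1 := sub_Dc K
    -- eigenvalues
    have heig : ∀ r : Fin s, ce (ρ r) ∈ spectrum ℂ H := by
      intro r
      set Q : Matrix X X ℂ := ∑ j ∈ Finset.univ.filter (fun j => j ∈ P r), E' j with hQ
      have hUQ : U * Q = ce (ρ r) • Q := by
        rw [hQ, Finset.mul_sum, Finset.smul_sum]
        refine Finset.sum_congr rfl fun j hj => ?_
        have hj' : j ∈ P r := (Finset.mem_filter.mp hj).2
        rw [hUdef, mul_idem_right c E' hE'idem hE'orth j, hcval r j hj']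
      have hUDQ : U * (Dc K * Q) = ce (ρ r) • (Dc K * Q) := by
        calc U * (Dc K * Q) = (U * Dc K) * Q := by rw [Matrix.mul_assoc]
          _ = (Dc K * U) * Q := by rw [hUcomm]
          _ = Dc K * (U * Q) := by rw [Matrix.mul_assoc]
          _ = Dc K * (ce (ρ r) • Q) := by rw [hUQ]
          _ = ce (ρ r) • (Dc K * Q) := by rw [mul_smul_comm]
      set j0 := (hPne r).some with hj0def
      have hj0 : j0 ∈ P r := (hPne r).some_mem
      have hDQne : Dc K * Q ≠ 0 := by
        intro h0
        have hQE : Q * E' j0 = E' j0 := by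
          rw [hQ, Finset.sum_mul, Finset.sum_eq_single j0]
          · exact hE'idem j0
          · intro j hj hne
            exact hE'orth j j0 hne
          · intro hnotmem
            exact absurd (Finset.mem_filter.mpr ⟨Finset.mem_univ _, hj0⟩) hnotmem
        have h1 : Dc K * E' j0 = 0 := by
          have h2 : Dc K * Q * E' j0 = 0 := by rw [h0, Matrix.zero_mul]
          rwa [Matrix.mul_assoc, hQE] at h2
        have h3 : sub K (E' j0) = 0 := (hEDc j0).mp ((hDcE j0).mp h1)
        exact (hsubsupp j0).mpr ⟨r, hj0⟩ h3
      obtain ⟨w, hw⟩ : ∃ w : X → ℂ, (Dc K * Q).mulVec w ≠ 0 := by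
        by_contra hno
        push_neg at hno
        apply hDQne
        ext a b
        have := congrFun (hno (Pi.single b 1)) a
        rw [Matrix.mulVec_single] at this
        simpa using this
      set u : X → ℂ := (Dc K * Q).mulVec w with hu
      have hUu : U.mulVec u = ce (ρ r) • u := by
        rw [hu, Matrix.mulVec_mulVec, hUDQ, Matrix.smul_mulVec]
      have hu0 : ∀ x, x ∉ K → u x = 0 := by
        intro x hx
        rw [hu, ← Matrix.mulVec_mulVec]
        show (Dc K).mulVec (Q.mulVec w) x = 0
        rw [Dc, Matrix.mulVec_diagonal, if_neg hx, zero_mul]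
      set v : K → ℂ := fun k => u k with hv
      have hvne : v ≠ 0 := by
        intro hv0
        apply hw
        ext a
        by_cases ha : a ∈ K
        · exact congrFun hv0 ⟨a, ha⟩
        · exact hu0 a ha
      have hHv : H.mulVec v = ce (ρ r) • v := by
        ext k
        have lhs1 : H.mulVec v k = ∑ k' : K, U (k : X) (k' : X) * u (k' : X) := by
          rw [hHdef]
          rfl
        have lhs2 : (∑ k' : K, U (k : X) (k' : X) * u (k' : X))
            = ∑ x : X, (if x ∈ K then U (k : X) x * u x else 0) :=
          sum_subtype_K K (fun x => U (k : X) x * u x)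
        have lhs3 : (∑ x : X, (if x ∈ K then U (k : X) x * u x else 0))
            = ∑ x : X, U (k : X) x * u x := by
          refine Finset.sum_congr rfl fun x _ => ?_
          by_cases hx : x ∈ K
          · rw [if_pos hx]
          · rw [if_neg hx, hu0 x hx, mul_zero]
        have lhs4 : (∑ x : X, U (k : X) x * u x) = U.mulVec u (k : X) := rfl
        rw [lhs1, lhs2, lhs3, lhs4, hUu]
        rfl
      exact mem_spectrum_of_mulVec hvne hHv
    have hnedist : ce (ρ r₁) ≠ ce (ρ r₂) := by
      intro he
      obtain ⟨m, hm⟩ := ce_eq_iff.mp he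
      exact hρdiff m (by linarith)
    exact ⟨H, hclosure, hHunit, ce (ρ r₁), heig r₁, ce (ρ r₂), heig r₂, hnedist⟩
end

section
/- Let M be a real symmetric primitive matrix (M is entrywise nonnegative and some power of M has all entries strictly positive) indexed by a finite set X, and let K ⊆ X be a nonempty subset. If M exhibits pretty good fractional revival with respect to K, then the closure of { (exp(itM))_{K×K} : t ≥ 0 } intersected with the unitary group of ℂ^K contains a matrix that is not diagonal. -/
open Matrix Set

lemma unitary_row_norm {n : Type*} [Fintype n] [DecidableEq n] (B : Matrix n n ℂ)
    (hB : B ∈ Matrix.unitaryGroup n ℂ) (a : n) : ∑ y, ‖B a y‖ ^ 2 = 1 := by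
  have h := Matrix.mem_unitaryGroup_iff.mp hB
  have h2 := congrFun (congrFun h a) a
  rw [Matrix.mul_apply] at h2
  simp only [Matrix.star_apply, Matrix.one_apply_eq] at h2
  have key : (↑(∑ y, ‖B a y‖ ^ 2) : ℂ) = 1 := by
    push_cast
    rw [← h2]
    refine Finset.sum_congr rfl fun y _ => ?_
    rw [Complex.star_def, Complex.mul_conj']
  exact_mod_cast key

lemma exp_mem_unitary {X : Type*} [Fintype X] [DecidableEq X]
    (M : Matrix X X ℝ) (hM : M.IsSymm) (t : ℝ) :
    NormedSpace.exp ((Complex.I * (t : ℂ)) • M.map Complex.ofReal) ∈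
      Matrix.unitaryGroup X ℂ := by
  set Mc := M.map Complex.ofReal with hMcdef
  set A := (Complex.I * (t : ℂ)) • Mc with hAdef
  have hMc : star Mc = Mc := by
    ext x y
    simp only [Matrix.star_eq_conjTranspose, Matrix.conjTranspose_apply, Matrix.map_apply,
      Complex.star_def, Complex.conj_ofReal, hMcdef]
    exact congrArg _ (hM.apply x y)
  have hstar : star A = -A := by
    rw [hAdef, star_smul, hMc]
    simp [Complex.conj_I]
  rw [Matrix.mem_unitaryGroup_iff, Matrix.star_eq_conjTranspose,
    ← Matrix.exp_conjTranspose, ← Matrix.star_eq_conjTranspose, hstar,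
    ← Matrix.exp_add_of_commute A (-A) (Commute.neg_right (Commute.refl A)),
    add_neg_cancel, NormedSpace.exp_zero]

theorem stmt_1 {X : Type*} [Fintype X] [DecidableEq X]
    (M : Matrix X X ℝ) (hM : M.IsSymm)
    -- `M` is primitive: entrywise nonnegative, and some power is entrywise positive
    (hnonneg : ∀ x y, 0 ≤ M x y)
    (hprim : ∃ n : ℕ, ∀ x y, 0 < (M ^ n) x y)
    (K : Set X) [DecidablePred (· ∈ K)] (hK : K.Nonempty)
    (hpgfr : PGFR M K) :
    ∃ H ∈ closure {A : Matrix K K ℂ | ∃ t : ℝ, 0 ≤ t ∧ A = subExpUnitary M K t},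
      H ∈ Matrix.unitaryGroup K ℂ ∧ ∃ a b : K, a ≠ b ∧ H a b ≠ 0 := by
  classical
  obtain ⟨H, hHcl, hHU, μ₁, hμ₁, μ₂, hμ₂, hμne⟩ := hpgfr
  by_cases hoff : ∃ a b : K, a ≠ b ∧ H a b ≠ 0
  · exact ⟨H, hHcl, hHU, hoff⟩
  push_neg at hoff
  exfalso
  have hHd : H = Matrix.diagonal (fun k => H k k) := by
    ext a b
    by_cases h : a = b
    · subst h; simp
    · rw [Matrix.diagonal_apply_ne _ h]
      exact hoff a b h
  rw [hHd, spectrum_diagonal] at hμ₁ hμ₂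
  obtain ⟨a, ha⟩ := hμ₁
  obtain ⟨b, hb⟩ := hμ₂
  obtain ⟨n, hn⟩ := hprim
  set Mc := M.map Complex.ofReal with hMcdef
  haveI : FrechetUrysohnSpace (Matrix K K ℂ) :=
    inferInstanceAs (FrechetUrysohnSpace (∀ _ : K, ∀ _ : K, ℂ))
  obtain ⟨u, humem, hulim⟩ := mem_closure_iff_seq_limit.mp hHcl
  choose ts hts0 hu using humem
  set U : ℕ → Matrix X X ℂ := fun j => NormedSpace.exp ((Complex.I * (ts j : ℂ)) • Mc)
    with hUdef
  have hUu : ∀ (j : ℕ) (k l : K), U j (k : X) (l : X) = u j k l := by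
    intro j k l
    rw [hu j]
    rfl
  have hUunit : ∀ j, U j ∈ Matrix.unitaryGroup X ℂ := fun j => exp_mem_unitary M hM (ts j)
  have hUsymm : ∀ j, (U j).IsSymm := by
    intro j
    exact Matrix.IsSymm.exp ((hM.map _).smul _)
  have hent : ∀ (k l : K), Filter.Tendsto (fun j => u j k l) Filter.atTop (nhds (H k l)) := by
    intro k l
    have hc : Continuous fun A : Matrix K K ℂ => A k l :=
      (continuous_apply l).comp (continuous_apply k)
    exact (hc.tendsto H).comp hulim
  have hoffdecay : ∀ (k : K) (x : X), x ∉ K →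
      Filter.Tendsto (fun j => U j (k : X) x) Filter.atTop (nhds 0) := by
    intro k x hx
    rw [tendsto_zero_iff_norm_tendsto_zero]
    have hsq : Filter.Tendsto (fun j => ‖U j (k : X) x‖ ^ 2) Filter.atTop (nhds 0) := by
      have hS : Filter.Tendsto (fun j => ∑ l : K, ‖u j k l‖ ^ 2) Filter.atTop
          (nhds (∑ l : K, ‖H k l‖ ^ 2)) := by
        apply tendsto_finset_sum
        intro l _
        exact ((continuous_norm.tendsto _).comp (hent k l)).pow 2
      have hHrow : (∑ l : K, ‖H k l‖ ^ 2) = 1 := unitary_row_norm H hHU k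
      have hbound : ∀ j, ‖U j (k : X) x‖ ^ 2 ≤ 1 - ∑ l : K, ‖u j k l‖ ^ 2 := by
        intro j
        have h1 : ∑ y, ‖U j (k : X) y‖ ^ 2 = 1 := unitary_row_norm (U j) (hUunit j) k
        have hle : ∑ y ∈ insert x (Finset.univ.filter (· ∈ K)), ‖U j (k : X) y‖ ^ 2 ≤
            ∑ y, ‖U j (k : X) y‖ ^ 2 :=
          Finset.sum_le_sum_of_subset_of_nonneg (Finset.subset_univ _)
            (fun y _ _ => sq_nonneg _)
        rw [Finset.sum_insert (by simp [hx])] at hle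
        have hKsum : ∑ y ∈ Finset.univ.filter (· ∈ K), ‖U j (k : X) y‖ ^ 2
            = ∑ l : K, ‖u j k l‖ ^ 2 := by
          rw [Finset.sum_subtype (p := (· ∈ K)) (Finset.univ.filter (· ∈ K)) (by simp)
            (fun y => ‖U j (k : X) y‖ ^ 2)]
          exact Finset.sum_congr rfl (fun l _ => by rw [hUu])
        rw [hKsum, h1] at hle
        linarith
      have hlim0 : Filter.Tendsto (fun j => 1 - ∑ l : K, ‖u j k l‖ ^ 2) Filter.atTop
          (nhds 0) := by
        have h := (tendsto_const_nhds (x := (1 : ℝ)) (f := Filter.atTop)).sub hS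
        rw [hHrow, sub_self] at h
        exact h
      exact squeeze_zero (fun j => sq_nonneg _) hbound hlim0
    have h := hsq.sqrt
    rw [Real.sqrt_zero] at h
    exact h.congr fun j => Real.sqrt_sq (norm_nonneg _)
  set c : ℂ := (Mc ^ n) (a : X) (b : X) with hcdef
  have hMcpow : Mc ^ n = (M ^ n).map Complex.ofReal := by
    rw [hMcdef]
    rw [show M.map Complex.ofReal = Complex.ofRealHom.mapMatrix M from rfl,
      show (M ^ n).map Complex.ofReal = Complex.ofRealHom.mapMatrix (M ^ n) from rfl]
    exact (map_pow Complex.ofRealHom.mapMatrix M n).symm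
  have hcne : c ≠ 0 := by
    rw [hcdef, hMcpow, Matrix.map_apply]
    exact_mod_cast (hn (a : X) (b : X)).ne'
  have hcomm : (fun j => (U j * Mc ^ n) (a : X) (b : X))
      = (fun j => (Mc ^ n * U j) (a : X) (b : X)) := by
    funext j
    have h1 : Commute ((Complex.I * (ts j : ℂ)) • Mc) Mc :=
      Commute.smul_left (Commute.refl Mc) _
    have h2 : Commute (U j) Mc := h1.exp_left
    have h3 : Commute (U j) (Mc ^ n) := h2.pow_right n
    show (U j * Mc ^ n) (a : X) (b : X) = _
    rw [h3.eq]
  -- limit of the left-hand side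
  have hL : Filter.Tendsto (fun j => (U j * Mc ^ n) (a : X) (b : X)) Filter.atTop
      (nhds (H a a * c)) := by
    simp_rw [Matrix.mul_apply]
    have hsum : H a a * c
        = ∑ x : X, (if h : x ∈ K then H a ⟨x, h⟩ else 0) * (Mc ^ n) x (b : X) := by
      rw [Finset.sum_eq_single (a : X)]
      · rw [dif_pos a.2, hcdef]
      · intro x _ hxa
        by_cases hxK : x ∈ K
        · rw [dif_pos hxK, hoff a ⟨x, hxK⟩ (fun he => hxa (congrArg Subtype.val he).symm),
            zero_mul]
        · rw [dif_neg hxK, zero_mul]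
      · exact fun h => absurd (Finset.mem_univ _) h
    rw [hsum]
    apply tendsto_finset_sum
    intro x _
    by_cases hxK : x ∈ K
    · rw [dif_pos hxK]
      have h1 : Filter.Tendsto (fun j => U j (a : X) x) Filter.atTop (nhds (H a ⟨x, hxK⟩)) := by
        have := hent a ⟨x, hxK⟩
        simpa [← hUu] using this
      exact h1.mul_const _
    · rw [dif_neg hxK]
      simpa using (hoffdecay a x hxK).mul_const ((Mc ^ n) x (b : X))
  -- limit of the right-hand side
  have hR : Filter.Tendsto (fun j => (Mc ^ n * U j) (a : X) (b : X)) Filter.atTop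
      (nhds (c * H b b)) := by
    simp_rw [Matrix.mul_apply]
    have hsum : c * H b b
        = ∑ x : X, (Mc ^ n) (a : X) x * (if h : x ∈ K then H b ⟨x, h⟩ else 0) := by
      rw [Finset.sum_eq_single (b : X)]
      · rw [dif_pos b.2, hcdef]
      · intro x _ hxb
        by_cases hxK : x ∈ K
        · rw [dif_pos hxK, hoff b ⟨x, hxK⟩ (fun he => hxb (congrArg Subtype.val he).symm),
            mul_zero]
        · rw [dif_neg hxK, mul_zero]
      · exact fun h => absurd (Finset.mem_univ _) h
    rw [hsum]
    apply tendsto_finset_sum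
    intro x _
    by_cases hxK : x ∈ K
    · rw [dif_pos hxK]
      have h1 : Filter.Tendsto (fun j => U j x (b : X)) Filter.atTop (nhds (H b ⟨x, hxK⟩)) := by
        have h2 := hent b ⟨x, hxK⟩
        have h3 : ∀ j, U j x (b : X) = u j b ⟨x, hxK⟩ := by
          intro j
          rw [← hUu j b ⟨x, hxK⟩]
          exact (hUsymm j).apply x (b : X) ▸ rfl
        simpa [h3] using h2
      exact h1.const_mul _
    · rw [dif_neg hxK]
      have h1 : Filter.Tendsto (fun j => U j x (b : X)) Filter.atTop (nhds 0) := by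
        have h3 : ∀ j, U j x (b : X) = U j (b : X) x := fun j => ((hUsymm j).apply x (b : X)).symm ▸ rfl
        simp_rw [h3]
        exact hoffdecay b x hxK
      simpa using h1.const_mul ((Mc ^ n) (a : X) x)
  have heq : H a a * c = c * H b b := by
    exact tendsto_nhds_unique (hcomm ▸ hL) hR
  have hdiag : H a a = H b b := by
    have h2 : H a a * c = H b b * c := by rw [heq, mul_comm]
    exact mul_right_cancel₀ hcne h2
  exact hμne (by rw [← ha, ← hb]; exact hdiag)
end

section
/- Let θ_1, …, θ_k be real numbers and let P = (Π_1, …, Π_s) be a partition of {1,…,k}. Then the following are equivalent: (i) P is non-degenerate; (ii) there exists a pair of indices 1 ≤ r_1, r_2 ≤ s such that no sequence of integers ℓ_1, …, ℓ_k satisfies all of: (a) Σ_{j=1}^k ℓ_j θ_j = 0, (b) Σ_{j ∈ Π_r} ℓ_j = 0 for all r ≠ r_1, r_2, and (c) Σ_{j ∈ Π_{r_1}} ℓ_j = −1 and Σ_{j ∈ Π_{r_2}} ℓ_j = 1. -/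
open Finset

/-- A partition `(Π_1, …, Π_s)` of `{1,…,k}` is non-degenerate for `θ` if there is a
vector `(ρ_1,…,ρ_s)`, not constant modulo 1, such that for every `ε > 0` there is `t > 0`
with `‖t·θ_j − ρ_r‖ < ε` for all `r` and all `j ∈ Π_r`. -/
noncomputable def NonDegenerate {k s : ℕ} (θ : Fin k → ℝ) (P : Fin s → Finset (Fin k)) : Prop :=
  ∃ ρ : Fin s → ℝ,
    (∃ r₁ r₂, ∀ n : ℤ, ρ r₁ - ρ r₂ ≠ (n : ℝ)) ∧
    ∀ ε > (0 : ℝ), ∃ t > (0 : ℝ), ∀ r, ∀ j ∈ P r, znorm (t * θ j - ρ r) < ε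

namespace KronAux

open scoped Real ComplexConjugate
open Filter Topology Set AddCircle MeasureTheory intervalIntegral

variable {k : ℕ}

abbrev X (k : ℕ) := Fin k → AddCircle (1:ℝ)

noncomputable def emb (x : Fin k → ℝ) : X k := fun j => (x j : AddCircle (1:ℝ))

lemma emb_sub (x y : Fin k → ℝ) : emb x - emb y = emb (x - y) := by
  funext j
  simp [emb]

lemma emb_zero : emb (0 : Fin k → ℝ) = 0 := by
  funext j
  show ((0:ℝ) : AddCircle (1:ℝ)) = 0
  norm_cast
lemma norm_emb_ge (x : Fin k → ℝ) (j : Fin k) : znorm (x j) ≤ ‖emb x‖ := by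
  have h1 : ‖(emb x) j‖ ≤ ‖emb x‖ := norm_le_pi_norm (emb x) j
  have h2 : ‖(emb x) j‖ = znorm (x j) := by
    show ‖((x j : ℝ) : AddCircle (1:ℝ))‖ = znorm (x j)
    rw [AddCircle.norm_eq, znorm]
    norm_num
  rwa [h2] at h1

noncomputable def chi (ℓ : Fin k → ℤ) : C(X k, ℂ) :=
  ∏ j, (fourier (ℓ j)).comp ⟨fun x => x j, continuous_apply j⟩

lemma chi_emb (ℓ : Fin k → ℤ) (x : Fin k → ℝ) :
    chi ℓ (emb x) = Complex.exp (2 * Real.pi * Complex.I * (∑ j, (ℓ j : ℝ) * x j)) := by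
  rw [chi, ContinuousMap.prod_apply]
  rw [Complex.ofReal_sum, Finset.mul_sum, Complex.exp_sum]
  refine Finset.prod_congr rfl fun j _ => ?_
  simp only [ContinuousMap.comp_apply, ContinuousMap.coe_mk, emb]
  rw [fourier_coe_apply]
  push_cast
  norm_num
  ring_nf



lemma chi_zero : chi (0 : Fin k → ℤ) = 1 := by
  ext x
  simp [chi, fourier_apply]

lemma chi_mul (ℓ ℓ' : Fin k → ℤ) : chi ℓ * chi ℓ' = chi (ℓ + ℓ') := by
  ext x
  simp only [chi, ContinuousMap.mul_apply, ContinuousMap.prod_apply, ContinuousMap.comp_apply,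
    ContinuousMap.coe_mk, Pi.add_apply]
  rw [← Finset.prod_mul_distrib]
  exact Finset.prod_congr rfl fun j _ => (fourier_add).symm

lemma chi_star (ℓ : Fin k → ℤ) : star (chi ℓ) = chi (-ℓ) := by
  ext x
  simp only [chi, ContinuousMap.star_apply, ContinuousMap.prod_apply, ContinuousMap.comp_apply,
    ContinuousMap.coe_mk, Pi.neg_apply, Complex.star_def, ← Complex.ofReal_prod]
  rw [map_prod (starRingEnd ℂ)]
  exact Finset.prod_congr rfl fun j _ => (fourier_neg).symm

noncomputable def chiSpan (k : ℕ) : Submodule ℂ C(X k, ℂ) := Submodule.span ℂ (Set.range (chi (k := k)))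

lemma chiSpan_mul_mem : ∀ p ∈ chiSpan k, ∀ q ∈ chiSpan k, p * q ∈ chiSpan k := by
  intro p hp
  induction hp using Submodule.span_induction with
  | mem a ha =>
    intro q hq
    induction hq using Submodule.span_induction with
    | mem b hb =>
      obtain ⟨ℓ, rfl⟩ := ha; obtain ⟨ℓ', rfl⟩ := hb
      rw [chi_mul]
      exact Submodule.subset_span ⟨_, rfl⟩
    | zero => simpa using Submodule.zero_mem _
    | add x y hx hy ihx ihy => rw [mul_add]; exact Submodule.add_mem _ ihx ihy
    | smul c x hx ih => rw [mul_smul_comm]; exact Submodule.smul_mem _ _ ih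
  | zero => intro q hq; simpa using Submodule.zero_mem _
  | add x y hx hy ihx ihy => intro q hq; rw [add_mul]; exact Submodule.add_mem _ (ihx q hq) (ihy q hq)
  | smul c x hx ih => intro q hq; rw [smul_mul_assoc]; exact Submodule.smul_mem _ _ (ih q hq)

lemma chiSpan_star_mem : ∀ p ∈ chiSpan k, star p ∈ chiSpan k := by
  intro p hp
  induction hp using Submodule.span_induction with
  | mem a ha => obtain ⟨ℓ, rfl⟩ := ha; rw [chi_star]; exact Submodule.subset_span ⟨_, rfl⟩
  | zero => simpa using Submodule.zero_mem _
  | add x y hx hy ihx ihy => rw [star_add]; exact Submodule.add_mem _ ihx ihy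
  | smul c x hx ih => rw [star_smul]; exact Submodule.smul_mem _ _ ih

lemma mem_chiSpan_of_mem_adjoin (p : C(X k, ℂ))
    (hp : p ∈ StarAlgebra.adjoin ℂ (Set.range (chi (k := k)))) : p ∈ chiSpan k := by
  induction hp using StarAlgebra.adjoin_induction with
  | mem x hx => exact Submodule.subset_span hx
  | algebraMap r =>
    have : (algebraMap ℂ C(X k, ℂ)) r = r • chi 0 := by rw [chi_zero, Algebra.algebraMap_eq_smul_one]
    rw [this]
    exact Submodule.smul_mem _ _ (Submodule.subset_span ⟨_, rfl⟩)
  | add x y hx hy ihx ihy => exact Submodule.add_mem _ ihx ihy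
  | mul x y hx hy ihx ihy => exact chiSpan_mul_mem _ ihx _ ihy
  | star x hx ih => exact chiSpan_star_mem _ ih



lemma chi_single_apply (j : Fin k) (x : X k) :
    chi (Pi.single j 1) x = toCircle (x j) := by
  rw [chi, ContinuousMap.prod_apply]
  rw [Finset.prod_eq_single j]
  · simp [fourier_apply]
  · intro b _ hb
    simp [Pi.single_apply, hb, fourier_apply]
  · simp

lemma exists_chiSpan_approx (f : C(X k, ℂ)) {δ : ℝ} (hδ : 0 < δ) :
    ∃ p ∈ chiSpan k, ‖f - p‖ < δ := by
  haveI : Fact ((0:ℝ) < 1) := ⟨one_pos⟩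
  have hsep : (StarAlgebra.adjoin ℂ (Set.range (chi (k := k)))).SeparatesPoints := by
    intro x y hxy
    obtain ⟨j, hj⟩ : ∃ j, x j ≠ y j := by
      by_contra h; push_neg at h; exact hxy (funext h)
    refine ⟨_, ⟨chi (Pi.single j 1), StarAlgebra.subset_adjoin ℂ _ ⟨_, rfl⟩, rfl⟩, ?_⟩
    dsimp only
    rw [chi_single_apply, chi_single_apply]
    intro h
    rw [Circle.coe_inj] at h
    exact hj (injective_toCircle one_ne_zero h)
  have htop := ContinuousMap.starSubalgebra_topologicalClosure_eq_top_of_separatesPoints _ hsep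
  have hf : f ∈ (StarAlgebra.adjoin ℂ (Set.range (chi (k := k)))).topologicalClosure := by
    rw [htop]; trivial
  have hf' : f ∈ closure ((StarAlgebra.adjoin ℂ (Set.range (chi (k := k)))) : Set C(X k, ℂ)) := hf
  rw [Metric.mem_closure_iff] at hf'
  obtain ⟨p, hpA, hdist⟩ := hf' δ hδ
  exact ⟨p, mem_chiSpan_of_mem_adjoin p hpA, by rwa [← dist_eq_norm]⟩



noncomputable def Phi (θ : Fin k → ℝ) : ℝ → X k := fun t => emb (fun j => t * θ j)
lemma continuous_Phi (θ : Fin k → ℝ) : Continuous (Phi θ) :=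
  continuous_pi fun j => (AddCircle.continuous_mk' 1).comp (continuous_id.mul continuous_const)
lemma Phi_sub (θ : Fin k → ℝ) (t u : ℝ) : Phi θ t - Phi θ u = Phi θ (t - u) := by
  funext j
  show (↑(t * θ j) - ↑(u * θ j) : AddCircle (1:ℝ)) = ↑((t - u) * θ j)
  rw [show (t - u) * θ j = t * θ j - u * θ j by ring]
  simp


section Analysis

variable (θ : Fin k → ℝ)

lemma cont_comp (f : C(X k, ℂ)) (v : X k) : Continuous fun t => f (Phi θ t - v) :=
  f.continuous.comp ((continuous_Phi θ).sub continuous_const)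

lemma intInt (f : C(X k, ℂ)) (v : X k) (a b : ℝ) :
    IntervalIntegrable (fun t => f (Phi θ t - v)) volume a b :=
  (cont_comp θ f v).intervalIntegrable a b

noncomputable def J (f : C(X k, ℂ)) (v : X k) (T : ℝ) : ℂ :=
  (T : ℂ)⁻¹ * ∫ t in (0:ℝ)..T, f (Phi θ t - v)

lemma J_norm_le {T : ℝ} (hT : 1 ≤ T) (f p : C(X k, ℂ)) (v : X k) :
    ‖J θ f v T - J θ p v T‖ ≤ ‖f - p‖ := by
  have hT0 : 0 < T := lt_of_lt_of_le one_pos hT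
  rw [J, J, ← mul_sub, ← intervalIntegral.integral_sub (intInt θ f v 0 T) (intInt θ p v 0 T)]
  rw [norm_mul]
  have hb : ∀ t ∈ Set.uIoc (0:ℝ) T, ‖f (Phi θ t - v) - p (Phi θ t - v)‖ ≤ ‖f - p‖ := by
    intro t _
    have := ContinuousMap.norm_coe_le_norm (f - p) (Phi θ t - v)
    simpa using this
  have := intervalIntegral.norm_integral_le_of_norm_le_const hb
  calc ‖(T:ℂ)⁻¹‖ * ‖∫ t in (0:ℝ)..T, (f (Phi θ t - v) - p (Phi θ t - v))‖
      ≤ ‖(T:ℂ)⁻¹‖ * (‖f - p‖ * |T - 0|) := by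
        exact mul_le_mul_of_nonneg_left this (norm_nonneg _)
    _ = ‖f - p‖ := by
        rw [norm_inv, Complex.norm_real, Real.norm_eq_abs, sub_zero, abs_of_pos hT0]
        field_simp



end Analysis

noncomputable def W (c : ℝ) (T : ℝ) : ℂ :=
  (T : ℂ)⁻¹ * ∫ t in (0:ℝ)..T, Complex.exp ((2 * π * c : ℝ) * Complex.I * t)

lemma W_zero {T : ℝ} (hT : T ≠ 0) : W 0 T = 1 := by
  simp [W]
  exact inv_mul_cancel₀ (Complex.ofReal_ne_zero.mpr hT)

lemma norm_exp_real_mul_I (r : ℝ) (s : ℝ) :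
    ‖Complex.exp ((r : ℂ) * Complex.I * s)‖ = 1 := by
  rw [show ((r:ℝ):ℂ) * Complex.I * s = ((r * s : ℝ):ℂ) * Complex.I by push_cast; ring]
  rw [Complex.norm_exp_ofReal_mul_I]

lemma W_tendsto {c : ℝ} (hc : c ≠ 0) : Tendsto (W c) atTop (𝓝 0) := by
  have hz : (((2 * π * c : ℝ) : ℂ) * Complex.I : ℂ) ≠ 0 := by
    simp [Complex.ext_iff, Real.pi_ne_zero, hc]
  have hbound : ∀ᶠ T in atTop, ‖W c T‖ ≤ (π * |c|)⁻¹ * T⁻¹ := by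
    filter_upwards [eventually_ge_atTop (1:ℝ)] with T hT
    have hT0 : 0 < T := lt_of_lt_of_le one_pos hT
    have key := integral_exp_mul_complex (a := (0:ℝ)) (b := T) hz
    rw [W, key, norm_mul, norm_div]
    have h1 : ‖Complex.exp (((2 * π * c : ℝ):ℂ) * Complex.I * T) - Complex.exp (((2 * π * c : ℝ):ℂ) * Complex.I * 0)‖ ≤ 2 := by
      refine le_trans (norm_sub_le _ _) ?_
      rw [norm_exp_real_mul_I]; simp; norm_num
    have h2 : ‖(((2 * π * c : ℝ):ℂ) * Complex.I : ℂ)‖ = 2 * π * |c| := by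
      rw [norm_mul, Complex.norm_real, Complex.norm_I, mul_one, Real.norm_eq_abs, abs_mul,
        abs_mul, abs_two, abs_of_pos Real.pi_pos]
    have hD : 0 < 2 * π * |c| := by positivity
    rw [h2, norm_inv, Complex.norm_real, Real.norm_eq_abs, abs_of_pos hT0]
    calc T⁻¹ * (‖Complex.exp (((2 * π * c : ℝ):ℂ) * Complex.I * ↑T) - Complex.exp (((2 * π * c : ℝ):ℂ) * Complex.I * 0)‖ / (2 * π * |c|))
        ≤ T⁻¹ * (2 / (2 * π * |c|)) := by gcongr
      _ = (π * |c|)⁻¹ * T⁻¹ := by field_simp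
  exact squeeze_zero_norm' hbound (by simpa using Tendsto.const_mul ((π * |c|)⁻¹) tendsto_inv_atTop_zero)


section Analysis2

variable (θ : Fin k → ℝ)

lemma J_chi (ℓ : Fin k → ℤ) (a : Fin k → ℝ) (T : ℝ) :
    J θ (chi ℓ) (emb a) T
      = Complex.exp (-(2 * π * Complex.I * (∑ j, (ℓ j : ℝ) * a j)))
        * W (∑ j, (ℓ j : ℝ) * θ j) T := by
  set c : ℝ := ∑ j, (ℓ j : ℝ) * θ j with hc
  set d : ℝ := ∑ j, (ℓ j : ℝ) * a j with hd
  have hpt : ∀ t : ℝ, chi ℓ (Phi θ t - emb a)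
      = Complex.exp (-(2 * π * Complex.I * d)) * Complex.exp ((2 * π * c : ℝ) * Complex.I * t) := by
    intro t
    have h1 : Phi θ t - emb a = emb (fun j => t * θ j - a j) := by
      rw [Phi, emb_sub]; rfl
    rw [h1, chi_emb]
    have h2 : (∑ j, (ℓ j : ℝ) * (t * θ j - a j)) = c * t - d := by
      rw [hc, hd, Finset.sum_mul, ← Finset.sum_sub_distrib]
      exact Finset.sum_congr rfl fun j _ => by ring
    rw [h2, ← Complex.exp_add]
    congr 1
    push_cast
    ring
  rw [J]
  rw [intervalIntegral.integral_congr (g := fun t => Complex.exp (-(2 * π * Complex.I * d)) * Complex.exp ((2 * π * c : ℝ) * Complex.I * t)) (fun t _ => hpt t)]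
  rw [intervalIntegral.integral_const_mul, W]
  ring

lemma J_sum {ι : Type*} (s : Finset ι) (F : ι → C(X k, ℂ)) (v : X k) (T : ℝ) :
    J θ (∑ i ∈ s, F i) v T = ∑ i ∈ s, J θ (F i) v T := by
  rw [J]
  have : (fun t => (∑ i ∈ s, F i) (Phi θ t - v)) = fun t => ∑ i ∈ s, (F i) (Phi θ t - v) := by
    funext t; simp
  rw [intervalIntegral.integral_congr (fun t _ => congrFun this t)]
  rw [intervalIntegral.integral_finset_sum (fun i _ => intInt θ (F i) v 0 T)]
  rw [Finset.mul_sum]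
  rfl

lemma J_smul (c : ℂ) (f : C(X k, ℂ)) (v : X k) (T : ℝ) :
    J θ (c • f) v T = c * J θ f v T := by
  rw [J, J]
  have : (fun t => (c • f) (Phi θ t - v)) = fun t => c * f (Phi θ t - v) := by
    funext t; simp
  rw [intervalIntegral.integral_congr (fun t _ => congrFun this t)]
  rw [intervalIntegral.integral_const_mul]
  ring



variable (α : Fin k → ℝ)


lemma tendsto_J_chi_diff
    (hα : ∀ ℓ : Fin k → ℤ, ∑ j, (ℓ j : ℝ) * θ j = 0 → ∃ n : ℤ, ∑ j, (ℓ j : ℝ) * α j = (n : ℝ))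
    (ℓ : Fin k → ℤ) :
    Tendsto (fun T => J θ (chi ℓ) (emb α) T - J θ (chi ℓ) (emb 0) T) atTop (𝓝 0) := by
  have h0 : (∑ j, (ℓ j : ℝ) * (0 : Fin k → ℝ) j) = 0 := by simp
  by_cases hc : (∑ j, (ℓ j : ℝ) * θ j) = 0
  · obtain ⟨n, hn⟩ := hα ℓ hc
    have : ∀ T : ℝ, J θ (chi ℓ) (emb α) T - J θ (chi ℓ) (emb 0) T = 0 := by
      intro T
      rw [J_chi, J_chi, hn, h0, hc]
      have e1 : Complex.exp (-(2 * ↑π * Complex.I * ((n : ℤ) : ℝ))) = 1 := by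
        rw [show (-(2 * (π:ℂ) * Complex.I * ((n : ℤ) : ℝ)) : ℂ) = ((-n : ℤ) : ℂ) * (2 * π * Complex.I) by push_cast; ring]
        exact Complex.exp_int_mul_two_pi_mul_I (-n)
      rw [e1]
      norm_num
    rw [show (fun T => J θ (chi ℓ) (emb α) T - J θ (chi ℓ) (emb 0) T) = fun _ => (0:ℂ) from funext this]
    exact tendsto_const_nhds
  · have heq : ∀ T : ℝ, J θ (chi ℓ) (emb α) T - J θ (chi ℓ) (emb 0) T
        = (Complex.exp (-(2 * π * Complex.I * (∑ j, (ℓ j : ℝ) * α j))) - Complex.exp (-(2 * π * Complex.I * (0:ℝ)))) * W (∑ j, (ℓ j : ℝ) * θ j) T := by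
      intro T
      rw [J_chi, J_chi, h0]
      ring
    rw [show (fun T => J θ (chi ℓ) (emb α) T - J θ (chi ℓ) (emb 0) T) = _ from funext heq]
    simpa using (W_tendsto hc).const_mul (Complex.exp (-(2 * π * Complex.I * (∑ j, (ℓ j : ℝ) * α j))) - Complex.exp (-(2 * π * Complex.I * (0:ℝ))))



lemma tendsto_J_span_diff
    (hα : ∀ ℓ : Fin k → ℤ, ∑ j, (ℓ j : ℝ) * θ j = 0 → ∃ n : ℤ, ∑ j, (ℓ j : ℝ) * α j = (n : ℝ))
    (p : C(X k, ℂ)) (hp : p ∈ chiSpan k) :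
    Tendsto (fun T => J θ p (emb α) T - J θ p (emb 0) T) atTop (𝓝 0) := by
  rw [chiSpan, Finsupp.mem_span_range_iff_exists_finsupp] at hp
  obtain ⟨cf, hcf⟩ := hp
  have hrep : p = ∑ ℓ ∈ cf.support, cf ℓ • chi ℓ := by rw [← hcf]; rfl
  have heq : ∀ T : ℝ, J θ p (emb α) T - J θ p (emb 0) T
      = ∑ ℓ ∈ cf.support, cf ℓ * (J θ (chi ℓ) (emb α) T - J θ (chi ℓ) (emb 0) T) := by
    intro T
    rw [hrep, J_sum, J_sum, ← Finset.sum_sub_distrib]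
    exact Finset.sum_congr rfl fun ℓ _ => by rw [J_smul, J_smul]; ring
  rw [show (fun T => J θ p (emb α) T - J θ p (emb 0) T) = _ from funext heq]
  have := tendsto_finset_sum cf.support
    (fun ℓ _ => ((tendsto_J_chi_diff θ α hα ℓ).const_mul (cf ℓ)))
  simpa using this



end Analysis2


theorem kron {θ α : Fin k → ℝ}
    (hα : ∀ ℓ : Fin k → ℤ, ∑ j, (ℓ j : ℝ) * θ j = 0 → ∃ n : ℤ, ∑ j, (ℓ j : ℝ) * α j = (n : ℝ))
    {ε : ℝ} (hε : 0 < ε) :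
    ∃ t > (0:ℝ), ∀ j, znorm (t * θ j - α j) < ε := by
  by_contra hcon
  push_neg at hcon
  haveI : Fact ((0:ℝ) < 1) := ⟨one_pos⟩
  set g : C(X k, ℝ) := ⟨fun x => max 0 (1 - (2/ε) * ‖x‖),
    continuous_const.max (continuous_const.sub (continuous_const.mul continuous_norm))⟩ with hgdef
  have hg0 : ∀ x : X k, 0 ≤ g x := fun x => le_max_left _ _
  have hg1 : ∀ x : X k, g x ≤ 1 := by
    intro x
    have h2 : 0 ≤ (2/ε) * ‖x‖ := by positivity
    exact max_le (by norm_num) (by linarith)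
  have hgz : ∀ x : X k, ε ≤ ‖x‖ → g x = 0 := by
    intro x hx
    apply max_eq_left
    have h2 : (2:ℝ) ≤ (2/ε) * ‖x‖ := by
      rw [div_mul_eq_mul_div, le_div_iff₀ hε]; nlinarith
    linarith
  have hgh : ∀ x : X k, ‖x‖ ≤ ε/4 → 1/2 ≤ g x := by
    intro x hx
    refine le_trans ?_ (le_max_right _ _)
    have h2 : (2/ε) * ‖x‖ ≤ 1/2 := by
      rw [div_mul_eq_mul_div, div_le_div_iff₀ hε (by norm_num)]; nlinarith [norm_nonneg x]
    linarith
  set fC : C(X k, ℂ) := ⟨fun x => ((g x : ℝ) : ℂ), Complex.continuous_ofReal.comp g.continuous⟩ with hfCdef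
  have contg : ∀ v : X k, Continuous fun t => g (Phi θ t - v) :=
    fun v => g.continuous.comp ((continuous_Phi θ).sub continuous_const)
  have intg : ∀ (v : X k) (a b : ℝ), IntervalIntegrable (fun t => g (Phi θ t - v)) volume a b :=
    fun v a b => (contg v).intervalIntegrable a b
  have intg0 : ∀ (a b : ℝ), IntervalIntegrable (fun t => g (Phi θ t)) volume a b :=
    fun a b => (g.continuous.comp (continuous_Phi θ)).intervalIntegrable a b
  -- Step A : the α-translated average vanishes identically
  have hzero : ∀ T : ℝ, 0 < T → (∫ t in (0:ℝ)..T, (fC (Phi θ t - emb α))) = 0 := by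
    intro T hT
    rw [intervalIntegral.integral_of_le hT.le]
    rw [MeasureTheory.setIntegral_congr_fun (g := fun _ => (0:ℂ)) measurableSet_Ioc ?_]
    · simp
    · intro t ht
      obtain ⟨j, hj⟩ := hcon t ht.1
      have h1 : Phi θ t - emb α = emb (fun j => t * θ j - α j) := by
        rw [Phi, emb_sub]; rfl
      have h3 : g (emb fun j => t * θ j - α j) = 0 :=
        hgz _ (le_trans hj (by simpa using norm_emb_ge (fun j => t * θ j - α j) j))
      show ((g (Phi θ t - emb α) : ℝ) : ℂ) = 0
      rw [h1, h3, Complex.ofReal_zero]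
  -- Step B : the untranslated complex average tends to zero
  have hB : Tendsto (fun T => J θ fC (emb 0) T) atTop (𝓝 0) := by
    rw [NormedAddCommGroup.tendsto_nhds_zero]
    intro δ hδ
    obtain ⟨p, hpS, hfp⟩ := exists_chiSpan_approx fC (show (0:ℝ) < δ/3 by linarith)
    have hdiff := tendsto_J_span_diff θ α hα p hpS
    rw [NormedAddCommGroup.tendsto_nhds_zero] at hdiff
    filter_upwards [eventually_ge_atTop (1:ℝ), hdiff (δ/3) (by linarith)] with T hT hdT
    have hT0 : (0:ℝ) < T := lt_of_lt_of_le one_pos hT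
    have hJα : J θ fC (emb α) T = 0 := by rw [J, hzero T hT0, mul_zero]
    have e : J θ fC (emb 0) T = (J θ fC (emb 0) T - J θ p (emb 0) T)
        + (J θ p (emb 0) T - J θ p (emb α) T) + (J θ p (emb α) T - J θ fC (emb α) T) := by
      linear_combination hJα
    rw [e]
    have b1 : ‖J θ fC (emb 0) T - J θ p (emb 0) T‖ ≤ ‖fC - p‖ := J_norm_le θ hT fC p (emb 0)
    have b2 : ‖J θ p (emb 0) T - J θ p (emb α) T‖ < δ/3 := by
      rw [show J θ p (emb 0) T - J θ p (emb α) T = -(J θ p (emb α) T - J θ p (emb 0) T) by ring,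
        norm_neg]
      exact hdT
    have b3 : ‖J θ p (emb α) T - J θ fC (emb α) T‖ ≤ ‖fC - p‖ := by
      rw [show (fC - p) = -(p - fC) by ring, norm_neg]
      exact J_norm_le θ hT p fC (emb α)
    calc ‖_ + _ + _‖ ≤ ‖J θ fC (emb 0) T - J θ p (emb 0) T‖
          + ‖J θ p (emb 0) T - J θ p (emb α) T‖ + ‖J θ p (emb α) T - J θ fC (emb α) T‖ :=
        norm_add₃_le
      _ < δ := by linarith
  -- Step C : real untranslated average tends to zero
  have hCeq : ∀ T : ℝ, J θ fC (emb 0) T = ((T⁻¹ * ∫ t in (0:ℝ)..T, g (Phi θ t) : ℝ) : ℂ) := by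
    intro T
    rw [J, emb_zero]
    simp_rw [sub_zero]
    rw [show (fun t => fC (Phi θ t)) = fun t => ((g (Phi θ t) : ℝ) : ℂ) from rfl]
    rw [intervalIntegral.integral_ofReal]
    push_cast
    ring
  have hC : Tendsto (fun T => T⁻¹ * ∫ t in (0:ℝ)..T, g (Phi θ t)) atTop (𝓝 0) := by
    refine squeeze_zero_norm (fun T => ?_) (by simpa using hB.norm)
    exact le_of_eq ((congrArg norm (hCeq T)).trans (Complex.norm_real _)).symm
  -- Step D : translated averages tend to zero
  have hD : ∀ u : ℝ, Tendsto (fun T => T⁻¹ * ∫ t in (0:ℝ)..T, g (Phi θ t - Phi θ u)) atTop (𝓝 0) := by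
    intro u
    have key : ∀ T : ℝ, T⁻¹ * ∫ t in (0:ℝ)..T, g (Phi θ t - Phi θ u)
        = T⁻¹ * (∫ t in (0:ℝ)..T, g (Phi θ t))
          + T⁻¹ * ((∫ t in (-u)..(0:ℝ), g (Phi θ t)) - (∫ t in (T-u)..T, g (Phi θ t))) := by
      intro T
      have heq1 : (∫ t in (0:ℝ)..T, g (Phi θ t - Phi θ u)) = ∫ t in (-u)..(T - u), g (Phi θ t) := by
        rw [show (fun t => g (Phi θ t - Phi θ u)) = fun t => g (Phi θ (t - u)) by
          funext t; rw [Phi_sub]]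
        have h := intervalIntegral.integral_comp_sub_right (a := (0:ℝ)) (b := T)
          (fun t => g (Phi θ t)) u
        rw [h, zero_sub]
      have h1 : (∫ t in (-u)..(0:ℝ), g (Phi θ t)) + (∫ t in (0:ℝ)..(T-u), g (Phi θ t))
          = ∫ t in (-u)..(T-u), g (Phi θ t) :=
        intervalIntegral.integral_add_adjacent_intervals (intg0 (-u) 0) (intg0 0 (T-u))
      have h2 : (∫ t in (0:ℝ)..(T-u), g (Phi θ t)) + (∫ t in (T-u)..T, g (Phi θ t))
          = ∫ t in (0:ℝ)..T, g (Phi θ t) :=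
        intervalIntegral.integral_add_adjacent_intervals (intg0 0 (T-u)) (intg0 (T-u) T)
      rw [heq1]
      linear_combination (T⁻¹ : ℝ) * h2 - (T⁻¹ : ℝ) * h1
    have hgb : ∀ (a b : ℝ), ‖∫ t in a..b, g (Phi θ t)‖ ≤ 1 * |b - a| := by
      intro a b
      refine intervalIntegral.norm_integral_le_of_norm_le_const ?_
      intro x _
      rw [Real.norm_eq_abs, abs_le]
      exact ⟨by linarith [hg0 (Phi θ x)], by linarith [hg1 (Phi θ x)]⟩
    have hb : ∀ᶠ T in atTop, ‖T⁻¹ * ∫ t in (0:ℝ)..T, g (Phi θ t - Phi θ u)‖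
        ≤ ‖T⁻¹ * ∫ t in (0:ℝ)..T, g (Phi θ t)‖ + (2 * |u|) * T⁻¹ := by
      filter_upwards [eventually_ge_atTop (1:ℝ)] with T hT
      have hT0 : (0:ℝ) < T := lt_of_lt_of_le one_pos hT
      rw [key T]
      refine le_trans (norm_add_le _ _) (add_le_add le_rfl ?_)
      rw [Real.norm_eq_abs, abs_mul, abs_inv, abs_of_pos hT0]
      have hA : |∫ t in (-u)..(0:ℝ), g (Phi θ t)| ≤ |u| := by
        have := hgb (-u) 0
        rw [Real.norm_eq_abs] at this
        simpa using this
      have hB2 : |∫ t in (T-u)..T, g (Phi θ t)| ≤ |u| := by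
        have := hgb (T-u) T
        rw [Real.norm_eq_abs] at this
        have e : |T - (T - u)| = |u| := by congr 1; ring
        rw [one_mul, e] at this
        exact this
      have habs : |(∫ t in (-u)..(0:ℝ), g (Phi θ t)) - (∫ t in (T-u)..T, g (Phi θ t))| ≤ 2 * |u| := by
        refine le_trans (abs_sub _ _) ?_
        linarith
      calc T⁻¹ * |(∫ t in (-u)..(0:ℝ), g (Phi θ t)) - (∫ t in (T-u)..T, g (Phi θ t))|
          ≤ T⁻¹ * (2 * |u|) := by gcongr
        _ = (2 * |u|) * T⁻¹ := by ring
    refine squeeze_zero_norm' hb ?_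
    have t1 : Tendsto (fun T : ℝ => ‖T⁻¹ * ∫ t in (0:ℝ)..T, g (Phi θ t)‖) atTop (𝓝 0) := by
      simpa using hC.norm
    have t2 : Tendsto (fun T : ℝ => (2 * |u|) * T⁻¹) atTop (𝓝 0) := by
      simpa using tendsto_inv_atTop_zero.const_mul (2 * |u|)
    simpa using t1.add t2
  -- Step E : covering argument and contradiction
  have hTB : TotallyBounded (Set.range (Phi θ)) :=
    (isCompact_univ.totallyBounded).subset (Set.subset_univ _)
  rw [totallyBounded_iff_subset] at hTB
  obtain ⟨C, hCsub, hCfin, hCcov⟩ := hTB {p : X k × X k | dist p.1 p.2 < ε/4}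
    (Metric.dist_mem_uniformity (by positivity))
  have hrep : ∀ y ∈ C, ∃ u : ℝ, Phi θ u = y := fun y hy => hCsub hy
  set s := hCfin.toFinset with hsdef
  have hlow : ∀ tt : ℝ, (1:ℝ)/2 ≤ ∑ y ∈ s, g (Phi θ tt - y) := by
    intro tt
    have hx : Phi θ tt ∈ ⋃ y ∈ C, {x : X k | (x, y) ∈ {p : X k × X k | dist p.1 p.2 < ε/4}} :=
      hCcov ⟨tt, rfl⟩
    simp only [Set.mem_iUnion, Set.mem_setOf_eq] at hx
    obtain ⟨y, hyC, hxy⟩ := hx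
    have hyS : y ∈ s := hCfin.mem_toFinset.mpr hyC
    have h5 : 1/2 ≤ g (Phi θ tt - y) := by
      refine hgh _ ?_
      rw [← dist_eq_norm]
      exact le_of_lt hxy
    exact le_trans h5 (Finset.single_le_sum (fun y _ => hg0 _) hyS)
  have hsum0 : Tendsto (fun T => ∑ y ∈ s, (T⁻¹ * ∫ t in (0:ℝ)..T, g (Phi θ t - y))) atTop (𝓝 0) := by
    have := tendsto_finset_sum s (f := fun (y : X k) (T : ℝ) => T⁻¹ * ∫ t in (0:ℝ)..T, g (Phi θ t - y))
      (fun y hy => by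
        obtain ⟨u, hu⟩ := hrep y (hCfin.mem_toFinset.mp hy)
        exact hu ▸ hD u)
    simpa using this
  have hlowT : ∀ᶠ T in atTop, (1:ℝ)/2 ≤ ∑ y ∈ s, (T⁻¹ * ∫ t in (0:ℝ)..T, g (Phi θ t - y)) := by
    filter_upwards [eventually_ge_atTop (1:ℝ)] with T hT
    have hT0 : (0:ℝ) < T := lt_of_lt_of_le one_pos hT
    have hsumeq : ∑ y ∈ s, (T⁻¹ * ∫ t in (0:ℝ)..T, g (Phi θ t - y))
        = T⁻¹ * ∫ t in (0:ℝ)..T, (∑ y ∈ s, g (Phi θ t - y)) := by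
      rw [intervalIntegral.integral_finset_sum (fun y _ => intg y 0 T), Finset.mul_sum]
    rw [hsumeq]
    have hintble : IntervalIntegrable (fun t => ∑ y ∈ s, g (Phi θ t - y)) volume 0 T :=
      (continuous_finset_sum s (fun y _ => contg y)).intervalIntegrable 0 T
    have hint : (1/2) * T ≤ ∫ t in (0:ℝ)..T, (∑ y ∈ s, g (Phi θ t - y)) := by
      have hmono := intervalIntegral.integral_mono_on (a := (0:ℝ)) (b := T) (f := fun _ => (1:ℝ)/2)
        (g := fun t => ∑ y ∈ s, g (Phi θ t - y)) hT0.le intervalIntegrable_const hintble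
        (fun x _ => hlow x)
      rw [intervalIntegral.integral_const, smul_eq_mul, sub_zero] at hmono
      linarith
    calc (1:ℝ)/2 = T⁻¹ * ((1/2) * T) := by field_simp
      _ ≤ T⁻¹ * ∫ t in (0:ℝ)..T, (∑ y ∈ s, g (Phi θ t - y)) := by
          exact mul_le_mul_of_nonneg_left hint (inv_nonneg.mpr hT0.le)
  have : (1:ℝ)/2 ≤ 0 := ge_of_tendsto hsum0 hlowT
  linarith


lemma sum_partition (P : Fin s → Finset (Fin k))
    (hdisj : ∀ r r', r ≠ r' → Disjoint (P r) (P r'))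
    (hcover : ∀ j : Fin k, ∃ r, j ∈ P r) {M : Type*} [AddCommMonoid M] (f : Fin k → M) :
    ∑ j, f j = ∑ r, ∑ j ∈ P r, f j := by
  have huniv : (Finset.univ : Finset (Fin k)) = Finset.univ.biUnion P := by
    ext j
    simp only [Finset.mem_univ, true_iff, Finset.mem_biUnion]
    obtain ⟨r, hr⟩ := hcover j
    exact ⟨r, trivial, hr⟩
  rw [huniv, Finset.sum_biUnion]
  intro r _ r' _ hrr'
  exact hdisj r r' hrr'

lemma block_unique (P : Fin s → Finset (Fin k))
    (hdisj : ∀ r r', r ≠ r' → Disjoint (P r) (P r')) {j : Fin k} {r r' : Fin s}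
    (h : j ∈ P r) (h' : j ∈ P r') : r = r' := by
  by_contra hne
  exact Finset.disjoint_left.1 (hdisj r r' hne) h h'


theorem forward_dir {k s : ℕ} (θ : Fin k → ℝ) (P : Fin s → Finset (Fin k))
    (hdisj : ∀ r r', r ≠ r' → Disjoint (P r) (P r'))
    (hcover : ∀ j : Fin k, ∃ r, j ∈ P r)
    (hnd : NonDegenerate θ P) :
    ∃ r₁ r₂ : Fin s, r₁ ≠ r₂ ∧
      ¬ ∃ ℓ : Fin k → ℤ,
        (∑ j, (ℓ j : ℝ) * θ j = 0) ∧
        (∀ r, r ≠ r₁ → r ≠ r₂ → ∑ j ∈ P r, ℓ j = 0) ∧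
        (∑ j ∈ P r₁, ℓ j = -1) ∧ (∑ j ∈ P r₂, ℓ j = 1) := by
  obtain ⟨ρ, ⟨r₁, r₂, hni⟩, happ⟩ := hnd
  refine ⟨r₁, r₂, ?_, ?_⟩
  · rintro rfl
    exact hni 0 (by simp)
  · rintro ⟨ℓ, hθ, hz, h1, h2⟩
    set x := ρ r₂ - ρ r₁ with hx
    have hcover' := hcover
    choose rb hrb using hcover'
    have key : ∀ ε' > (0:ℝ), znorm x < ε' := by
      intro ε' hε'
      set Cb := ∑ j, |(ℓ j : ℝ)| with hCb
      have hCb0 : 0 ≤ Cb := Finset.sum_nonneg fun j _ => abs_nonneg _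
      obtain ⟨t, ht0, happx⟩ := happ (ε' / (Cb + 1)) (by positivity)
      set n : Fin k → ℤ := fun j => round (t * θ j - ρ (rb j)) with hn
      set δ : Fin k → ℝ := fun j => t * θ j - ρ (rb j) - (n j : ℝ) with hδ
      have hδlt : ∀ j, |δ j| < ε' / (Cb + 1) := fun j => happx (rb j) j (hrb j)
      have hL : ∑ j, (ℓ j : ℝ) * (t * θ j) = 0 := by
        calc ∑ j, (ℓ j : ℝ) * (t * θ j) = t * ∑ j, (ℓ j : ℝ) * θ j := by
              rw [Finset.mul_sum]; exact Finset.sum_congr rfl fun j _ => by ring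
          _ = 0 := by rw [hθ, mul_zero]
      have hgroup : ∑ j, (ℓ j : ℝ) * ρ (rb j) = x := by
        rw [sum_partition P hdisj hcover (fun j => (ℓ j : ℝ) * ρ (rb j))]
        have hin : ∀ r, ∑ j ∈ P r, (ℓ j : ℝ) * ρ (rb j) = ((∑ j ∈ P r, ℓ j : ℤ) : ℝ) * ρ r := by
          intro r
          push_cast
          rw [Finset.sum_mul]
          exact Finset.sum_congr rfl fun j hj => by
            rw [block_unique P hdisj (hrb j) hj]
        rw [Finset.sum_congr rfl fun r _ => hin r]
        have hval : ∀ r : Fin s, ((∑ j ∈ P r, ℓ j : ℤ) : ℝ) * ρ r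
            = (if r = r₁ then -ρ r₁ else 0) + (if r = r₂ then ρ r₂ else 0) := by
          intro r
          by_cases hr1 : r = r₁
          · subst hr1
            rw [h1]
            have hr2 : r ≠ r₂ := by rintro rfl; exact absurd h1 (by rw [h2]; norm_num)
            simp [hr2]
          · by_cases hr2 : r = r₂
            · subst hr2
              rw [h2]
              simp [hr1]
            · rw [hz r hr1 hr2]
              simp [hr1, hr2]
        rw [Finset.sum_congr rfl fun r _ => hval r, Finset.sum_add_distrib]
        simp [hx]
        ring
      have hnZ : ∑ j, (ℓ j : ℝ) * (n j : ℝ) = ((∑ j, ℓ j * n j : ℤ) : ℝ) := by push_cast; ring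
      have hid : x + ((∑ j, ℓ j * n j : ℤ) : ℝ) = -(∑ j, (ℓ j : ℝ) * δ j) := by
        have expand : ∑ j, (ℓ j : ℝ) * (t * θ j)
            = (∑ j, (ℓ j : ℝ) * ρ (rb j)) + (∑ j, (ℓ j : ℝ) * (n j : ℝ))
              + ∑ j, (ℓ j : ℝ) * δ j := by
          rw [← Finset.sum_add_distrib, ← Finset.sum_add_distrib]
          refine Finset.sum_congr rfl fun j _ => ?_
          rw [hδ]
          ring
        rw [hL] at expand
        rw [← hgroup, ← hnZ]
        linarith [expand]
      have hsmall : |∑ j, (ℓ j : ℝ) * δ j| < ε' := by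
        have h1' : |∑ j, (ℓ j : ℝ) * δ j| ≤ ∑ j, |(ℓ j : ℝ)| * (ε' / (Cb + 1)) := by
          refine le_trans (Finset.abs_sum_le_sum_abs _ _) (Finset.sum_le_sum fun j _ => ?_)
          rw [abs_mul]
          exact mul_le_mul_of_nonneg_left (le_of_lt (hδlt j)) (abs_nonneg _)
        rw [← Finset.sum_mul] at h1'
        have h2' : Cb * (ε' / (Cb + 1)) < ε' := by
          have hlt : Cb < Cb + 1 := lt_add_one Cb
          have hpos : 0 < ε' / (Cb + 1) := by positivity
          have hmul := mul_lt_mul_of_pos_right hlt hpos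
          have heq : (Cb + 1) * (ε' / (Cb + 1)) = ε' := by field_simp
          linarith
        exact lt_of_le_of_lt h1' h2'
      have hzle : znorm x ≤ |x + ((∑ j, ℓ j * n j : ℤ) : ℝ)| := by
        rw [znorm]
        have := round_le x (-(∑ j, ℓ j * n j))
        simpa [sub_neg_eq_add] using this
      rw [hid] at hzle
      rw [abs_neg] at hzle
      linarith
    have hz0 : znorm x = 0 := by
      by_contra h
      have hpos : 0 < znorm x := lt_of_le_of_ne (abs_nonneg _) (Ne.symm h)
      exact absurd (key (znorm x) hpos) (lt_irrefl _)
    have hxr : x = (round x : ℝ) := by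
      rw [znorm] at hz0
      have := abs_eq_zero.mp hz0
      linarith
    refine hni (-(round x)) ?_
    push_cast
    linarith [hxr, hx]

theorem backward_dir {k s : ℕ} (θ : Fin k → ℝ) (P : Fin s → Finset (Fin k))
    (hdisj : ∀ r r', r ≠ r' → Disjoint (P r) (P r'))
    (hcover : ∀ j : Fin k, ∃ r, j ∈ P r)
    (r₁ r₂ : Fin s) (hr12 : r₁ ≠ r₂)
    (hnol : ¬ ∃ ℓ : Fin k → ℤ,
        (∑ j, (ℓ j : ℝ) * θ j = 0) ∧
        (∀ r, r ≠ r₁ → r ≠ r₂ → ∑ j ∈ P r, ℓ j = 0) ∧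
        (∑ j ∈ P r₁, ℓ j = -1) ∧ (∑ j ∈ P r₂, ℓ j = 1)) :
    NonDegenerate θ P := by
  classical
  -- the subgroup of achievable block-sum vectors
  let M : AddSubgroup (Fin s → ℤ) :=
    { carrier := {m | ∃ ℓ : Fin k → ℤ, (∑ j, (ℓ j : ℝ) * θ j = 0) ∧ ∀ r, ∑ j ∈ P r, ℓ j = m r}
      zero_mem' := ⟨0, by simp, by simp⟩
      add_mem' := by
        rintro a b ⟨ℓ, hℓ, hsum⟩ ⟨ℓ', hℓ', hsum'⟩
        refine ⟨ℓ + ℓ', ?_, ?_⟩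
        · rw [show (fun j => ((ℓ + ℓ') j : ℝ) * θ j) = fun j => (ℓ j : ℝ) * θ j + (ℓ' j : ℝ) * θ j by
            funext j; simp only [Pi.add_apply]; push_cast; ring]
          rw [Finset.sum_add_distrib, hℓ, hℓ']
          ring
        · intro r
          simp only [Pi.add_apply]
          rw [Finset.sum_add_distrib, hsum r, hsum' r]
      neg_mem' := by
        rintro a ⟨ℓ, hℓ, hsum⟩
        refine ⟨-ℓ, ?_, ?_⟩
        · rw [show (fun j => ((-ℓ) j : ℝ) * θ j) = fun j => -((ℓ j : ℝ) * θ j) by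
            funext j; simp only [Pi.neg_apply]; push_cast; ring]
          rw [Finset.sum_neg_distrib, hℓ, neg_zero]
        · intro r
          simp only [Pi.neg_apply]
          rw [Finset.sum_neg_distrib, hsum r] }
  let e : Fin s → ℤ := Pi.single r₂ 1 - Pi.single r₁ 1
  have he_r : ∀ r, e r = (if r = r₂ then 1 else 0) - (if r = r₁ then 1 else 0) := by
    intro r
    simp [e, Pi.single_apply]
  have he : e ∉ M := by
    rintro ⟨ℓ, hℓ, hsum⟩
    refine hnol ⟨ℓ, hℓ, ?_, ?_, ?_⟩
    · intro r hr1' hr2'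
      rw [hsum r, he_r r, if_neg hr2', if_neg hr1']
      norm_num
    · rw [hsum r₁, he_r r₁]
      simp [hr12]
    · rw [hsum r₂, he_r r₂]
      simp [Ne.symm hr12]
  -- character separating e from M
  have hemk : (QuotientAddGroup.mk' M e : (Fin s → ℤ) ⧸ M) ≠ 0 := by
    intro h
    exact he ((QuotientAddGroup.eq_zero_iff e).mp h)
  obtain ⟨c, hc⟩ := CharacterModule.exists_character_apply_ne_zero_of_ne_zero hemk
  let ψ : (Fin s → ℤ) →+ AddCircle (1 : ℚ) := c.comp (QuotientAddGroup.mk' M)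
  have hψM : ∀ m ∈ M, ψ m = 0 := by
    intro m hm
    show c (QuotientAddGroup.mk' M m) = 0
    have h0 : (QuotientAddGroup.mk' M) m = 0 := (QuotientAddGroup.eq_zero_iff m).mpr hm
    rw [h0]
    exact map_zero c
  have hψe : ψ e ≠ 0 := hc
  -- rational representatives
  have hq : ∀ r : Fin s, ∃ q : ℚ, (q : AddCircle (1:ℚ)) = ψ (Pi.single r (1:ℤ)) := by
    intro r
    obtain ⟨q, hq⟩ := QuotientAddGroup.mk_surjective (ψ (Pi.single r (1:ℤ)))
    exact ⟨q, hq⟩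
  choose q hq using hq
  have key : ∀ m : Fin s → ℤ, ((∑ r, (m r : ℚ) * q r : ℚ) : AddCircle (1:ℚ)) = ψ m := by
    intro m
    have hm : m = ∑ r, Pi.single r (m r) := by
      rw [Finset.univ_sum_single]
    have hsingle : ∀ r, Pi.single r (m r) = m r • (Pi.single r (1:ℤ) : Fin s → ℤ) := by
      intro r
      funext j
      by_cases hj : j = r
      · subst hj; simp
      · simp [Pi.single_apply, hj]
    calc ((∑ r, (m r : ℚ) * q r : ℚ) : AddCircle (1:ℚ))
        = ∑ r, (((m r : ℚ) * q r : ℚ) : AddCircle (1:ℚ)) :=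
          map_sum (QuotientAddGroup.mk' (AddSubgroup.zmultiples (1:ℚ))) _ _
      _ = ∑ r, (m r) • ((q r : ℚ) : AddCircle (1:ℚ)) := by
          refine Finset.sum_congr rfl fun r _ => ?_
          rw [show ((m r : ℚ) * q r : ℚ) = m r • (q r : ℚ) by simp [zsmul_eq_mul]]
          exact map_zsmul (QuotientAddGroup.mk' (AddSubgroup.zmultiples (1:ℚ))) _ _
      _ = ∑ r, (m r) • ψ (Pi.single r (1:ℤ)) := by
          refine Finset.sum_congr rfl fun r _ => by rw [hq r]
      _ = ∑ r, ψ (m r • (Pi.single r (1:ℤ) : Fin s → ℤ)) := by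
          refine Finset.sum_congr rfl fun r _ => (map_zsmul ψ _ _).symm
      _ = ψ (∑ r, m r • (Pi.single r (1:ℤ) : Fin s → ℤ)) := (map_sum ψ _ _).symm
      _ = ψ m := by
          congr 1
          rw [show (fun r => m r • (Pi.single r (1:ℤ) : Fin s → ℤ)) = fun r => Pi.single r (m r) by
            funext r; rw [← hsingle r]]
          exact hm.symm
  -- define ρ and conclude
  let ρ : Fin s → ℝ := fun r => ((q r : ℚ) : ℝ)
  have hint : ∀ m ∈ M, ∃ z : ℤ, (∑ r, (m r : ℝ) * ρ r) = (z : ℝ) := by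
    intro m hm
    have h0 : ((∑ r, (m r : ℚ) * q r : ℚ) : AddCircle (1:ℚ)) = 0 := by
      rw [key m]; exact hψM m hm
    rw [AddCircle.coe_eq_zero_iff] at h0
    obtain ⟨z, hz⟩ := h0
    refine ⟨z, ?_⟩
    have hzq : (∑ r, (m r : ℚ) * q r) = (z : ℚ) := by rw [← hz]; simp
    calc ∑ r, (m r : ℝ) * ρ r = ((∑ r, (m r : ℚ) * q r : ℚ) : ℝ) := by push_cast; rfl
      _ = (z : ℝ) := by exact_mod_cast congrArg (fun x : ℚ => (x : ℝ)) hzq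
  have hs_single : ∀ a : Fin s, (∑ r, (((Pi.single a (1:ℤ) : Fin s → ℤ) r : ℤ) : ℚ) * q r) = q a := by
    intro a
    rw [Finset.sum_eq_single a]
    · simp
    · intro b _ hb
      simp [Pi.single_apply, hb]
    · simp
  have heq_e : (∑ r, (e r : ℚ) * q r) = q r₂ - q r₁ := by
    have hterm : ∀ r : Fin s, (e r : ℚ) * q r
        = (((Pi.single r₂ (1:ℤ) : Fin s → ℤ) r : ℤ) : ℚ) * q r - (((Pi.single r₁ (1:ℤ) : Fin s → ℤ) r : ℤ) : ℚ) * q r := by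
      intro r
      have : e r = (Pi.single r₂ (1:ℤ) : Fin s → ℤ) r - (Pi.single r₁ (1:ℤ) : Fin s → ℤ) r := by
        simp [e]
      rw [this]
      push_cast
      ring
    rw [Finset.sum_congr rfl fun r _ => hterm r, Finset.sum_sub_distrib, hs_single, hs_single]
  have hne : ∀ z : ℤ, ρ r₁ - ρ r₂ ≠ (z : ℝ) := by
    intro z hzeq
    apply hψe
    rw [← key e, heq_e]
    rw [AddCircle.coe_eq_zero_iff]
    refine ⟨-z, ?_⟩
    have : (q r₁ : ℝ) - (q r₂ : ℝ) = (z : ℝ) := hzeq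
    have hq' : (q r₁ : ℚ) - q r₂ = (z : ℚ) := by exact_mod_cast this
    rw [zsmul_eq_mul]
    push_cast
    linarith [hq']
  refine ⟨ρ, ⟨r₁, r₂, hne⟩, ?_⟩
  intro ε hε
  have hcover' := hcover
  choose rb hrb using hcover'
  have hα : ∀ ℓ : Fin k → ℤ, ∑ j, (ℓ j : ℝ) * θ j = 0 →
      ∃ n : ℤ, ∑ j, (ℓ j : ℝ) * ρ (rb j) = (n : ℝ) := by
    intro ℓ hℓ
    have hmem : (fun r => ∑ j ∈ P r, ℓ j) ∈ M := ⟨ℓ, hℓ, fun r => rfl⟩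
    obtain ⟨z, hzv⟩ := hint _ hmem
    refine ⟨z, ?_⟩
    rw [sum_partition P hdisj hcover (fun j => (ℓ j : ℝ) * ρ (rb j)), ← hzv]
    refine Finset.sum_congr rfl fun r _ => ?_
    push_cast
    rw [Finset.sum_mul]
    exact Finset.sum_congr rfl fun j hj => by rw [block_unique P hdisj (hrb j) hj]
  obtain ⟨t, ht0, hap⟩ := kron hα hε
  refine ⟨t, ht0, fun r j hj => ?_⟩
  have := hap j
  rwa [block_unique P hdisj (hrb j) hj] at this


end KronAux

theorem stmt_2 {k s : ℕ} (θ : Fin k → ℝ) (P : Fin s → Finset (Fin k))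
    (hdisj : ∀ r r', r ≠ r' → Disjoint (P r) (P r'))
    (hcover : ∀ j : Fin k, ∃ r, j ∈ P r) :
    NonDegenerate θ P ↔
      ∃ r₁ r₂ : Fin s, r₁ ≠ r₂ ∧
        ¬ ∃ ℓ : Fin k → ℤ,
          (∑ j, (ℓ j : ℝ) * θ j = 0) ∧
          (∀ r, r ≠ r₁ → r ≠ r₂ → ∑ j ∈ P r, ℓ j = 0) ∧
          (∑ j ∈ P r₁, ℓ j = -1) ∧ (∑ j ∈ P r₂, ℓ j = 1) := by
  constructor
  · exact KronAux.forward_dir θ P hdisj hcover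
  · rintro ⟨r₁, r₂, hr12, hnol⟩
    exact KronAux.backward_dir θ P hdisj hcover r₁ r₂ hr12 hnol
end

section
/- Let X be a finite index set, K ⊆ X nonempty, and let M ∈ ℂ^{X×X} and H ∈ ℂ^{K×K} be normal matrices with spectral decompositions M = Σ_{i=1}^d θ_i E_i and H = Σ_{j=1}^r ρ_j F_j (the E_i, F_j self-adjoint projections). The following are equivalent: (1) K is H-cospectral in M; (2) H commutes with (M^k)_{K×K} for all k ≥ 0; (3) H commutes with (E_i)_{K×K} for all i; (4) F_j commutes with (E_i)_{K×K} for all i, j; (5) for any eigenvectors v, w of H belonging to different eigenvalues, ⟨(E_i)_{K×K} v, w⟩ = 0 for all i; (6) for each i there is an orthonormal basis of im E_i which, for each j, contains exactly dim{ E_i v̂ : v ∈ im F_j } vectors ψ whose restriction ψ_K is a nonzero element of im F_j, and all remaining basis vectors satisfy ψ_K = 0; (7) for any eigenvectors v, w of H belonging to different eigenvalues, the subspaces span{ M^k v̂ : k ≥ 0 } and span{ M^k ŵ : k ≥ 0 } are orthogonal. -/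
open Matrix Set

variable {X : Type*}

/-- The standard Hermitian inner product `⟨v,w⟩ = v* w`. -/
noncomputable def hermInner {n : Type*} [Fintype n] (v w : n → ℂ) : ℂ :=
  ∑ x, star (v x) * w x

/-- Restriction of a vector on `X` to the coordinates in `K`. -/
def restr (K : Set X) (ψ : X → ℂ) : K → ℂ := fun k => ψ k

/-- Extension of a vector on `K` by zeros to all of `X`. -/
def extz (K : Set X) [DecidablePred (· ∈ K)] (v : K → ℂ) : X → ℂ :=
  fun x => if h : x ∈ K then v ⟨x, h⟩ else 0

/-- The `K × K` submatrix of a matrix indexed by `X`. -/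
def subK (K : Set X) (A : Matrix X X ℂ) : Matrix K K ℂ :=
  A.submatrix (fun k : K => (k : X)) (fun k : K => (k : X))

/-- `K` is `H`-cospectral in `M`: `M` has an orthonormal eigenbasis each of whose members
restricts on `K` either to zero or to an eigenvector of `H`. -/
noncomputable def IsHCospectral [Fintype X] [DecidableEq X] (K : Set X) [DecidablePred (· ∈ K)]
    (M : Matrix X X ℂ) (H : Matrix K K ℂ) : Prop :=
  ∃ ψ : X → (X → ℂ),
    (∀ a b, hermInner (ψ a) (ψ b) = if a = b then 1 else 0) ∧
    (∀ a, ∃ μ : ℂ, M.mulVec (ψ a) = μ • ψ a) ∧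
    (∀ a, restr K (ψ a) = 0 ∨
      (restr K (ψ a) ≠ 0 ∧ ∃ μ : ℂ, H.mulVec (restr K (ψ a)) = μ • restr K (ψ a)))

set_option linter.unusedSectionVars false
set_option maxHeartbeats 1000000

section auxsec
variable [Fintype X] [DecidableEq X] (K : Set X) [DecidablePred (· ∈ K)]

lemma sum_dite_subtype (f : (x : X) → x ∈ K → ℂ) :
    ∑ x : X, (if h : x ∈ K then f x h else 0) = ∑ k : K, f k k.2 := by
  rw [← Finset.sum_filter_of_ne (p := (· ∈ K)) (s := Finset.univ)
      (f := fun x => if h : x ∈ K then f x h else 0) (by intro x _ hx; by_contra hK; exact hx (dif_neg hK))]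
  rw [← Finset.sum_subtype_eq_sum_filter]
  apply Finset.sum_congr
  · ext x; simp
  · intro x _; exact dif_pos x.2

lemma restr_extz (v : K → ℂ) : restr K (extz K v) = v := by
  funext k; simp [restr, extz, k.2]

lemma restr_mulVec_extz (A : Matrix X X ℂ) (v : K → ℂ) :
    restr K (A.mulVec (extz K v)) = (subK K A).mulVec v := by
  funext k
  simp only [restr, subK, Matrix.mulVec, dotProduct, submatrix_apply, extz]
  rw [← sum_dite_subtype K (fun x h => A k x * v ⟨x, h⟩)]
  apply Finset.sum_congr rfl
  intro x _
  split <;> simp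

lemma hermInner_extz_left (v : K → ℂ) (ψ : X → ℂ) :
    hermInner (extz K v) ψ = hermInner v (restr K ψ) := by
  simp only [hermInner, extz, restr]
  rw [← sum_dite_subtype K (fun x h => star (v ⟨x, h⟩) * ψ x)]
  apply Finset.sum_congr rfl
  intro x _
  split <;> simp

lemma subK_conjTranspose (A : Matrix X X ℂ) : subK K Aᴴ = (subK K A)ᴴ := rfl

lemma subK_sum {ι : Type*} (s : Finset ι) (A : ι → Matrix X X ℂ) :
    subK K (∑ i ∈ s, A i) = ∑ i ∈ s, subK K (A i) := by
  funext k1 k2; simp [subK, Matrix.sum_apply]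

lemma subK_smul (c : ℂ) (A : Matrix X X ℂ) : subK K (c • A) = c • subK K A := rfl

lemma vand_kill {d : ℕ} {θ : Fin d → ℂ} (hθ : Function.Injective θ)
    {V : Type*} [AddCommGroup V] [Module ℂ V] (c : Fin d → V)
    (h : ∀ k : ℕ, ∑ i, θ i ^ k • c i = 0) : ∀ i, c i = 0 := by
  intro i
  set W : Matrix (Fin d) (Fin d) ℂ := Matrix.of fun k j => θ j ^ (k : ℕ) with hW
  have hdet : W.det ≠ 0 := by
    have hWt : W = (Matrix.vandermonde θ)ᵀ := by
      funext a b; simp [hW, Matrix.vandermonde]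
    rw [hWt, Matrix.det_transpose, Matrix.det_vandermonde]
    apply Finset.prod_ne_zero_iff.mpr
    intro a _
    apply Finset.prod_ne_zero_iff.mpr
    intro b hb
    have hab : b ≠ a := (Finset.mem_Ioi.mp hb).ne'
    exact sub_ne_zero.mpr (fun he => hab (hθ he))
  have hBW : W⁻¹ * W = 1 := Matrix.nonsing_inv_mul W (isUnit_iff_ne_zero.mpr hdet)
  have hc : c i = ∑ j, (W⁻¹ * W) i j • c j := by
    rw [hBW]; simp [Matrix.one_apply]
  rw [hc]
  simp only [Matrix.mul_apply, Finset.sum_smul, smul_smul]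
  rw [Finset.sum_comm]
  have hz : ∀ k, ∑ j, (W⁻¹ i k * W k j) • c j = 0 := by
    intro k
    calc ∑ j, (W⁻¹ i k * W k j) • c j = W⁻¹ i k • ∑ j, θ j ^ (k : Fin d).1 • c j := by
          rw [Finset.smul_sum]; apply Finset.sum_congr rfl; intro j _
          rw [smul_smul]; rfl
      _ = 0 := by rw [h]; simp
  simp only [hz, Finset.sum_const_zero]

lemma hermInner_eq_inner {n : Type*} [Fintype n] (v w : EuclideanSpace ℂ n) :
    (inner ℂ v w : ℂ) = hermInner v w := by
  simp [hermInner, PiLp.inner_apply, RCLike.inner_apply, mul_comm]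

lemma hermInner_mulVec_left' {n : Type*} [Fintype n] [DecidableEq n] (A : Matrix n n ℂ) (v w : n → ℂ) :
    hermInner (A.mulVec v) w = hermInner v (Aᴴ.mulVec w) := by
  simp only [hermInner, Matrix.mulVec, dotProduct, conjTranspose_apply,
    Finset.mul_sum, Finset.sum_mul, star_sum, star_mul']
  rw [Finset.sum_comm]
  apply Finset.sum_congr rfl; intro x _
  apply Finset.sum_congr rfl; intro y _
  ring_nf

lemma hermInner_conj {n : Type*} [Fintype n] (v w : n → ℂ) :
    hermInner v w = star (hermInner w v) := by
  simp [hermInner, star_sum, mul_comm]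

lemma hermInner_self_eq_zero {n : Type*} [Fintype n] {v : n → ℂ} (h : hermInner v v = 0) :
    v = 0 := by
  have h2 : ∀ x ∈ Finset.univ, Complex.normSq (v x) = 0 := by
    apply Finset.sum_eq_zero_iff_of_nonneg (fun x _ => Complex.normSq_nonneg _) |>.mp
    have := congrArg Complex.re h
    simp only [hermInner, Complex.re_sum, Complex.zero_re] at this
    simpa [Complex.mul_re, Complex.normSq] using this
  funext x
  exact Complex.normSq_eq_zero.mp (h2 x (Finset.mem_univ x))

-- normal matrix: eigenvector of A is eigenvector of Aᴴ with conjugate eigenvalue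
lemma normal_conj_eigen {n : Type*} [Fintype n] [DecidableEq n] {A : Matrix n n ℂ}
    (hA : A * Aᴴ = Aᴴ * A) {u : n → ℂ} {μ : ℂ} (hu : A.mulVec u = μ • u) :
    Aᴴ.mulVec u = (starRingEnd ℂ μ) • u := by
  set B : Matrix n n ℂ := A - μ • 1 with hB
  have hBu : B.mulVec u = 0 := by
    simp [hB, Matrix.sub_mulVec, hu, Matrix.smul_mulVec, Matrix.one_mulVec]
  have hBnormal : B * Bᴴ = Bᴴ * B := by
    simp only [hB, Matrix.conjTranspose_sub, Matrix.conjTranspose_smul,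
      Matrix.conjTranspose_one, sub_mul, mul_sub, hA, Matrix.smul_mul, Matrix.mul_smul,
      Matrix.one_mul, Matrix.mul_one, smul_smul, mul_comm]
    abel
  have key : hermInner (Bᴴ.mulVec u) (Bᴴ.mulVec u) = 0 := by
    rw [hermInner_mulVec_left', Matrix.conjTranspose_conjTranspose, Matrix.mulVec_mulVec,
      hBnormal, ← Matrix.mulVec_mulVec, hBu]
    have : Bᴴ.mulVec (0 : n → ℂ) = 0 := Matrix.mulVec_zero _
    rw [this]
    simp [hermInner]
  have hB0 : Bᴴ.mulVec u = 0 := hermInner_self_eq_zero key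
  have : (Aᴴ - (starRingEnd ℂ μ) • 1).mulVec u = 0 := by
    rw [← hB0]; congr 1
    simp [hB, Matrix.conjTranspose_sub, Matrix.conjTranspose_smul, Matrix.conjTranspose_one]
  have := congrArg (fun v => v + (starRingEnd ℂ μ) • u) this
  simpa [Matrix.sub_mulVec, Matrix.smul_mulVec, Matrix.one_mulVec, sub_add_cancel] using this

lemma hermInner_mulVec_right' {n : Type*} [Fintype n] [DecidableEq n] (A : Matrix n n ℂ) (v w : n → ℂ) :
    hermInner v (A.mulVec w) = hermInner (Aᴴ.mulVec v) w := by
  rw [hermInner_mulVec_left', Matrix.conjTranspose_conjTranspose]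

lemma eq_zero_of_hermInner {n : Type*} [Fintype n] [DecidableEq n] (A : Matrix n n ℂ)
    (h : ∀ v w, hermInner (A.mulVec v) w = 0) : A = 0 := by
  funext k' k
  have h1 := h (Pi.single k 1) (Pi.single k' 1)
  have h2 : A.mulVec (Pi.single k 1) = fun i => A i k := by
    funext i; simp [Matrix.mulVec_single]
  rw [h2] at h1
  simp only [hermInner] at h1
  rw [Finset.sum_eq_single k' (fun b _ hb => by simp [Pi.single_eq_of_ne hb]) (by simp)] at h1
  simp only [Pi.single_eq_same, mul_one, star_eq_zero] at h1
  exact h1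

section spec
variable {n ι : Type*} [Fintype n] [DecidableEq n] [Fintype ι]
  {A : Matrix n n ℂ} {θ : ι → ℂ} {E : ι → Matrix n n ℂ}

lemma spec_mul_proj (hidem : ∀ i, E i * E i = E i) (horth : ∀ i i', i ≠ i' → E i * E i' = 0)
    (hspec : A = ∑ i, θ i • E i) (i : ι) : A * E i = θ i • E i := by
  rw [hspec, Finset.sum_mul]
  rw [Finset.sum_eq_single i]
  · rw [Matrix.smul_mul, hidem]
  · intro b _ hb; rw [Matrix.smul_mul, horth b i hb, smul_zero]
  · intro hb; simp at hb

lemma spec_proj_mul (hidem : ∀ i, E i * E i = E i) (horth : ∀ i i', i ≠ i' → E i * E i' = 0)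
    (hspec : A = ∑ i, θ i • E i) (i : ι) : E i * A = θ i • E i := by
  rw [hspec, Finset.mul_sum]
  rw [Finset.sum_eq_single i]
  · rw [Matrix.mul_smul, hidem]
  · intro b _ hb; rw [Matrix.mul_smul, horth i b (Ne.symm hb), smul_zero]
  · intro hb; simp at hb

lemma spec_pow (hidem : ∀ i, E i * E i = E i) (horth : ∀ i i', i ≠ i' → E i * E i' = 0)
    (hsum : ∑ i, E i = 1) (hspec : A = ∑ i, θ i • E i) :
    ∀ k : ℕ, A ^ k = ∑ i, θ i ^ k • E i := by
  intro k
  induction k with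
  | zero => simp [← hsum]
  | succ k ih =>
    rw [pow_succ, ih, Finset.sum_mul]
    apply Finset.sum_congr rfl
    intro i _
    rw [Matrix.smul_mul, spec_proj_mul hidem horth hspec i, smul_smul, ← pow_succ]

-- eigenvector of A with eigenvalue μ lies in the range of some projection
lemma spec_eigen_mem (hρinj : Function.Injective θ)
    (hidem : ∀ i, E i * E i = E i) (horth : ∀ i i', i ≠ i' → E i * E i' = 0)
    (hsum : ∑ i, E i = 1) (hspec : A = ∑ i, θ i • E i)
    {v : n → ℂ} {μ : ℂ} (hv : v ≠ 0) (hAv : A.mulVec v = μ • v) :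
    ∃ j, μ = θ j ∧ (E j).mulVec v = v ∧ ∀ j', j' ≠ j → (E j').mulVec v = 0 := by
  have hEv : ∀ j, (θ j - μ) • (E j).mulVec v = 0 := by
    intro j
    have h1 : (E j).mulVec (A.mulVec v) = θ j • (E j).mulVec v := by
      rw [Matrix.mulVec_mulVec, spec_proj_mul hidem horth hspec j, Matrix.smul_mulVec]
    have h2 : (E j).mulVec (A.mulVec v) = μ • (E j).mulVec v := by
      rw [hAv, Matrix.mulVec_smul]
    rw [sub_smul, h1.symm.trans h2]
    simp
  have hvsum : ∑ j, (E j).mulVec v = v := by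
    have h1 : (∑ j, E j).mulVec v = ∑ j, (E j).mulVec v := by
      funext x
      simp only [Matrix.mulVec, dotProduct, Matrix.sum_apply, Finset.sum_apply,
        Finset.sum_mul]
      exact Finset.sum_comm
    rw [← h1, hsum, Matrix.one_mulVec]
  by_cases hex : ∃ j, μ = θ j
  · obtain ⟨j, hj⟩ := hex
    have hothers : ∀ j', j' ≠ j → (E j').mulVec v = 0 := by
      intro j' hj'
      have h := hEv j'
      have hne : θ j' - μ ≠ 0 := by
        rw [hj]; exact sub_ne_zero.mpr fun he => hj' (hρinj he)
      exact (smul_eq_zero.mp h).resolve_left hne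
    refine ⟨j, hj, ?_, hothers⟩
    have hs := Finset.sum_eq_single (s := Finset.univ) (f := fun b => (E b).mulVec v) j
      (fun b _ hb => hothers b hb) (by simp)
    conv_rhs => rw [← hvsum, hs]
  · exfalso
    apply hv
    rw [← hvsum]
    apply Finset.sum_eq_zero
    intro j _
    have hne : θ j - μ ≠ 0 := sub_ne_zero.mpr fun he => hex ⟨j, he.symm⟩
    exact (smul_eq_zero.mp (hEv j)).resolve_left hne

end spec

lemma sum_mulVec' {n ι : Type*} [Fintype n] (s : Finset ι) (A : ι → Matrix n n ℂ) (v : n → ℂ) :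
    (∑ i ∈ s, A i).mulVec v = ∑ i ∈ s, (A i).mulVec v := by
  funext x
  simp only [Matrix.mulVec, dotProduct, Matrix.sum_apply, Finset.sum_apply,
    Finset.sum_mul]
  exact Finset.sum_comm

lemma hermInner_sum_right {n ι : Type*} [Fintype n] (v : n → ℂ) (s : Finset ι) (f : ι → n → ℂ) :
    hermInner v (∑ i ∈ s, f i) = ∑ i ∈ s, hermInner v (f i) := by
  simp only [hermInner, Finset.sum_apply, Finset.mul_sum]
  exact Finset.sum_comm

lemma hermInner_smul_right {n : Type*} [Fintype n] (c : ℂ) (v w : n → ℂ) :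
    hermInner v (c • w) = c * hermInner v w := by
  simp [hermInner, Finset.mul_sum, mul_comm, mul_left_comm, mul_assoc]

lemma hermInner_zero_left {n : Type*} [Fintype n] (v : n → ℂ) : hermInner 0 v = 0 := by
  simp [hermInner]

lemma hermInner_zero_right {n : Type*} [Fintype n] (v : n → ℂ) : hermInner v 0 = 0 := by
  simp [hermInner]

end auxsec

section impls

variable [Fintype X] [DecidableEq X] {K : Set X} [DecidablePred (· ∈ K)]
  {M : Matrix X X ℂ} {H : Matrix K K ℂ}
  {d : ℕ} {θ : Fin d → ℂ} {E : Fin d → Matrix X X ℂ}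
  {r : ℕ} {ρ : Fin r → ℂ} {F : Fin r → Matrix K K ℂ}

lemma subK_herm (hEherm : ∀ i, (E i)ᴴ = E i) (i : Fin d) :
    (subK K (E i))ᴴ = subK K (E i) := by
  rw [← subK_conjTranspose, hEherm]

lemma subK_pow (hEidem : ∀ i, E i * E i = E i)
    (hEorth : ∀ i i', i ≠ i' → E i * E i' = 0) (hEsum : ∑ i, E i = 1)
    (hMspec : M = ∑ i, θ i • E i) (k : ℕ) :
    subK K (M ^ k) = ∑ i, θ i ^ k • subK K (E i) := by
  rw [spec_pow hEidem hEorth hEsum hMspec k, subK_sum]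
  apply Finset.sum_congr rfl
  intro i _
  rw [subK_smul]

lemma imp23 (hθ : Function.Injective θ) (hEidem : ∀ i, E i * E i = E i)
    (hEorth : ∀ i i', i ≠ i' → E i * E i' = 0) (hEsum : ∑ i, E i = 1)
    (hMspec : M = ∑ i, θ i • E i)
    (h2 : ∀ k : ℕ, H * subK K (M ^ k) = subK K (M ^ k) * H) :
    ∀ i, H * subK K (E i) = subK K (E i) * H := by
  have key : ∀ k : ℕ, ∑ i, θ i ^ k • (H * subK K (E i) - subK K (E i) * H) = 0 := by
    intro k
    have h := h2 k
    rw [subK_pow hEidem hEorth hEsum hMspec k, Finset.mul_sum, Finset.sum_mul] at h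
    simp only [Matrix.mul_smul, Matrix.smul_mul] at h
    simp only [smul_sub, Finset.sum_sub_distrib, h, sub_self]
  intro i
  have := vand_kill hθ _ key i
  exact sub_eq_zero.mp this

lemma imp34 (hρ : Function.Injective ρ) (hFidem : ∀ j, F j * F j = F j)
    (hForth : ∀ j j', j ≠ j' → F j * F j' = 0) (hFsum : ∑ j, F j = 1)
    (hHspec : H = ∑ j, ρ j • F j)
    (h3 : ∀ i, H * subK K (E i) = subK K (E i) * H) :
    ∀ i j, F j * subK K (E i) = subK K (E i) * F j := by
  intro i j
  have hpow : ∀ k : ℕ, H ^ k * subK K (E i) = subK K (E i) * H ^ k := by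
    intro k
    induction k with
    | zero => simp
    | succ k ih => rw [pow_succ, Matrix.mul_assoc, h3 i, ← Matrix.mul_assoc, ih, Matrix.mul_assoc]
  have key : ∀ k : ℕ, ∑ j, ρ j ^ k • (F j * subK K (E i) - subK K (E i) * F j) = 0 := by
    intro k
    have h := hpow k
    rw [spec_pow hFidem hForth hFsum hHspec k, Finset.mul_sum, Finset.sum_mul] at h
    simp only [Matrix.mul_smul, Matrix.smul_mul] at h
    simp only [smul_sub, Finset.sum_sub_distrib, h, sub_self]
  exact sub_eq_zero.mp (vand_kill hρ _ key j)

lemma imp45 (hρ : Function.Injective ρ) (hFherm : ∀ j, (F j)ᴴ = F j) (hFidem : ∀ j, F j * F j = F j)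
    (hForth : ∀ j j', j ≠ j' → F j * F j' = 0) (hFsum : ∑ j, F j = 1)
    (hHspec : H = ∑ j, ρ j • F j)
    (h4 : ∀ i j, F j * subK K (E i) = subK K (E i) * F j) :
    ∀ (v w : K → ℂ) (μ ν : ℂ), v ≠ 0 → w ≠ 0 →
      H.mulVec v = μ • v → H.mulVec w = ν • w → μ ≠ ν →
      ∀ i, hermInner ((subK K (E i)).mulVec v) w = 0 := by
  intro v w μ ν hv hw hHv hHw hμν i
  obtain ⟨j, hμ, hFjv, _⟩ := spec_eigen_mem hρ hFidem hForth hFsum hHspec hv hHv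
  obtain ⟨j', hν, hFj'w, _⟩ := spec_eigen_mem hρ hFidem hForth hFsum hHspec hw hHw
  have hjj' : j ≠ j' := by
    intro h; subst h; exact hμν (hμ.trans hν.symm)
  calc hermInner ((subK K (E i)).mulVec v) w
      = hermInner ((subK K (E i)).mulVec ((F j).mulVec v)) w := by rw [hFjv]
    _ = hermInner (((subK K (E i)) * F j).mulVec v) w := by rw [Matrix.mulVec_mulVec]
    _ = hermInner (((F j) * subK K (E i)).mulVec v) w := by rw [h4 i j]
    _ = hermInner ((F j).mulVec ((subK K (E i)).mulVec v)) w := by rw [Matrix.mulVec_mulVec]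
    _ = hermInner ((subK K (E i)).mulVec v) ((F j)ᴴ.mulVec w) := by
        rw [hermInner_mulVec_left']
    _ = hermInner ((subK K (E i)).mulVec v) ((F j).mulVec ((F j').mulVec w)) := by
        rw [hFherm j, hFj'w]
    _ = hermInner ((subK K (E i)).mulVec v) ((F j * F j').mulVec w) := by
        rw [Matrix.mulVec_mulVec]
    _ = 0 := by
        rw [hForth j j' hjj', Matrix.zero_mulVec, hermInner_zero_right]


lemma imp54 (hρ : Function.Injective ρ) (hFherm : ∀ j, (F j)ᴴ = F j)
    (hFidem : ∀ j, F j * F j = F j)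
    (hForth : ∀ j j', j ≠ j' → F j * F j' = 0) (hFsum : ∑ j, F j = 1)
    (hHspec : H = ∑ j, ρ j • F j)
    (h5 : ∀ (v w : K → ℂ) (μ ν : ℂ), v ≠ 0 → w ≠ 0 →
      H.mulVec v = μ • v → H.mulVec w = ν • w → μ ≠ ν →
      ∀ i, hermInner ((subK K (E i)).mulVec v) w = 0) :
    ∀ i j, F j * subK K (E i) = subK K (E i) * F j := by
  intro i j
  have key : ∀ j' j'', j' ≠ j'' → F j'' * subK K (E i) * F j' = 0 := by
    intro j' j'' hne
    apply eq_zero_of_hermInner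
    intro v w
    have e1 : (F j'' * subK K (E i) * F j').mulVec v
        = (F j'').mulVec ((subK K (E i)).mulVec ((F j').mulVec v)) := by
      rw [Matrix.mulVec_mulVec, Matrix.mulVec_mulVec, Matrix.mul_assoc]
    rw [e1, hermInner_mulVec_left', hFherm]
    by_cases hv' : (F j').mulVec v = 0
    · rw [hv', Matrix.mulVec_zero]
      simp [hermInner]
    by_cases hw' : (F j'').mulVec w = 0
    · rw [hw', hermInner_zero_right]
    have hev : H.mulVec ((F j').mulVec v) = ρ j' • (F j').mulVec v := by
      rw [Matrix.mulVec_mulVec, spec_mul_proj hFidem hForth hHspec j',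
        Matrix.smul_mulVec]
    have hew : H.mulVec ((F j'').mulVec w) = ρ j'' • (F j'').mulVec w := by
      rw [Matrix.mulVec_mulVec, spec_mul_proj hFidem hForth hHspec j'',
        Matrix.smul_mulVec]
    exact h5 _ _ (ρ j') (ρ j'') hv' hw' hev hew (fun he => hne (hρ he)) i
  have h1 : subK K (E i) * F j = ∑ j'', F j'' * (subK K (E i) * F j) := by
    conv_lhs => rw [← Matrix.one_mul (subK K (E i) * F j), ← hFsum, Finset.sum_mul]
  have h2 : F j * subK K (E i) = ∑ j', (F j * subK K (E i)) * F j' := by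
    conv_lhs => rw [← Matrix.mul_one (F j * subK K (E i)), ← hFsum, Finset.mul_sum]
  rw [h1, h2]
  rw [Finset.sum_eq_single j (fun b _ hb => key b j hb) (by simp),
    Finset.sum_eq_single j (fun b _ hb => by
      rw [← Matrix.mul_assoc]; exact key j b (Ne.symm hb)) (by simp)]
  rw [Matrix.mul_assoc]

lemma key57 (hEherm : ∀ i, (E i)ᴴ = E i) (hEidem : ∀ i, E i * E i = E i)
    (hEorth : ∀ i i', i ≠ i' → E i * E i' = 0) (hEsum : ∑ i, E i = 1)
    (hMspec : M = ∑ i, θ i • E i) (v w : K → ℂ) (a b : ℕ) :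
    hermInner ((M ^ a).mulVec (extz K v)) ((M ^ b).mulVec (extz K w))
      = ∑ i, (starRingEnd ℂ (θ i)) ^ a * θ i ^ b
          * hermInner v ((subK K (E i)).mulVec w) := by
  rw [hermInner_mulVec_left', Matrix.mulVec_mulVec]
  have hconj : (M ^ a)ᴴ = ∑ i, (starRingEnd ℂ (θ i)) ^ a • E i := by
    rw [spec_pow hEidem hEorth hEsum hMspec a]
    rw [Matrix.conjTranspose_sum]
    apply Finset.sum_congr rfl
    intro i _
    rw [Matrix.conjTranspose_smul, hEherm]
    congr 1
    simp
  have hmul : (M ^ a)ᴴ * M ^ b = ∑ i, ((starRingEnd ℂ (θ i)) ^ a * θ i ^ b) • E i := by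
    rw [hconj, spec_pow hEidem hEorth hEsum hMspec b, Finset.sum_mul]
    apply Finset.sum_congr rfl
    intro i _
    rw [Finset.mul_sum, Finset.sum_eq_single i
      (fun b' _ hb => by rw [Matrix.smul_mul, Matrix.mul_smul, hEorth i b' (Ne.symm hb)]; simp)
      (by simp)]
    rw [Matrix.smul_mul, Matrix.mul_smul, hEidem, smul_smul]
  rw [hmul, sum_mulVec', hermInner_sum_right]
  apply Finset.sum_congr rfl
  intro i _
  rw [Matrix.smul_mulVec, hermInner_smul_right]
  congr 1
  rw [hermInner_extz_left, restr_mulVec_extz]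

lemma imp57 (hEherm : ∀ i, (E i)ᴴ = E i) (hEidem : ∀ i, E i * E i = E i)
    (hEorth : ∀ i i', i ≠ i' → E i * E i' = 0) (hEsum : ∑ i, E i = 1)
    (hMspec : M = ∑ i, θ i • E i)
    (h5 : ∀ (v w : K → ℂ) (μ ν : ℂ), v ≠ 0 → w ≠ 0 →
      H.mulVec v = μ • v → H.mulVec w = ν • w → μ ≠ ν →
      ∀ i, hermInner ((subK K (E i)).mulVec v) w = 0) :
    ∀ (v w : K → ℂ) (μ ν : ℂ), v ≠ 0 → w ≠ 0 →
      H.mulVec v = μ • v → H.mulVec w = ν • w → μ ≠ ν →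
      ∀ a b : ℕ,
        hermInner ((M ^ a).mulVec (extz K v)) ((M ^ b).mulVec (extz K w)) = 0 := by
  intro v w μ ν hv hw hHv hHw hμν a b
  rw [key57 hEherm hEidem hEorth hEsum hMspec v w a b]
  apply Finset.sum_eq_zero
  intro i _
  have : hermInner v ((subK K (E i)).mulVec w) = 0 := by
    rw [hermInner_mulVec_right', subK_herm hEherm i]
    exact h5 v w μ ν hv hw hHv hHw hμν i
  rw [this, mul_zero]

lemma imp75 (hθ : Function.Injective θ) (hEherm : ∀ i, (E i)ᴴ = E i)
    (hEidem : ∀ i, E i * E i = E i)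
    (hEorth : ∀ i i', i ≠ i' → E i * E i' = 0) (hEsum : ∑ i, E i = 1)
    (hMspec : M = ∑ i, θ i • E i)
    (h7 : ∀ (v w : K → ℂ) (μ ν : ℂ), v ≠ 0 → w ≠ 0 →
      H.mulVec v = μ • v → H.mulVec w = ν • w → μ ≠ ν →
      ∀ a b : ℕ,
        hermInner ((M ^ a).mulVec (extz K v)) ((M ^ b).mulVec (extz K w)) = 0) :
    ∀ (v w : K → ℂ) (μ ν : ℂ), v ≠ 0 → w ≠ 0 →
      H.mulVec v = μ • v → H.mulVec w = ν • w → μ ≠ ν →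
      ∀ i, hermInner ((subK K (E i)).mulVec v) w = 0 := by
  intro v w μ ν hv hw hHv hHw hμν i
  set c : Fin d → ℂ := fun i => hermInner v ((subK K (E i)).mulVec w) with hc
  have hkill : ∀ k : ℕ, ∑ i, θ i ^ k • c i = 0 := by
    intro k
    have h0 := h7 v w μ ν hv hw hHv hHw hμν 0 k
    rw [key57 hEherm hEidem hEorth hEsum hMspec v w 0 k] at h0
    simpa [smul_eq_mul, hc] using h0
  have := vand_kill hθ c hkill i
  rw [hermInner_mulVec_left', subK_herm hEherm i]
  exact this

lemma imp12 (hHnormal : H * Hᴴ = Hᴴ * H) (h1 : IsHCospectral K M H) :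
    ∀ k : ℕ, H * subK K (M ^ k) = subK K (M ^ k) * H := by
  obtain ⟨ψ, horth, heig, hres⟩ := h1
  choose μf hμ using heig
  set P : Matrix X X ℂ := Matrix.of fun x a => ψ a x with hP
  have hPHP : Pᴴ * P = 1 := by
    funext a b
    simp only [Matrix.mul_apply, Matrix.conjTranspose_apply, hP, Matrix.of_apply,
      Matrix.one_apply]
    have := horth a b
    simp only [hermInner] at this
    exact this
  have hPPH : P * Pᴴ = 1 := mul_eq_one_comm.mp hPHP
  set D : Matrix X X ℂ := Matrix.diagonal μf with hD
  have hMP : M * P = P * D := by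
    funext x a
    have h1 : (M * P) x a = (M.mulVec (ψ a)) x := by
      simp [Matrix.mul_apply, Matrix.mulVec, dotProduct, hP]
    rw [h1, hμ a, hD, Matrix.mul_diagonal]
    simp [hP, mul_comm]
  have hMk : ∀ k : ℕ, M ^ k = P * D ^ k * Pᴴ := by
    intro k
    induction k with
    | zero => simp [hPPH]
    | succ k ih =>
      have hM : M = P * D * Pᴴ := by
        rw [← hMP, Matrix.mul_assoc, hPPH, Matrix.mul_one]
      rw [pow_succ, ih, hM, pow_succ]
      simp only [Matrix.mul_assoc]
      rw [← Matrix.mul_assoc Pᴴ P, hPHP, Matrix.one_mul]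
  have hentry : ∀ (k : ℕ) (x y : X),
      (M ^ k) x y = ∑ a, μf a ^ k * (ψ a x * star (ψ a y)) := by
    intro k x y
    have hPD : P * D ^ k = Matrix.of fun x a => ψ a x * μf a ^ k := by
      funext x' a
      rw [hD, Matrix.diagonal_pow, Matrix.mul_diagonal]
      simp [hP]
    rw [hMk k, hPD]
    simp only [Matrix.mul_apply, Matrix.conjTranspose_apply, hP, Matrix.of_apply]
    apply Finset.sum_congr rfl; intro a _; ring
  have hsubK : ∀ k : ℕ, subK K (M ^ k)
      = ∑ a, μf a ^ k • Matrix.of (fun k1 k2 : K => ψ a k1 * star (ψ a k2)) := by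
    intro k
    funext k1 k2
    rw [subK]
    simp only [Matrix.submatrix_apply, Matrix.sum_apply, Matrix.smul_apply, Matrix.of_apply,
      smul_eq_mul]
    exact hentry k k1 k2
  have hcomm : ∀ a, H * Matrix.of (fun k1 k2 : K => ψ a k1 * star (ψ a k2))
      = Matrix.of (fun k1 k2 : K => ψ a k1 * star (ψ a k2)) * H := by
    intro a
    rcases hres a with hz | ⟨hnz, μ', hμ'⟩
    · have hW : Matrix.of (fun k1 k2 : K => ψ a k1 * star (ψ a k2)) = 0 := by
        funext k1 k2
        have h1 : ψ a k1 = 0 := congrFun hz k1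
        simp [h1]
      rw [hW, Matrix.mul_zero, Matrix.zero_mul]
    · have hconj : Hᴴ.mulVec (restr K (ψ a)) = star μ' • restr K (ψ a) :=
        normal_conj_eigen hHnormal hμ'
      funext k1 k2
      have hL : (H * Matrix.of (fun k1 k2 : K => ψ a k1 * star (ψ a k2))) k1 k2
          = (H.mulVec (restr K (ψ a))) k1 * star (ψ a k2) := by
        simp only [Matrix.mul_apply, Matrix.of_apply, Matrix.mulVec, dotProduct,
          Finset.sum_mul, restr]
        apply Finset.sum_congr rfl; intro x _; ring
      have hR : (Matrix.of (fun k1 k2 : K => ψ a k1 * star (ψ a k2)) * H) k1 k2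
          = ψ a k1 * star ((Hᴴ.mulVec (restr K (ψ a))) k2) := by
        simp only [Matrix.mul_apply, Matrix.of_apply, Matrix.mulVec, dotProduct,
          Matrix.conjTranspose_apply, star_sum, star_mul', star_star, Finset.mul_sum, restr]
        apply Finset.sum_congr rfl; intro x _; ring
      rw [hL, hR, hμ', hconj]
      simp only [Pi.smul_apply, smul_eq_mul, star_mul', star_star, restr]
      ring
  intro k
  rw [hsubK k, Finset.mul_sum, Finset.sum_mul]
  apply Finset.sum_congr rfl
  intro a _
  rw [Matrix.mul_smul, Matrix.smul_mul, hcomm a]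

def extzLin (K : Set X) [DecidablePred (· ∈ K)] : (K → ℂ) →ₗ[ℂ] (X → ℂ) where
  toFun := extz K
  map_add' v w := by funext x; simp only [extz, Pi.add_apply]; split <;> simp
  map_smul' c v := by funext x; simp only [extz, Pi.smul_apply, RingHom.id_apply]; split <;> simp

def restrLin (K : Set X) : (X → ℂ) →ₗ[ℂ] (K → ℂ) where
  toFun := restr K
  map_add' v w := rfl
  map_smul' c v := rfl

lemma herm_proj_extz (A : Matrix X X ℂ) (hherm : Aᴴ = A) (hidem : A * A = A)
    (v : K → ℂ) {z : X → ℂ} (hz : ∃ x, A.mulVec x = z) :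
    hermInner (A.mulVec (extz K v)) z = hermInner v (restr K z) := by
  obtain ⟨x, rfl⟩ := hz
  rw [hermInner_mulVec_left', hherm, Matrix.mulVec_mulVec, hidem, hermInner_extz_left]

lemma span_coe_onb (W : Submodule ℂ (EuclideanSpace ℂ X)) :
    Submodule.span ℂ (Set.range fun t => ((stdOrthonormalBasis ℂ W) t : EuclideanSpace ℂ X))
      = W := by
  have hb := (stdOrthonormalBasis ℂ W).toBasis.span_eq
  have h1 : (Set.range fun t => ((stdOrthonormalBasis ℂ W) t : EuclideanSpace ℂ X))
      = W.subtype '' (Set.range (stdOrthonormalBasis ℂ W).toBasis) := by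
    rw [← Set.range_comp]
    apply congrArg
    funext t
    simp [OrthonormalBasis.coe_toBasis]
  rw [h1, ← Submodule.map_span, hb, Submodule.map_subtype_top]

lemma onb_herm (W : Submodule ℂ (EuclideanSpace ℂ X)) (t s) :
    hermInner ((stdOrthonormalBasis ℂ W) t : EuclideanSpace ℂ X)
        ((stdOrthonormalBasis ℂ W) s : EuclideanSpace ℂ X)
      = if t = s then 1 else 0 := by
  rw [← hermInner_eq_inner, ← Submodule.coe_inner]
  exact orthonormal_iff_ite.mp (stdOrthonormalBasis ℂ W).orthonormal t s

abbrev eucL : (X → ℂ) ≃ₗ[ℂ] EuclideanSpace ℂ X := (WithLp.linearEquiv 2 ℂ (X → ℂ)).symm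

lemma onb_mem' (W : Submodule ℂ (X → ℂ)) (t) :
    WithLp.ofLp ((stdOrthonormalBasis ℂ (W.map (eucL : (X → ℂ) ≃ₗ[ℂ] EuclideanSpace ℂ X).toLinearMap)) t :
      EuclideanSpace ℂ X) ∈ W := by
  have := ((stdOrthonormalBasis ℂ (W.map (eucL : (X → ℂ) ≃ₗ[ℂ] EuclideanSpace ℂ X).toLinearMap)) t).2
  rw [Submodule.mem_map_equiv] at this
  exact this

lemma onb_herm' (W : Submodule ℂ (X → ℂ)) (t s) :
    hermInner (WithLp.ofLp ((stdOrthonormalBasis ℂ (W.map (eucL : (X → ℂ) ≃ₗ[ℂ] EuclideanSpace ℂ X).toLinearMap)) t :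
      EuclideanSpace ℂ X))
      (WithLp.ofLp ((stdOrthonormalBasis ℂ (W.map (eucL : (X → ℂ) ≃ₗ[ℂ] EuclideanSpace ℂ X).toLinearMap)) s :
      EuclideanSpace ℂ X)) = if t = s then 1 else 0 :=
  onb_herm _ t s

lemma span_onb' (W : Submodule ℂ (X → ℂ)) :
    Submodule.span ℂ (Set.range fun t => WithLp.ofLp ((stdOrthonormalBasis ℂ
      (W.map (eucL : (X → ℂ) ≃ₗ[ℂ] EuclideanSpace ℂ X).toLinearMap)) t : EuclideanSpace ℂ X)) = W := by
  have h := span_coe_onb (X := X) (W.map (eucL : (X → ℂ) ≃ₗ[ℂ] EuclideanSpace ℂ X).toLinearMap)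
  have h2 := congrArg (Submodule.map
    ((eucL : (X → ℂ) ≃ₗ[ℂ] EuclideanSpace ℂ X).symm : EuclideanSpace ℂ X →ₗ[ℂ] (X → ℂ))) h
  rw [Submodule.map_span, ← Set.range_comp] at h2
  convert h2 using 1
  · rfl
  · ext x
    simp [Submodule.mem_map_equiv]

lemma imp46 (hEherm : ∀ i, (E i)ᴴ = E i) (hEidem : ∀ i, E i * E i = E i)
    (hFherm : ∀ j, (F j)ᴴ = F j) (hForth : ∀ j j', j ≠ j' → F j * F j' = 0)
    (hFsum : ∑ j, F j = 1)
    (h4 : ∀ i j, F j * subK K (E i) = subK K (E i) * F j) :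
    ∀ i, ∃ (n : ℕ) (ψ : Fin n → (X → ℂ)) (J : Fin n → Option (Fin r)),
      (∀ a b, hermInner (ψ a) (ψ b) = if a = b then 1 else 0) ∧
      (∀ a, ψ a ∈ LinearMap.range (E i).mulVecLin) ∧
      Submodule.span ℂ (Set.range ψ) = LinearMap.range (E i).mulVecLin ∧
      (∀ a, (J a = none → restr K (ψ a) = 0) ∧
        ∀ j, J a = some j →
          restr K (ψ a) ≠ 0 ∧ restr K (ψ a) ∈ LinearMap.range (F j).mulVecLin) ∧
      (∀ j, (Finset.univ.filter (fun a => J a = some j)).card =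
        Module.finrank ℂ (Submodule.span ℂ
          ((fun v : K → ℂ => (E i).mulVec (extz K v)) ''
            (LinearMap.range (F j).mulVecLin : Set (K → ℂ))))) := by
  intro i
  set Φ : (K → ℂ) →ₗ[ℂ] (X → ℂ) := (E i).mulVecLin ∘ₗ extzLin K with hΦ
  have hΦ_apply : ∀ v, Φ v = (E i).mulVec (extz K v) := fun v => rfl
  set L : (X → ℂ) ≃ₗ[ℂ] EuclideanSpace ℂ X := eucL with hL
  set Vi : Submodule ℂ (X → ℂ) := LinearMap.range (E i).mulVecLin with hVi
  set W : Fin r → Submodule ℂ (X → ℂ) :=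
    fun j => (LinearMap.range (F j).mulVecLin).map Φ with hW
  set Z : Submodule ℂ (X → ℂ) := Vi ⊓ LinearMap.ker (restrLin K) with hZ
  -- membership facts
  have hZVi : Z ≤ Vi := inf_le_left
  have hWVi : ∀ j, W j ≤ Vi := by
    rintro j _ ⟨v, _, rfl⟩
    exact ⟨extzLin K v, rfl⟩
  have hmemVi : ∀ z, z ∈ Vi → ∃ x, (E i).mulVec x = z := fun z hz => hz
  -- restr of W j elements
  have hWrestr : ∀ j u, u ∈ W j → restr K u ∈ LinearMap.range (F j).mulVecLin := by
    rintro j _ ⟨_, ⟨y, rfl⟩, rfl⟩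
    refine ⟨(subK K (E i)).mulVec y, ?_⟩
    show (F j).mulVec ((subK K (E i)).mulVec y)
        = restr K ((E i).mulVec (extz K ((F j).mulVec y)))
    rw [restr_mulVec_extz, Matrix.mulVec_mulVec, Matrix.mulVec_mulVec, ← h4 i j]
  have hZrestr : ∀ z, z ∈ Z → restr K z = 0 := fun z hz => hz.2
  -- orthogonality facts
  have hWZ : ∀ j u z, u ∈ W j → z ∈ Z → hermInner u z = 0 := by
    rintro j _ z ⟨v, _, rfl⟩ hz
    show hermInner ((E i).mulVec (extz K v)) z = 0
    rw [herm_proj_extz (E i) (hEherm i) (hEidem i) _ (hmemVi z (hZVi hz)),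
      hZrestr z hz, hermInner_zero_right]
  have hWW : ∀ j j' u u', j ≠ j' → u ∈ W j → u' ∈ W j' → hermInner u u' = 0 := by
    rintro j j' _ _ hjj' ⟨_, ⟨y, rfl⟩, rfl⟩ ⟨_, ⟨y', rfl⟩, rfl⟩
    show hermInner ((E i).mulVec (extz K ((F j).mulVec y)))
        ((E i).mulVec (extz K ((F j').mulVec y'))) = 0
    rw [herm_proj_extz (E i) (hEherm i) (hEidem i) _
        ⟨extz K ((F j').mulVec y'), rfl⟩,
      restr_mulVec_extz, Matrix.mulVec_mulVec, ← h4 i j', ← Matrix.mulVec_mulVec,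
      hermInner_mulVec_right']
    rw [hFherm j', Matrix.mulVec_mulVec, hForth j' j (Ne.symm hjj'), Matrix.zero_mulVec,
      hermInner_zero_left]
  -- index type and vectors
  set m : Option (Fin r) → ℕ := fun o => match o with
    | none => Module.finrank ℂ (Z.map L.toLinearMap)
    | some j => Module.finrank ℂ ((W j).map L.toLinearMap) with hm
  set vec : (Σ o : Option (Fin r), Fin (m o)) → (X → ℂ) := fun p =>
    match p with
    | ⟨none, t⟩ => WithLp.ofLp ((stdOrthonormalBasis ℂ (Z.map L.toLinearMap)) t : EuclideanSpace ℂ X)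
    | ⟨some j, t⟩ => WithLp.ofLp ((stdOrthonormalBasis ℂ ((W j).map L.toLinearMap)) t : EuclideanSpace ℂ X) with hvec
  have hvec_memZ : ∀ t, vec ⟨none, t⟩ ∈ Z := fun t => onb_mem' Z t
  have hvec_memW : ∀ j t, vec ⟨some j, t⟩ ∈ W j := fun j t => onb_mem' (W j) t
  have hvec_mem : ∀ p, vec p ∈ Vi := by
    rintro ⟨o, t⟩
    cases o with
    | none => exact hZVi (hvec_memZ t)
    | some j => exact hWVi j (hvec_memW j t)
  -- orthonormality of vec
  have hvec_on : ∀ p q, hermInner (vec p) (vec q) = if p = q then 1 else 0 := by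
    rintro ⟨o, t⟩ ⟨o', s⟩
    by_cases h : (⟨o, t⟩ : Σ o : Option (Fin r), Fin (m o)) = ⟨o', s⟩
    · rw [if_pos h]
      obtain ⟨rfl, ht⟩ := Sigma.mk.inj_iff.mp h
      have hts : t = s := by exact eq_of_heq ht
      subst hts
      cases o with
      | none => simpa using onb_herm' Z t t
      | some j => simpa using onb_herm' (W j) t t
    · rw [if_neg h]
      rcases eq_or_ne o o' with rfl | ho
      · cases o with
        | none =>
          have hts : t ≠ s := fun hts => h (by rw [hts])
          simpa [hts] using onb_herm' Z t s
        | some j =>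
          have hts : t ≠ s := fun hts => h (by rw [hts])
          simpa [hts] using onb_herm' (W j) t s
      · cases o with
        | none =>
          cases o' with
          | none => exact absurd rfl ho
          | some j' =>
            rw [hermInner_conj, hWZ j' _ _ (hvec_memW j' s) (hvec_memZ t), star_zero]
        | some j =>
          cases o' with
          | none => exact hWZ j _ _ (hvec_memW j t) (hvec_memZ s)
          | some j' =>
            have hjj' : j ≠ j' := fun hjj => ho (by rw [hjj])
            exact hWW j j' _ _ hjj' (hvec_memW j t) (hvec_memW j' s)
  -- span of vec
  have hZspan : Z ≤ Submodule.span ℂ (Set.range vec) := by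
    conv_lhs => rw [← span_onb' Z]
    apply Submodule.span_mono
    rintro _ ⟨t, rfl⟩
    exact ⟨⟨none, t⟩, rfl⟩
  have hWspan : ∀ j, W j ≤ Submodule.span ℂ (Set.range vec) := by
    intro j
    conv_lhs => rw [← span_onb' (W j)]
    apply Submodule.span_mono
    rintro _ ⟨t, rfl⟩
    exact ⟨⟨some j, t⟩, rfl⟩
  have hspan : Submodule.span ℂ (Set.range vec) = Vi := by
    apply le_antisymm
    · rw [Submodule.span_le]
      rintro _ ⟨p, rfl⟩
      exact hvec_mem p
    · set U : Submodule ℂ (X → ℂ) := ⨆ j, W j with hU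
      have hUVi : U ≤ Vi := iSup_le hWVi
      intro ψ hψ
      obtain ⟨y, z, hyU, hzUo, hψeq⟩ : ∃ y z : X → ℂ, y ∈ U ∧
          (∀ u ∈ U, hermInner u z = 0) ∧ ψ = y + z := by
        obtain ⟨y', hyU', z', hzUo', hψeq'⟩ :=
          Submodule.exists_add_mem_mem_orthogonal (K := U.map L.toLinearMap) (L ψ)
        refine ⟨WithLp.ofLp y', WithLp.ofLp z', ?_, ?_, ?_⟩
        · rw [Submodule.mem_map_equiv] at hyU'; exact hyU'
        · intro u hu
          have h1 := (Submodule.mem_orthogonal (U.map L.toLinearMap) z').mp hzUo' (L u)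
            (Submodule.mem_map_of_mem hu)
          rw [hermInner_eq_inner] at h1
          simpa [hL, eucL] using h1
        · have := congrArg WithLp.ofLp hψeq'
          simpa [hL, eucL] using this
      have hzVi : z ∈ Vi := by
        have h2 : y + z ∈ Vi := hψeq ▸ hψ
        exact (Submodule.add_mem_iff_right Vi (hUVi hyU)).mp h2
      have hrestr : restr K z = 0 := by
        have hall : ∀ v : K → ℂ, hermInner v (restr K z) = 0 := by
          intro v
          have hΦU : Φ v ∈ U := by
            have hv : Φ v = ∑ j, Φ ((F j).mulVec v) := by
              rw [← map_sum]
              congr 1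
              rw [← sum_mulVec', hFsum, Matrix.one_mulVec]
            rw [hv]
            apply Submodule.sum_mem
            intro j _
            apply Submodule.mem_iSup_of_mem j
            exact ⟨(F j).mulVec v, ⟨v, rfl⟩, rfl⟩
          have h0 : hermInner (Φ v) z = 0 := hzUo (Φ v) hΦU
          calc hermInner v (restr K z)
              = hermInner ((E i).mulVec (extz K v)) z :=
                (herm_proj_extz (E i) (hEherm i) (hEidem i) v (hmemVi z hzVi)).symm
            _ = 0 := h0
        exact hermInner_self_eq_zero (hall (restr K z))
      have hzZ : z ∈ Z := ⟨hzVi, hrestr⟩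
      rw [hψeq]
      exact Submodule.add_mem _ ((iSup_le hWspan) hyU) (hZspan hzZ)
  -- restr facts for vec
  have hrestr_vec : ∀ p : Σ o : Option (Fin r), Fin (m o),
      (p.1 = none → restr K (vec p) = 0) ∧
      ∀ j, p.1 = some j →
        restr K (vec p) ≠ 0 ∧ restr K (vec p) ∈ LinearMap.range (F j).mulVecLin := by
    rintro ⟨o, t⟩
    constructor
    · intro h
      subst h
      exact hZrestr _ (hvec_memZ t)
    · intro j h
      subst h
      refine ⟨?_, hWrestr j _ (hvec_memW j t)⟩
      intro h0
      have h1 := hvec_on ⟨some j, t⟩ ⟨some j, t⟩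
      rw [if_pos rfl] at h1
      obtain ⟨v, _, hveq⟩ := hvec_memW j t
      rw [← hveq] at h1 h0
      have h2 : hermInner (Φ v) (Φ v) = hermInner v (restr K (Φ v)) :=
        herm_proj_extz (E i) (hEherm i) (hEidem i) v ⟨extz K v, rfl⟩
      have h3 : hermInner v (restr K (Φ v)) = 1 := h2.symm.trans h1
      have h4 : hermInner v (0 : K → ℂ) = 1 := h0 ▸ h3
      rw [hermInner_zero_right] at h4
      exact one_ne_zero h4.symm
  -- span of image equals W j
  have hWj_span : ∀ j, Submodule.span ℂ
      ((fun v : K → ℂ => (E i).mulVec (extz K v)) ''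
        (LinearMap.range (F j).mulVecLin : Set (K → ℂ))) = W j := by
    intro j
    have heq : (fun v : K → ℂ => (E i).mulVec (extz K v)) = (Φ : (K → ℂ) → (X → ℂ)) := rfl
    rw [heq, ← Submodule.map_span, Submodule.span_eq]
  -- assemble
  set e := (Fintype.equivFin (Σ o : Option (Fin r), Fin (m o))).symm with he
  refine ⟨Fintype.card (Σ o : Option (Fin r), Fin (m o)),
    fun a => vec (e a), fun a => (e a).1, ?_, ?_, ?_, ?_, ?_⟩
  · intro a b
    rw [hvec_on]
    exact if_congr (Equiv.apply_eq_iff_eq e) rfl rfl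
  · intro a
    exact hvec_mem (e a)
  · have hr : Set.range (fun a => vec (e a)) = Set.range vec := by
      ext x
      constructor
      · rintro ⟨a, rfl⟩; exact ⟨e a, rfl⟩
      · rintro ⟨p, rfl⟩; exact ⟨e.symm p, congrArg vec (e.apply_symm_apply p)⟩
    rw [hr]
    exact hspan
  · intro a
    exact hrestr_vec (e a)
  · intro j
    rw [hWj_span j]
    have hcard1 : (Finset.univ.filter (fun a => (e a).1 = some j)).card
        = Fintype.card {a // (e a).1 = some j} := (Fintype.card_subtype _).symm
    have e2 : {a // (e a).1 = some j} ≃ {p : Σ o : Option (Fin r), Fin (m o) // p.1 = some j} :=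
      Equiv.subtypeEquiv e (fun a => Iff.rfl)
    have e3 : {p : Σ o : Option (Fin r), Fin (m o) // p.1 = some j} ≃ Fin (m (some j)) :=
      { toFun := fun q => Fin.cast (congrArg m q.2) q.1.2
        invFun := fun t => ⟨⟨some j, t⟩, rfl⟩
        left_inv := by rintro ⟨⟨o, t⟩, h⟩; cases h; rfl
        right_inv := fun t => rfl }
    rw [hcard1, Fintype.card_congr (e2.trans e3), Fintype.card_fin]
    exact LinearEquiv.finrank_map_eq _ _

lemma imp61 (hEherm : ∀ i, (E i)ᴴ = E i) (hEidem : ∀ i, E i * E i = E i)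
    (hEorth : ∀ i i', i ≠ i' → E i * E i' = 0) (hEsum : ∑ i, E i = 1)
    (hMspec : M = ∑ i, θ i • E i)
    (hFidem : ∀ j, F j * F j = F j) (hForth : ∀ j j', j ≠ j' → F j * F j' = 0)
    (hHspec : H = ∑ j, ρ j • F j)
    (h6 : ∀ i, ∃ (n : ℕ) (ψ : Fin n → (X → ℂ)) (J : Fin n → Option (Fin r)),
      (∀ a b, hermInner (ψ a) (ψ b) = if a = b then 1 else 0) ∧
      (∀ a, ψ a ∈ LinearMap.range (E i).mulVecLin) ∧
      Submodule.span ℂ (Set.range ψ) = LinearMap.range (E i).mulVecLin ∧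
      (∀ a, (J a = none → restr K (ψ a) = 0) ∧
        ∀ j, J a = some j →
          restr K (ψ a) ≠ 0 ∧ restr K (ψ a) ∈ LinearMap.range (F j).mulVecLin) ∧
      (∀ j, (Finset.univ.filter (fun a => J a = some j)).card =
        Module.finrank ℂ (Submodule.span ℂ
          ((fun v : K → ℂ => (E i).mulVec (extz K v)) ''
            (LinearMap.range (F j).mulVecLin : Set (K → ℂ)))))) :
    IsHCospectral K M H := by
  choose n ψf Jf hON hMem hSpan hRestr _ using h6
  set vec : (Σ i : Fin d, Fin (n i)) → (X → ℂ) := fun p => ψf p.1 p.2 with hvecdef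
  have hv_on : ∀ p q : Σ i : Fin d, Fin (n i),
      hermInner (vec p) (vec q) = if p = q then 1 else 0 := by
    rintro ⟨i, t⟩ ⟨i', s⟩
    by_cases h : (⟨i, t⟩ : Σ i : Fin d, Fin (n i)) = ⟨i', s⟩
    · rw [if_pos h]
      obtain ⟨rfl, ht⟩ := Sigma.mk.inj_iff.mp h
      have hts : t = s := eq_of_heq ht
      subst hts
      simpa using hON i t t
    · rw [if_neg h]
      rcases eq_or_ne i i' with rfl | hii
      · have hts : t ≠ s := fun hts => h (by rw [hts])
        simpa [hts] using hON i t s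
      · obtain ⟨x, hx⟩ := hMem i t
        obtain ⟨y, hy⟩ := hMem i' s
        show hermInner (ψf i t) (ψf i' s) = 0
        rw [← hx, ← hy]
        show hermInner ((E i).mulVec x) ((E i').mulVec y) = 0
        rw [hermInner_mulVec_left', hEherm, Matrix.mulVec_mulVec, hEorth i i' hii,
          Matrix.zero_mulVec, hermInner_zero_right]
  have hONv : Orthonormal ℂ
      (fun p : Σ i : Fin d, Fin (n i) => (WithLp.equiv 2 (X → ℂ)).symm (vec p)) := by
    rw [orthonormal_iff_ite]
    intro p q
    rw [hermInner_eq_inner]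
    exact hv_on p q
  have hsp : ⊤ ≤ Submodule.span ℂ (Set.range vec) := by
    intro x _
    have hx : x = ∑ i, (E i).mulVec x := by
      rw [← sum_mulVec', hEsum, Matrix.one_mulVec]
    rw [hx]
    apply Submodule.sum_mem
    intro i _
    have h1 : (E i).mulVec x ∈ LinearMap.range (E i).mulVecLin := ⟨x, rfl⟩
    rw [← hSpan i] at h1
    refine Submodule.span_mono ?_ h1
    rintro _ ⟨t, rfl⟩
    exact ⟨⟨i, t⟩, rfl⟩
  have hcard : Fintype.card X = Fintype.card (Σ i : Fin d, Fin (n i)) := by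
    have hb : Module.finrank ℂ (EuclideanSpace ℂ X) = Fintype.card (Σ i : Fin d, Fin (n i)) :=
      Module.finrank_eq_card_basis (Module.Basis.mk hONv.linearIndependent (by
        intro x _
        have : WithLp.ofLp x ∈ Submodule.span ℂ (Set.range vec) := hsp trivial
        have h2 := Submodule.mem_map_of_mem
          (f := ((eucL : (X → ℂ) ≃ₗ[ℂ] EuclideanSpace ℂ X) : (X → ℂ) →ₗ[ℂ] EuclideanSpace ℂ X)) this
        rw [Submodule.map_span, ← Set.range_comp] at h2
        simpa [Function.comp_def, eucL] using h2))
    rw [finrank_euclideanSpace] at hb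
    exact hb
  set e : X ≃ Σ i : Fin d, Fin (n i) := Fintype.equivOfCardEq hcard with he
  refine ⟨fun a => vec (e a), ?_, ?_, ?_⟩
  · intro a b
    have h := hv_on (e a) (e b)
    rwa [if_congr (Equiv.apply_eq_iff_eq e) rfl rfl] at h
  · intro a
    obtain ⟨x, hx⟩ := hMem (e a).1 (e a).2
    refine ⟨θ (e a).1, ?_⟩
    show M.mulVec (ψf (e a).1 (e a).2) = θ (e a).1 • ψf (e a).1 (e a).2
    rw [← hx]
    show M.mulVec ((E (e a).1).mulVec x) = θ (e a).1 • (E (e a).1).mulVec x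
    rw [Matrix.mulVec_mulVec, spec_mul_proj hEidem hEorth hMspec, Matrix.smul_mulVec]
  · intro a
    cases hoption : Jf (e a).1 (e a).2 with
    | none =>
      left
      exact (hRestr _ _).1 hoption
    | some j =>
      right
      obtain ⟨hne, hmem⟩ := (hRestr _ _).2 j hoption
      refine ⟨hne, ρ j, ?_⟩
      obtain ⟨y, hy⟩ := hmem
      show H.mulVec (restr K (ψf (e a).1 (e a).2)) = ρ j • restr K (ψf (e a).1 (e a).2)
      rw [← hy]
      show H.mulVec ((F j).mulVec y) = ρ j • (F j).mulVec y
      rw [Matrix.mulVec_mulVec, spec_mul_proj hFidem hForth hHspec, Matrix.smul_mulVec]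

end impls

theorem stmt_4 {X : Type*} [Fintype X] [DecidableEq X]
    (K : Set X) [DecidablePred (· ∈ K)] (hK : K.Nonempty)
    (M : Matrix X X ℂ) (hMnormal : M * Mᴴ = Mᴴ * M)
    (H : Matrix K K ℂ) (hHnormal : H * Hᴴ = Hᴴ * H)
    -- spectral decomposition of `M`
    (d : ℕ) (θ : Fin d → ℂ) (hθ : Function.Injective θ)
    (E : Fin d → Matrix X X ℂ)
    (hEherm : ∀ i, (E i)ᴴ = E i) (hEidem : ∀ i, E i * E i = E i)
    (hEorth : ∀ i i', i ≠ i' → E i * E i' = 0) (hEsum : ∑ i, E i = 1)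
    (hMspec : M = ∑ i, θ i • E i)
    -- spectral decomposition of `H`
    (r : ℕ) (ρ : Fin r → ℂ) (hρ : Function.Injective ρ)
    (F : Fin r → Matrix K K ℂ)
    (hFherm : ∀ j, (F j)ᴴ = F j) (hFidem : ∀ j, F j * F j = F j)
    (hForth : ∀ j j', j ≠ j' → F j * F j' = 0) (hFsum : ∑ j, F j = 1)
    (hHspec : H = ∑ j, ρ j • F j) :
    List.TFAE
      [ -- (1) `K` is `H`-cospectral in `M`
        IsHCospectral K M H,
        -- (2) `H` commutes with `(M^k)_{K×K}` for all `k`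
        ∀ k : ℕ, H * subK K (M ^ k) = subK K (M ^ k) * H,
        -- (3) `H` commutes with `(E i)_{K×K}`
        ∀ i, H * subK K (E i) = subK K (E i) * H,
        -- (4) `F j` commutes with `(E i)_{K×K}`
        ∀ i j, F j * subK K (E i) = subK K (E i) * F j,
        -- (5) eigenvectors of `H` for different eigenvalues are orthogonal through `(E i)_{K×K}`
        ∀ (v w : K → ℂ) (μ ν : ℂ), v ≠ 0 → w ≠ 0 →
          H.mulVec v = μ • v → H.mulVec w = ν • w → μ ≠ ν →
          ∀ i, hermInner ((subK K (E i)).mulVec v) w = 0,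
        -- (6) adapted orthonormal bases of the eigenspaces `im (E i)`
        ∀ i, ∃ (n : ℕ) (ψ : Fin n → (X → ℂ)) (J : Fin n → Option (Fin r)),
          (∀ a b, hermInner (ψ a) (ψ b) = if a = b then 1 else 0) ∧
          (∀ a, ψ a ∈ LinearMap.range (E i).mulVecLin) ∧
          Submodule.span ℂ (Set.range ψ) = LinearMap.range (E i).mulVecLin ∧
          (∀ a, (J a = none → restr K (ψ a) = 0) ∧
            ∀ j, J a = some j →
              restr K (ψ a) ≠ 0 ∧ restr K (ψ a) ∈ LinearMap.range (F j).mulVecLin) ∧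
          (∀ j, (Finset.univ.filter (fun a => J a = some j)).card =
            Module.finrank ℂ (Submodule.span ℂ
              ((fun v : K → ℂ => (E i).mulVec (extz K v)) ''
                (LinearMap.range (F j).mulVecLin : Set (K → ℂ))))),
        -- (7) Krylov subspaces of eigenvectors of `H` for different eigenvalues are orthogonal
        ∀ (v w : K → ℂ) (μ ν : ℂ), v ≠ 0 → w ≠ 0 →
          H.mulVec v = μ • v → H.mulVec w = ν • w → μ ≠ ν →
          ∀ a b : ℕ,
            hermInner ((M ^ a).mulVec (extz K v)) ((M ^ b).mulVec (extz K w)) = 0 ] := by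
  tfae_have 1 → 2 := imp12 hHnormal
  tfae_have 2 → 3 := imp23 hθ hEidem hEorth hEsum hMspec
  tfae_have 3 → 4 := imp34 hρ hFidem hForth hFsum hHspec
  tfae_have 4 → 5 := imp45 hρ hFherm hFidem hForth hFsum hHspec
  tfae_have 5 → 4 := imp54 hρ hFherm hFidem hForth hFsum hHspec
  tfae_have 5 → 7 := imp57 hEherm hEidem hEorth hEsum hMspec
  tfae_have 7 → 5 := imp75 hθ hEherm hEidem hEorth hEsum hMspec
  tfae_have 4 → 6 := imp46 hEherm hEidem hFherm hForth hFsum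
  tfae_have 6 → 1 := imp61 hEherm hEidem hEorth hEsum hMspec hFidem hForth hHspec
  tfae_finish
end

section
/- Let M ∈ ℂ^{X×X} and H ∈ ℂ^{K×K} be normal matrices with spectral decompositions M = Σ_{i=1}^d θ_i E_i and H = Σ_{j=1}^r ρ_j F_j, and suppose K is H-cospectral in M. Define b_{i,j} = dim{ E_i v̂ : v ∈ im F_j } for 1 ≤ j ≤ r, b_{i,0} = dim{ u ∈ im E_i : u_K = 0 }, and P_j(t) = Π_{i=1}^d (t − θ_i)^{b_{i,j}} for 0 ≤ j ≤ r. Then the characteristic polynomial of M factors as φ(M,t) = Π_{j=0}^r P_j(t). -/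
open Matrix Set

variable {X : Type*}

/-! ### Auxiliary lemmas -/

namespace Herm

open scoped ComplexOrder

variable {n : Type*} [Fintype n]

lemma hermInner_eq_dot (v w : n → ℂ) : hermInner v w = star v ⬝ᵥ w := rfl

/-- `hermInner v ·` as a linear map. -/
noncomputable def hermL (v : n → ℂ) : (n → ℂ) →ₗ[ℂ] ℂ where
  toFun w := hermInner v w
  map_add' w w' := by simp [hermInner, mul_add, Finset.sum_add_distrib]
  map_smul' c w := by
    simp [hermInner, Finset.mul_sum]
    ring_nf
    simp [mul_assoc, mul_comm, mul_left_comm]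

lemma hermL_apply (v w : n → ℂ) : hermL v w = hermInner v w := rfl

lemma hermInner_conj (v w : n → ℂ) : hermInner v w = star (hermInner w v) := by
  simp [hermInner, mul_comm]

lemma hermInner_self_eq_zero {v : n → ℂ} (h : hermInner v v = 0) : v = 0 := by
  have h2 : ∑ x, Complex.normSq (v x) = 0 := by
    have : hermInner v v = ((∑ x, Complex.normSq (v x) : ℝ) : ℂ) := by
      simp [hermInner, Complex.star_def, mul_comm, Complex.mul_conj]
    rw [this] at h
    exact_mod_cast h
  funext x
  have := (Finset.sum_eq_zero_iff_of_nonneg (fun i _ => Complex.normSq_nonneg (v i))).mp h2 x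
    (Finset.mem_univ x)
  simpa using Complex.normSq_eq_zero.mp this

lemma hermInner_mulVec {m : Type*} [Fintype m] (A : Matrix n m ℂ) (u : n → ℂ) (x : m → ℂ) :
    hermInner u (A *ᵥ x) = hermInner (Aᴴ *ᵥ u) x := by
  rw [hermInner_eq_dot, hermInner_eq_dot, Matrix.star_mulVec, Matrix.conjTranspose_conjTranspose,
    Matrix.dotProduct_mulVec]

/-- orthogonality extends to spans -/
lemma span_orth {S T : Set (n → ℂ)} (h : ∀ v ∈ S, ∀ u ∈ T, hermInner v u = 0) :
    ∀ v ∈ Submodule.span ℂ S, ∀ u ∈ Submodule.span ℂ T, hermInner v u = 0 := by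
  have step1 : ∀ v ∈ S, ∀ u ∈ Submodule.span ℂ T, hermInner v u = 0 := by
    intro v hv u hu
    have : Submodule.span ℂ T ≤ LinearMap.ker (hermL v) := by
      rw [Submodule.span_le]; intro u hu; exact h v hv u hu
    exact this hu
  intro v hv u hu
  have : Submodule.span ℂ S ≤ LinearMap.ker (hermL u) := by
    rw [Submodule.span_le]
    intro x hx
    have hx0 : hermInner x u = 0 := step1 x hx u hu
    have : hermInner u x = 0 := by rw [hermInner_conj u x, hx0, star_zero]
    exact this
  have h0 : hermInner u v = 0 := this hv
  rw [hermInner_conj v u, h0, star_zero]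

/-- dimension of an orthogonal sup of submodules -/
lemma finrank_biSup_orth {r : ℕ} (V : Fin r → Submodule ℂ (n → ℂ))
    (horth : ∀ j j', j ≠ j' → ∀ v ∈ V j, ∀ u ∈ V j', hermInner v u = 0) :
    Module.finrank ℂ ↥(⨆ j, V j) = ∑ j, Module.finrank ℂ ↥(V j) := by
  have key : ∀ s : Finset (Fin r),
      Module.finrank ℂ ↥(⨆ j ∈ s, V j) = ∑ j ∈ s, Module.finrank ℂ ↥(V j) := by
    intro s
    induction s using Finset.induction_on with
    | empty => simp
    | @insert j s' hj ih =>
      have hdisj : (V j) ⊓ (⨆ j' ∈ s', V j') = ⊥ := by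
        rw [Submodule.eq_bot_iff]
        rintro x ⟨hx1, hx2⟩
        have hle : (⨆ j' ∈ s', V j') ≤ LinearMap.ker (hermL x) := by
          apply iSup_le; intro j'; apply iSup_le; intro hj'
          intro u hu
          exact horth j j' (by rintro rfl; exact hj hj') x hx1 u hu
        exact hermInner_self_eq_zero (hle hx2)
      have := Submodule.finrank_sup_add_finrank_inf_eq (V j) (⨆ j' ∈ s', V j')
      rw [hdisj, finrank_bot, add_zero] at this
      rw [Finset.iSup_insert, Finset.sum_insert hj, this, ih]
  have h2 : (⨆ j, V j) = ⨆ j ∈ Finset.univ, V j := by simp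
  rw [h2, key Finset.univ]

section ON

variable {Y : Type*} [Fintype Y] [DecidableEq Y] [Nonempty Y] {ψ : Y → (Y → ℂ)}
  (hON : ∀ a b, hermInner (ψ a) (ψ b) = if a = b then 1 else 0)

include hON

omit hON in
lemma herm_sum (v : Y → ℂ) (c : Y → ℂ) (u : Y → (Y → ℂ)) :
    hermInner v (∑ a, c a • u a) = ∑ a, c a * hermInner v (u a) := by
  rw [← hermL_apply, map_sum]
  simp only [_root_.map_smul, smul_eq_mul, hermL_apply]

lemma on_li : LinearIndependent ℂ ψ := by
  rw [Fintype.linearIndependent_iff]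
  intro g hg b
  have : hermInner (ψ b) (∑ a, g a • ψ a) = g b := by
    rw [← hermL_apply, map_sum]
    simp only [_root_.map_smul, smul_eq_mul, hermL_apply, hON]
    simp
  rw [hg] at this
  simpa [hermInner] using this.symm

/-- the orthonormal family as a basis -/
noncomputable def onBasis : Module.Basis Y ℂ (Y → ℂ) :=
  basisOfLinearIndependentOfCardEqFinrank (on_li hON)
    (by simp [Module.finrank_fintype_fun_eq_card])

lemma onBasis_eq : ⇑(onBasis hON) = ψ :=
  coe_basisOfLinearIndependentOfCardEqFinrank _ _

lemma on_expand (u : Y → ℂ) : ∑ a, hermInner (ψ a) u • ψ a = u := by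
  have hrep := (onBasis hON).sum_repr u
  rw [onBasis_eq] at hrep
  have hco : ∀ b, hermInner (ψ b) u = (onBasis hON).repr u b := by
    intro b
    conv_lhs => rw [← hrep]
    rw [← hermL_apply, map_sum]
    simp only [_root_.map_smul, smul_eq_mul, hermL_apply, hON]
    simp
  calc ∑ a, hermInner (ψ a) u • ψ a = ∑ a, (onBasis hON).repr u a • ψ a := by
        simp_rw [hco]
    _ = u := hrep

end ON

/-- classification of eigenvectors by spectral projections -/
lemma classify {m : Type*} [Fintype m] [DecidableEq m] {d : ℕ} {θ : Fin d → ℂ}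
    (hθ : Function.Injective θ)
    {E : Fin d → Matrix m m ℂ}
    (hEidem : ∀ i, E i * E i = E i)
    (hEorth : ∀ i i', i ≠ i' → E i * E i' = 0) (hEsum : ∑ i, E i = 1)
    {v : m → ℂ} (hv : v ≠ 0) {μ : ℂ} (hμ : (∑ i, θ i • E i) *ᵥ v = μ • v) :
    ∃ i, E i *ᵥ v = v ∧ (∀ i', i' ≠ i → E i' *ᵥ v = 0) ∧ μ = θ i := by
  have hproj : ∀ i, θ i • (E i *ᵥ v) = μ • (E i *ᵥ v) := by
    intro i
    have h1 : E i *ᵥ ((∑ k, θ k • E k) *ᵥ v) = E i *ᵥ (μ • v) := by rw [hμ]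
    rw [Matrix.mulVec_mulVec, Matrix.mul_sum] at h1
    have h2 : ∑ k, E i * (θ k • E k) = θ i • E i := by
      rw [Finset.sum_eq_single i]
      · rw [Matrix.mul_smul, hEidem]
      · intro k _ hk
        rw [Matrix.mul_smul, hEorth i k (Ne.symm hk), smul_zero]
      · simp
    rw [h2, Matrix.smul_mulVec, Matrix.mulVec_smul] at h1
    exact h1
  have hsumv : ∑ i, E i *ᵥ v = v := by
    funext x
    calc (∑ i, E i *ᵥ v) x = ∑ i, ∑ k, E i x k * v k := by
          simp [Matrix.mulVec, dotProduct]
      _ = ∑ k, (∑ i, E i x k) * v k := by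
          rw [Finset.sum_comm]; simp [Finset.sum_mul]
      _ = ∑ k, (1 : Matrix m m ℂ) x k * v k := by
          congr 1; funext k; congr 1
          rw [← hEsum]; simp [Matrix.sum_apply]
      _ = v x := by
          have := congrFun (Matrix.one_mulVec v) x
          simpa [Matrix.mulVec, dotProduct] using this
  have hex : ∃ i, E i *ᵥ v ≠ 0 := by
    by_contra h
    push_neg at h
    apply hv
    rw [← hsumv]
    simp [h]
  obtain ⟨i, hi⟩ := hex
  have hμθ : μ = θ i := by
    have := hproj i
    have h3 : (θ i - μ) • (E i *ᵥ v) = 0 := by rw [sub_smul, this, sub_self]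
    rcases smul_eq_zero.mp h3 with h | h
    · exact (sub_eq_zero.mp h).symm
    · exact absurd h hi
  have hzero : ∀ i', i' ≠ i → E i' *ᵥ v = 0 := by
    intro i' hne
    have := hproj i'
    rw [hμθ] at this
    have h3 : (θ i' - θ i) • (E i' *ᵥ v) = 0 := by rw [sub_smul, this, sub_self]
    rcases smul_eq_zero.mp h3 with h | h
    · exact absurd (hθ (sub_eq_zero.mp h)) hne
    · exact h
  refine ⟨i, ?_, hzero, hμθ⟩
  conv_rhs => rw [← hsumv]
  exact (Finset.sum_eq_single i (fun k _ hk => hzero k hk) (by simp)).symm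

/-- linear combination map -/
noncomputable def lc {m : Type*} [Fintype m] {V' : Type*} [AddCommGroup V'] [Module ℂ V']
    (ψv : m → V') : (m → ℂ) →ₗ[ℂ] V' where
  toFun c := ∑ a, c a • ψv a
  map_add' c c' := by simp [add_smul, Finset.sum_add_distrib]
  map_smul' r c := by simp [smul_smul, Finset.smul_sum]

lemma gram_rank {m : Type*} [Fintype m] [DecidableEq m]
    {V' : Type*} [AddCommGroup V'] [Module ℂ V']
    (w : m → (n → ℂ)) (ψv : m → V') (hli : LinearIndependent ℂ ψv)
    (q : Submodule ℂ (n → ℂ)) (π : (n → ℂ) →ₗ[ℂ] (n → ℂ))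
    (hπq : ∀ v, π v ∈ q) (hπw : ∀ a v, hermInner (w a) (π v) = hermInner (w a) v) :
    Module.finrank ℂ ↥(Submodule.span ℂ
        ((fun v => ∑ a, hermInner (w a) v • ψv a) '' (q : Set (n → ℂ)))) =
      Module.finrank ℂ ↥(Submodule.span ℂ (Set.range w)) := by
  classical
  set W : Matrix m n ℂ := fun a k => star (w a k) with hW
  have hWv : ∀ (v : n → ℂ) a, (W *ᵥ v) a = hermInner (w a) v := fun v a => rfl
  set L : (m → ℂ) →ₗ[ℂ] V' := lc ψv with hL
  have hLinj : Function.Injective L := by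
    rw [← LinearMap.ker_eq_bot]
    rw [LinearMap.ker_eq_bot']
    intro c hc
    funext a
    exact Fintype.linearIndependent_iff.mp hli c hc a
  have himg : ((fun v => ∑ a, hermInner (w a) v • ψv a) '' (q : Set (n → ℂ)))
      = ⇑(L ∘ₗ W.mulVecLin) '' (q : Set (n → ℂ)) := by
    apply Set.image_congr
    intro v _
    simp only [LinearMap.comp_apply, Matrix.mulVecLin_apply, hL, lc]
    rfl
  rw [himg, ← Submodule.map_coe, Submodule.span_eq, Submodule.map_comp]
  have hmapC : Submodule.map W.mulVecLin q = LinearMap.range W.mulVecLin := by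
    apply le_antisymm (LinearMap.map_le_range)
    rintro y ⟨v, rfl⟩
    refine Submodule.mem_map.mpr ⟨π v, hπq v, ?_⟩
    simp only [Matrix.mulVecLin_apply]
    funext a
    rw [hWv, hWv, hπw]
  rw [hmapC]
  have h1 : Module.finrank ℂ ↥(Submodule.map L (LinearMap.range W.mulVecLin))
      = Module.finrank ℂ ↥(LinearMap.range W.mulVecLin) :=
    ((LinearMap.range W.mulVecLin).equivMapOfInjective L hLinj).finrank_eq.symm
  rw [h1]
  have h2 : Module.finrank ℂ ↥(LinearMap.range W.mulVecLin) = W.rank := rfl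
  rw [h2, ← Matrix.rank_conjTranspose, Matrix.rank, Matrix.range_mulVecLin]
  have hWt : Wᴴ.col = w := by
    funext a k
    show star (star (w a k)) = w a k
    exact star_star _
  rw [hWt]

open Polynomial in
lemma charpoly_diag {ν : Type*} [Fintype ν] [DecidableEq ν] (v : ν → ℂ) :
    (Matrix.diagonal v).charpoly = ∏ i, (Polynomial.X - C (v i)) := by
  have h : charmatrix (Matrix.diagonal v) = Matrix.diagonal (fun i => (X : ℂ[X]) - C (v i)) := by
    ext i j
    by_cases hij : i = j
    · subst hij
      rw [charmatrix_apply_eq, Matrix.diagonal_apply_eq, Matrix.diagonal_apply_eq]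
    · rw [charmatrix_apply_ne _ _ _ hij, Matrix.diagonal_apply_ne _ hij,
        Matrix.diagonal_apply_ne _ hij, map_zero, neg_zero]
  rw [Matrix.charpoly, h, Matrix.det_diagonal]

open Polynomial in
lemma charpoly_of_basis {Y : Type*} [Fintype Y] [DecidableEq Y]
    (M : Matrix Y Y ℂ) (bψ : Module.Basis Y ℂ (Y → ℂ)) (μ : Y → ℂ)
    (heig : ∀ a, M *ᵥ (bψ a) = μ a • bψ a) :
    M.charpoly = ∏ a, (Polynomial.X - C (μ a)) := by
  have h1 : M.charpoly = (M.mulVecLin).charpoly := by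
    conv_lhs => rw [← LinearMap.toMatrix'_toLin' M]
    rw [← Matrix.toLin'_apply' M] at *
    rw [← LinearMap.toMatrix_eq_toMatrix']
    exact LinearMap.charpoly_toMatrix _ _
  have h2 : LinearMap.toMatrix bψ bψ (M.mulVecLin) = Matrix.diagonal μ := by
    ext a a'
    rw [LinearMap.toMatrix_apply, Matrix.mulVecLin_apply, heig a', _root_.map_smul,
      bψ.repr_self]
    by_cases h : a = a'
    · subst h; simp
    · simp [Finsupp.single_apply, Ne.symm h, h, Matrix.diagonal_apply_ne _ h]
  rw [h1, ← LinearMap.charpoly_toMatrix (M.mulVecLin) bψ, h2, charpoly_diag]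

end Herm

set_option maxHeartbeats 1000000 in
set_option synthInstance.maxHeartbeats 200000 in
open Polynomial in
theorem stmt_5 {X : Type*} [Fintype X] [DecidableEq X]
    (K : Set X) [DecidablePred (· ∈ K)] (hK : K.Nonempty)
    (M : Matrix X X ℂ) (hMnormal : M * Mᴴ = Mᴴ * M)
    (H : Matrix K K ℂ) (hHnormal : H * Hᴴ = Hᴴ * H)
    (d : ℕ) (θ : Fin d → ℂ) (hθ : Function.Injective θ)
    (E : Fin d → Matrix X X ℂ)
    (hEherm : ∀ i, (E i)ᴴ = E i) (hEidem : ∀ i, E i * E i = E i)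
    (hEorth : ∀ i i', i ≠ i' → E i * E i' = 0) (hEsum : ∑ i, E i = 1)
    (hMspec : M = ∑ i, θ i • E i)
    (r : ℕ) (ρ : Fin r → ℂ) (hρ : Function.Injective ρ)
    (F : Fin r → Matrix K K ℂ)
    (hFherm : ∀ j, (F j)ᴴ = F j) (hFidem : ∀ j, F j * F j = F j)
    (hForth : ∀ j j', j ≠ j' → F j * F j' = 0) (hFsum : ∑ j, F j = 1)
    (hHspec : H = ∑ j, ρ j • F j)
    (hcosp : IsHCospectral K M H)
    -- `b i j = dim { E_i v̂ : v ∈ im F_j }` and `b0 i = dim { u ∈ im E_i : u_K = 0 }`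
    (b : Fin d → Fin r → ℕ)
    (hb : ∀ i j, b i j = Module.finrank ℂ (Submodule.span ℂ
      ((fun v : K → ℂ => (E i).mulVec (extz K v)) ''
        (LinearMap.range (F j).mulVecLin : Set (K → ℂ)))))
    (b0 : Fin d → ℕ)
    (hb0 : ∀ i, b0 i = Module.finrank ℂ (Submodule.span ℂ
      {u : X → ℂ | u ∈ LinearMap.range (E i).mulVecLin ∧ restr K u = 0})) :
    M.charpoly =
      (∏ i, (Polynomial.X - Polynomial.C (θ i)) ^ (b0 i)) *
        ∏ j, ∏ i, (Polynomial.X - Polynomial.C (θ i)) ^ (b i j) := by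
  classical
  obtain ⟨k0, hk0⟩ := hK
  haveI : Nonempty X := ⟨k0⟩
  obtain ⟨ψ, hON, hMeig, hKalt⟩ := hcosp
  -- basic facts about ψ
  have hψ0 : ∀ a, ψ a ≠ 0 := by
    intro a h
    have h1 := hON a a
    rw [h, if_pos rfl] at h1
    simp [hermInner] at h1
  have li : LinearIndependent ℂ ψ := Herm.on_li hON
  -- the M-classification
  have hMψ : ∀ a, ∃ i, E i *ᵥ ψ a = ψ a ∧ (∀ i', i' ≠ i → E i' *ᵥ ψ a = 0) ∧
      M *ᵥ ψ a = θ i • ψ a := by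
    intro a
    obtain ⟨μ, hμ⟩ := hMeig a
    have hμ' : (∑ i, θ i • E i) *ᵥ ψ a = μ • ψ a := by rw [← hMspec]; exact hμ
    obtain ⟨i, h1, h2, h3⟩ := Herm.classify hθ hEidem hEorth hEsum (hψ0 a) hμ'
    exact ⟨i, h1, h2, by rw [hμ, h3]⟩
  choose ι hι1 hι2 hι3 using hMψ
  -- r is positive
  haveI : Nonempty (Fin r) := by
    have hrne : r ≠ 0 := by
      intro hr
      subst hr
      have h0 : (0 : Matrix K K ℂ) = 1 := by simpa using hFsum
      have := congrFun (congrFun h0 ⟨k0, hk0⟩) ⟨k0, hk0⟩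
      simp [Matrix.one_apply_eq] at this
    exact ⟨⟨0, Nat.pos_of_ne_zero hrne⟩⟩
  -- the H-classification
  set w : X → (K → ℂ) := fun a => restr K (ψ a) with hwdef
  have hHψ : ∀ a, ∃ j : Fin r, w a ≠ 0 →
      (F j *ᵥ w a = w a ∧ ∀ j', j' ≠ j → F j' *ᵥ w a = 0) := by
    intro a
    by_cases h : w a ≠ 0
    · rcases hKalt a with h' | ⟨_, μ, hμ⟩
      · exact absurd h' h
      · have hμ' : (∑ j, ρ j • F j) *ᵥ w a = μ • w a := by rw [← hHspec]; exact hμ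
        obtain ⟨j, h1, h2, _⟩ := Herm.classify hρ hFidem hForth hFsum h hμ'
        exact ⟨j, fun _ => ⟨h1, h2⟩⟩
    · exact ⟨Classical.arbitrary _, fun hc => absurd hc h⟩
  choose κ hκ using hHψ
  -- restriction as a linear map
  set Rm : (X → ℂ) →ₗ[ℂ] (K → ℂ) := LinearMap.funLeft ℂ ℂ (Subtype.val) with hRmdef
  have hRm : ∀ u, Rm u = restr K u := fun u => rfl
  -- hermInner with extension by zero
  have hsum_extz : ∀ u : K → ℂ, ∑ x, extz K u x = ∑ k : K, u k := by
    intro u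
    have h1 : ∑ x, extz K u x = ∑ x ∈ K.toFinset, extz K u x := by
      refine (Finset.sum_subset (Finset.subset_univ _) ?_).symm
      intro x _ hx
      rw [Set.mem_toFinset] at hx
      simp [extz, hx]
    rw [h1, Finset.sum_subtype K.toFinset (fun x => Set.mem_toFinset) (extz K u)]
    apply Finset.sum_congr rfl
    intro k _
    simp [extz, k.2]
  have hherm_extz : ∀ a (v : K → ℂ), hermInner (ψ a) (extz K v) = hermInner (w a) v := by
    intro a v
    unfold hermInner
    calc ∑ x, star (ψ a x) * extz K v x
        = ∑ x, extz K (fun k => star (ψ a k) * v k) x := by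
          apply Finset.sum_congr rfl
          intro x _
          by_cases h : x ∈ K
          · simp [extz, h]
          · simp [extz, h]
      _ = ∑ k : K, star (ψ a k) * v k := hsum_extz _
      _ = ∑ k : K, star (w a k) * v k := rfl
  -- adjoint moves for the F projections
  have hFmove : ∀ (j : Fin r) (u : K → ℂ) (x : K → ℂ),
      hermInner u (F j *ᵥ x) = hermInner (F j *ᵥ u) x := by
    intro j u x
    rw [Herm.hermInner_mulVec, hFherm]
  -- the key expansion identity
  set P : Fin d → Fin r → X → Prop := fun i j a => ι a = i ∧ w a ≠ 0 ∧ κ a = j with hPdef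
  have key : ∀ (i : Fin d) (j : Fin r), ∀ v ∈ (LinearMap.range (F j).mulVecLin : Set (K → ℂ)),
      (E i) *ᵥ extz K v = ∑ a : {x // P i j x}, hermInner (w a.1) v • ψ a.1 := by
    intro i j v hv
    obtain ⟨x0, rfl⟩ := hv
    set v := (F j).mulVecLin x0 with hvdef
    have hv' : v = F j *ᵥ x0 := rfl
    have hexp : extz K v = ∑ a, hermInner (ψ a) (extz K v) • ψ a :=
      (Herm.on_expand hON _).symm
    have hlin : E i *ᵥ extz K v = ∑ a, hermInner (w a) v • (E i *ᵥ ψ a) := by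
      conv_lhs => rw [hexp]
      rw [show (E i *ᵥ ∑ a, hermInner (ψ a) (extz K v) • ψ a)
          = (E i).mulVecLin (∑ a, hermInner (ψ a) (extz K v) • ψ a) from rfl, map_sum]
      apply Finset.sum_congr rfl
      intro a _
      rw [_root_.map_smul, hherm_extz a v, Matrix.mulVecLin_apply]
    rw [hlin]
    have hvanish : ∀ a ∈ Finset.univ, a ∉ Finset.univ.filter (P i j) →
        hermInner (w a) v • (E i *ᵥ ψ a) = 0 := by
      intro a _ ha
      rw [Finset.mem_filter] at ha
      push_neg at ha
      have ha' := ha (Finset.mem_univ a)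
      by_cases h1 : ι a = i
      · by_cases h2 : w a = 0
        · rw [h2]
          rw [show hermInner (0 : K → ℂ) v = 0 by simp [hermInner]]
          rw [zero_smul]
        · have h3 : κ a ≠ j := by
            intro hc
            exact ha' ⟨h1, h2, hc⟩
          have : hermInner (w a) v = 0 := by
            rw [hv', hFmove, (hκ a h2).2 j (Ne.symm h3),
              show hermInner (0 : K → ℂ) x0 = 0 by simp [hermInner]]
          rw [this, zero_smul]
      · rw [hι2 a i (Ne.symm h1), smul_zero]
    rw [← Finset.sum_subset (Finset.filter_subset (P i j) Finset.univ) hvanish]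
    rw [Finset.sum_subtype (p := P i j) (Finset.univ.filter (P i j))
      (fun a => by simp) (fun a => hermInner (w a) v • (E i *ᵥ ψ a))]
    apply Finset.sum_congr rfl
    rintro ⟨a, ha1, ha2, ha3⟩ _
    subst ha1
    rw [hι1 a]
  -- b i j computed
  have hbij : ∀ i j, b i j = Module.finrank ℂ
      ↥(Submodule.span ℂ (w '' {a | P i j a})) := by
    intro i j
    rw [hb i j]
    have himg : ((fun v : K → ℂ => (E i).mulVec (extz K v)) ''
          (LinearMap.range (F j).mulVecLin : Set (K → ℂ)))
        = ((fun v => ∑ a : {x // P i j x}, hermInner (w a.1) v • ψ a.1) ''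
          (LinearMap.range (F j).mulVecLin : Set (K → ℂ))) :=
      Set.image_congr (fun v hv => key i j v hv)
    rw [himg]
    have := Herm.gram_rank (fun a : {x // P i j x} => w a.1) (fun a => ψ a.1)
      (li.comp Subtype.val Subtype.val_injective)
      (LinearMap.range (F j).mulVecLin) ((F j).mulVecLin)
      (fun v => LinearMap.mem_range_self _ v)
      (fun a v => by
        show hermInner (w a.1) ((F j).mulVecLin v) = hermInner (w a.1) v
        obtain ⟨h1, h0, hj⟩ := a.2
        have h4 := (hκ a.1 h0).1
        rw [hj] at h4
        rw [Matrix.mulVecLin_apply, hFmove, h4])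
    have hrg : Set.range (fun a : {x // P i j x} => w a.1) = w '' {a | P i j a} := by
      rw [show (fun a : {x // P i j x} => w a.1) = w ∘ (Subtype.val) from rfl,
        Set.range_comp, Subtype.range_coe_subtype]
    rw [hrg] at this
    exact this
  -- now the counting for a fixed i
  have hcount : ∀ i, Fintype.card {a // ι a = i} = b0 i + ∑ j, b i j := by
    intro i
    set p : Submodule ℂ (X → ℂ) := LinearMap.range (E i).mulVecLin with hpdef
    have hp : p = Submodule.span ℂ (ψ '' {a | ι a = i}) := by
      apply le_antisymm
      · rintro u ⟨x, rfl⟩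
        rw [show (E i).mulVecLin x = (E i).mulVecLin (∑ a, hermInner (ψ a) x • ψ a) from
          by rw [Herm.on_expand hON x], map_sum]
        apply Submodule.sum_mem
        intro a _
        rw [_root_.map_smul, Matrix.mulVecLin_apply]
        by_cases h : ι a = i
        · have : E i *ᵥ ψ a = ψ a := by rw [← h]; exact hι1 a
          rw [this]
          exact Submodule.smul_mem _ _ (Submodule.subset_span ⟨a, h, rfl⟩)
        · rw [hι2 a i (Ne.symm h), smul_zero]
          exact Submodule.zero_mem _
      · rw [Submodule.span_le]
        rintro u ⟨a, ha, rfl⟩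
        refine ⟨ψ a, ?_⟩
        rw [Matrix.mulVecLin_apply, show (i : Fin d) = ι a from ha.symm]
        exact hι1 a
    have hfrp : Module.finrank ℂ ↥p = Fintype.card {a // ι a = i} := by
      rw [hp]
      have hrg : ψ '' {a | ι a = i} = Set.range (fun a : {x // ι x = i} => ψ a.1) := by
        rw [show (fun a : {x // ι x = i} => ψ a.1) = ψ ∘ (Subtype.val) from rfl,
          Set.range_comp, Subtype.range_coe_subtype]
      rw [hrg]
      exact finrank_span_eq_card (li.comp Subtype.val Subtype.val_injective)
    -- rank-nullity for the restriction map on p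
    set R' : ↥p →ₗ[ℂ] (K → ℂ) := Rm ∘ₗ p.subtype with hR'def
    have hrn : Module.finrank ℂ ↥(LinearMap.range R') + Module.finrank ℂ ↥(LinearMap.ker R')
        = Module.finrank ℂ ↥p := LinearMap.finrank_range_add_finrank_ker R'
    -- kernel has dimension b0 i
    have hker : Module.finrank ℂ ↥(LinearMap.ker R') = b0 i := by
      have h1 : LinearMap.ker R' = Submodule.comap p.subtype (p ⊓ LinearMap.ker Rm) := by
        rw [hR'def, LinearMap.ker_comp]
        ext x
        simp only [Submodule.mem_comap, Submodule.mem_inf, LinearMap.mem_ker,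
          Submodule.coe_subtype]
        exact ⟨fun h => ⟨x.2, h⟩, fun h => h.2⟩
      rw [h1, (Submodule.comapSubtypeEquivOfLe (inf_le_left :
        p ⊓ LinearMap.ker Rm ≤ p)).finrank_eq, hb0 i]
      have h2 : {u : X → ℂ | u ∈ LinearMap.range (E i).mulVecLin ∧ restr K u = 0}
          = ((p ⊓ LinearMap.ker Rm : Submodule ℂ (X → ℂ)) : Set (X → ℂ)) := by
        ext u
        simp only [Set.mem_setOf_eq, SetLike.mem_coe, Submodule.mem_inf, LinearMap.mem_ker]
        rw [hRm u, hpdef]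
      rw [h2, Submodule.span_eq]
    -- range has dimension ∑ j, b i j
    have hrange : Module.finrank ℂ ↥(LinearMap.range R') = ∑ j, b i j := by
      have h1 : LinearMap.range R' = Submodule.map Rm p := by
        rw [hR'def, LinearMap.range_comp, Submodule.range_subtype]
      have h2 : Submodule.map Rm p = Submodule.span ℂ (w '' {a | ι a = i}) := by
        rw [hp, Submodule.map_span, ← Set.image_comp]
        rfl
      have h3 : Submodule.span ℂ (w '' {a | ι a = i})
          = ⨆ j, Submodule.span ℂ (w '' {a | P i j a}) := by
        apply le_antisymm
        · rw [Submodule.span_le]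
          rintro u ⟨a, ha, rfl⟩
          by_cases h0 : w a = 0
          · rw [h0]
            exact Submodule.zero_mem _
          · have hmem : w a ∈ Submodule.span ℂ (w '' {x | P i (κ a) x}) :=
              Submodule.subset_span ⟨a, ⟨ha, h0, rfl⟩, rfl⟩
            exact (le_iSup (fun j => Submodule.span ℂ (w '' {x | P i j x})) (κ a)) hmem
        · apply iSup_le
          intro j
          apply Submodule.span_mono
          exact Set.image_mono (fun a ha => ha.1)
      have h4 : Module.finrank ℂ ↥(⨆ j, Submodule.span ℂ (w '' {a | P i j a}))
          = ∑ j, Module.finrank ℂ ↥(Submodule.span ℂ (w '' {a | P i j a})) := by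
        apply Herm.finrank_biSup_orth
        intro j j' hjj'
        apply Herm.span_orth
        rintro v ⟨a, ⟨ha1, ha0, haj⟩, rfl⟩ u ⟨a', ⟨ha1', ha0', haj'⟩, rfl⟩
        have hwa' : w a' = F j' *ᵥ w a' := by rw [← haj']; exact ((hκ a' ha0').1).symm
        rw [hwa', hFmove]
        have : F j' *ᵥ w a = 0 := by
          apply (hκ a ha0).2
          rw [haj]
          exact hjj'.symm
        rw [this]
        simp [hermInner]
      rw [h1, h2, h3, h4]
      apply Finset.sum_congr rfl
      intro j _
      rw [hbij i j]
    rw [← hfrp, ← hrn, hker, hrange, add_comm]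
  -- the characteristic polynomial via the eigenbasis
  have hbasis : ∀ a, M *ᵥ (Herm.onBasis hON) a = θ (ι a) • (Herm.onBasis hON) a := by
    intro a
    rw [show ((Herm.onBasis hON) a) = ψ a from congrFun (Herm.onBasis_eq hON) a]
    exact hι3 a
  have hchar : M.charpoly = ∏ a, (Polynomial.X - Polynomial.C (θ (ι a))) :=
    Herm.charpoly_of_basis M (Herm.onBasis hON) (fun a => θ (ι a)) hbasis
  have hgroup : ∏ a, (Polynomial.X - Polynomial.C (θ (ι a)))
      = ∏ i, (Polynomial.X - Polynomial.C (θ i)) ^ (Fintype.card {a // ι a = i}) := by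
    rw [← Finset.prod_fiberwise_of_maps_to (fun a _ => Finset.mem_univ (ι a))
      (fun a => Polynomial.X - Polynomial.C (θ (ι a)))]
    apply Finset.prod_congr rfl
    intro i _
    rw [Fintype.card_subtype]
    rw [← Finset.prod_const]
    apply Finset.prod_congr rfl
    intro a ha
    rw [Finset.mem_filter] at ha
    rw [ha.2]
  rw [hchar, hgroup]
  have : ∀ i : Fin d, (Polynomial.X - Polynomial.C (θ i)) ^ (Fintype.card {a // ι a = i})
      = (Polynomial.X - Polynomial.C (θ i)) ^ (b0 i) *
        ∏ j, (Polynomial.X - Polynomial.C (θ i)) ^ (b i j) := by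
    intro i
    rw [hcount i, pow_add, Finset.prod_pow_eq_pow_sum]
  rw [Finset.prod_congr rfl (fun i _ => this i), Finset.prod_mul_distrib]
  congr 1
  rw [Finset.prod_comm]
end
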